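/- arXiv:1010.4902 — 14 statements merged into one kernel-verified Lean document; each statement's English description precedes it below -/
import Mathlib

section
/- Let $-\infty\le a<b\le\infty$, let $q:(a,b)\to\mathbb{R}$, $\lambda\in\mathbb{R}$ and $z\in\mathbb{C}$. Suppose $\phi:(a,b)\to\mathbb{R}$ is twice differentiable with $\phi(x)>0$ and $-\phi''(x)+q(x)\phi(x)=\lambda\,\phi(x)$ for all $x\in(a,b)$, and $u:(a,b)\to\mathbb{C}$ is twice differentiable with $-u''(x)+q(x)u(x)=z\,u(x)$ for all $x\in(a,b)$. Then the function $\hat u(x) = -u'(x) + \tfrac{\phi'(x)}{\phi(x)}u(x) = -\tfrac{W_x(\phi,u)}{\phi(x)}$ is twice differentiable on $(a,b)$ and satisfies $-\hat u''(x) + \hat q(x)\hat u(x) = z\,\hat u(x)$ for all $x\in(a,b)$, where $\hat q(x) = q(x) - 2\,\tfrac{d}{dx}\tfrac{\phi'(x)}{\phi(x)}$. -/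
open Set MeasureTheory Filter

/-- The single commutation (Crum--Darboux) transform
`û = -u' + (φ'/φ)u = -W(φ,u)/φ` of a solution `u` of `-u'' + q u = z u`
by a positive solution `φ` of `-φ'' + q φ = λ φ` is a twice differentiable
solution of `-û'' + q̂ û = z û` with `q̂ = q - 2 (φ'/φ)'`. -/
theorem stmt_0 (a b : EReal) (hab : a < b)
    (q phi : ℝ → ℝ) (lam : ℝ) (z : ℂ) (u : ℝ → ℂ)
    (E : Set ℝ) (hE : E = {x : ℝ | a < (x : EReal) ∧ (x : EReal) < b})
    (hphi_d1 : ∀ x ∈ E, DifferentiableAt ℝ phi x)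
    (hphi_d2 : ∀ x ∈ E, DifferentiableAt ℝ (deriv phi) x)
    (hphi_pos : ∀ x ∈ E, 0 < phi x)
    (hphi_eq : ∀ x ∈ E, -deriv (deriv phi) x + q x * phi x = lam * phi x)
    (hu_d1 : ∀ x ∈ E, DifferentiableAt ℝ u x)
    (hu_d2 : ∀ x ∈ E, DifferentiableAt ℝ (deriv u) x)
    (hu_eq : ∀ x ∈ E, -deriv (deriv u) x + (q x : ℂ) * u x = z * u x)
    (uhat : ℝ → ℂ)
    (huhat : uhat = fun x => -deriv u x + ((deriv phi x / phi x : ℝ) : ℂ) * u x)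
    (qhat : ℝ → ℝ)
    (hqhat : qhat = fun x => q x - 2 * deriv (fun y => deriv phi y / phi y) x) :
    ∀ x ∈ E,
      uhat x = -(((Complex.ofReal (phi x)) * deriv u x - (Complex.ofReal (deriv phi x)) * u x) / (Complex.ofReal (phi x))) ∧
      DifferentiableAt ℝ uhat x ∧ DifferentiableAt ℝ (deriv uhat) x ∧
      -deriv (deriv uhat) x + (qhat x : ℂ) * uhat x = z * uhat x := by
  have hopen : IsOpen E := by
    rw [hE]
    have : {x : ℝ | a < (x : EReal) ∧ (x : EReal) < b}
        = (fun x : ℝ => (x : EReal)) ⁻¹' (Set.Ioo a b) := rfl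
    rw [this]
    exact isOpen_Ioo.preimage continuous_coe_real_ereal
  set g : ℝ → ℝ := fun y => deriv phi y / phi y with hg
  have hphine : ∀ x ∈ E, phi x ≠ 0 := fun x hx => (hphi_pos x hx).ne'
  have hg' : ∀ x ∈ E, HasDerivAt g ((q x - lam) - g x ^ 2) x := by
    intro x hx
    have h := ((hphi_d2 x hx).hasDerivAt).div ((hphi_d1 x hx).hasDerivAt) (hphine x hx)
    refine h.congr_deriv ?_
    have hpp : deriv (deriv phi) x = q x * phi x - lam * phi x := by
      linarith [hphi_eq x hx]
    rw [hpp]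
    simp only [hg]
    field_simp [hphine x hx]
  have huu : ∀ x ∈ E, deriv (deriv u) x = (q x : ℂ) * u x - z * u x := by
    intro x hx
    linear_combination - hu_eq x hx
  have hU' : ∀ x ∈ E, HasDerivAt (fun y => -deriv u y + ((g y : ℝ) : ℂ) * u y)
      ((z - (lam : ℂ)) * u x - ((g x : ℝ) : ℂ) * (-deriv u x + ((g x : ℝ) : ℂ) * u x)) x := by
    intro x hx
    have hG : HasDerivAt (fun y => ((g y : ℝ) : ℂ)) (((q x - lam) - g x ^ 2 : ℝ) : ℂ) x :=
      (hg' x hx).ofReal_comp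
    have h := ((hu_d2 x hx).hasDerivAt.neg).add (hG.mul ((hu_d1 x hx).hasDerivAt))
    refine h.congr_deriv ?_
    rw [huu x hx]
    push_cast
    ring
  intro x hx
  have hmem : E ∈ nhds x := hopen.mem_nhds hx
  have hGx : HasDerivAt (fun y => ((g y : ℝ) : ℂ)) (((q x - lam) - g x ^ 2 : ℝ) : ℂ) x :=
    (hg' x hx).ofReal_comp
  subst huhat
  have hphineC : (phi x : ℂ) ≠ 0 := by
    exact_mod_cast hphine x hx
  refine ⟨?_, (hU' x hx).differentiableAt, ?_, ?_⟩
  · show -deriv u x + ((g x : ℝ) : ℂ) * u x = _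
    simp only [hg]
    push_cast
    field_simp
    ring
  all_goals {
    have hev : (deriv fun y => -deriv u y + ((g y : ℝ) : ℂ) * u y) =ᶠ[nhds x]
        fun y => (z - (lam : ℂ)) * u y - ((g y : ℝ) : ℂ) * (-deriv u y + ((g y : ℝ) : ℂ) * u y) :=
      eventually_of_mem hmem (fun y hy => (hU' y hy).deriv)
    have hF : HasDerivAt (fun y => (z - (lam : ℂ)) * u y
          - ((g y : ℝ) : ℂ) * (-deriv u y + ((g y : ℝ) : ℂ) * u y))
        ((z - (lam : ℂ)) * deriv u x
          - ((((q x - lam) - g x ^ 2 : ℝ) : ℂ) * (-deriv u x + ((g x : ℝ) : ℂ) * u x)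
            + ((g x : ℝ) : ℂ) * ((z - (lam : ℂ)) * u x
              - ((g x : ℝ) : ℂ) * (-deriv u x + ((g x : ℝ) : ℂ) * u x)))) x :=
      (((hu_d1 x hx).hasDerivAt).const_mul (z - (lam : ℂ))).sub (hGx.mul (hU' x hx))
    first
    | exact (hev.differentiableAt_iff.mpr hF.differentiableAt)
    | ( rw [hqhat, hev.deriv_eq, hF.deriv]
        have hdg : deriv g x = (q x - lam) - g x ^ 2 := (hg' x hx).deriv
        simp only [hg] at hdg ⊢
        rw [hdg]
        push_cast
        ring )
  }
end

section
/- Let $-\infty\le a<b\le\infty$, $q:(a,b)\to\mathbb{R}$, $\lambda\in\mathbb{R}$, $z\in\mathbb{C}$, and let $\phi:(a,b)\to\mathbb{R}$ be twice differentiable with $\phi>0$ and $-\phi''+q\phi=\lambda\phi$ on $(a,b)$. If $u,v:(a,b)\to\mathbb{C}$ are twice differentiable with $-u''+qu=zu$ and $-v''+qv=zv$ on $(a,b)$, and $\hat u = -u'+\tfrac{\phi'}{\phi}u$, $\hat v = -v'+\tfrac{\phi'}{\phi}v$, then for every $x\in(a,b)$ one has $W_x(\hat u,\hat v) = (z-\lambda)\,W_x(u,v)$.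 -/
open Set MeasureTheory Filter

lemma hat_deriv (phi : ℝ → ℝ) (u : ℝ → ℂ) (x : ℝ)
    (hφ1 : DifferentiableAt ℝ phi x) (hφ2 : DifferentiableAt ℝ (deriv phi) x)
    (hφ0 : phi x ≠ 0) (hu1 : DifferentiableAt ℝ u x) (hu2 : DifferentiableAt ℝ (deriv u) x) :
    deriv (fun y => -deriv u y + ((deriv phi y / phi y : ℝ) : ℂ) * u y) x
      = -deriv (deriv u) x
        + (((deriv (deriv phi) x * phi x - deriv phi x * deriv phi x) / (phi x)^2 : ℝ) : ℂ) * u x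
        + ((deriv phi x / phi x : ℝ) : ℂ) * deriv u x := by
  have h2 : HasDerivAt (fun y => deriv phi y / phi y)
      ((deriv (deriv phi) x * phi x - deriv phi x * deriv phi x) / (phi x)^2) x :=
    hφ2.hasDerivAt.div hφ1.hasDerivAt hφ0
  have h3 := (h2.ofReal_comp).mul hu1.hasDerivAt
  have h4 := (hu2.hasDerivAt.neg).add h3
  rw [(show HasDerivAt (fun y => -deriv u y + ((deriv phi y / phi y : ℝ) : ℂ) * u y) _ x from h4).deriv]; ring

/-- If `û, v̂` are the single commutation transforms
`-u' + (φ'/φ)u`, `-v' + (φ'/φ)v` of two solutions `u, v` of `-w'' + q w = z w`,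
where `φ > 0` solves `-φ'' + q φ = λ φ`, then
`W_x(û, v̂) = (z - λ) W_x(u, v)` on `(a,b)`. -/
theorem stmt_1 (a b : EReal) (hab : a < b)
    (q phi : ℝ → ℝ) (lam : ℝ) (z : ℂ) (u v : ℝ → ℂ)
    (E : Set ℝ) (hE : E = {x : ℝ | a < (x : EReal) ∧ (x : EReal) < b})
    (hphi_d1 : ∀ x ∈ E, DifferentiableAt ℝ phi x)
    (hphi_d2 : ∀ x ∈ E, DifferentiableAt ℝ (deriv phi) x)
    (hphi_pos : ∀ x ∈ E, 0 < phi x)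
    (hphi_eq : ∀ x ∈ E, -deriv (deriv phi) x + q x * phi x = lam * phi x)
    (hu_d1 : ∀ x ∈ E, DifferentiableAt ℝ u x)
    (hu_d2 : ∀ x ∈ E, DifferentiableAt ℝ (deriv u) x)
    (hu_eq : ∀ x ∈ E, -deriv (deriv u) x + (q x : ℂ) * u x = z * u x)
    (hv_d1 : ∀ x ∈ E, DifferentiableAt ℝ v x)
    (hv_d2 : ∀ x ∈ E, DifferentiableAt ℝ (deriv v) x)
    (hv_eq : ∀ x ∈ E, -deriv (deriv v) x + (q x : ℂ) * v x = z * v x)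
    (uhat vhat : ℝ → ℂ)
    (huhat : uhat = fun x => -deriv u x + ((deriv phi x / phi x : ℝ) : ℂ) * u x)
    (hvhat : vhat = fun x => -deriv v x + ((deriv phi x / phi x : ℝ) : ℂ) * v x) :
    ∀ x ∈ E,
      uhat x * deriv vhat x - deriv uhat x * vhat x
        = (z - lam) * (u x * deriv v x - deriv u x * v x) := by
  intro x hx
  have hφ0 : phi x ≠ 0 := (hphi_pos x hx).ne'
  have hdu := hat_deriv phi u x (hphi_d1 x hx) (hphi_d2 x hx) hφ0 (hu_d1 x hx) (hu_d2 x hx)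
  have hdv := hat_deriv phi v x (hphi_d1 x hx) (hphi_d2 x hx) hφ0 (hv_d1 x hx) (hv_d2 x hx)
  subst huhat; subst hvhat
  simp only []
  rw [hdu, hdv]
  have hφ : ((deriv (deriv phi) x : ℝ) : ℂ) = (q x : ℂ) * phi x - (lam : ℂ) * phi x := by
    have := hphi_eq x hx
    push_cast
    exact_mod_cast by linarith
  have hu : deriv (deriv u) x = (q x : ℂ) * u x - z * u x := by
    have := hu_eq x hx; linear_combination -this
  have hv : deriv (deriv v) x = (q x : ℂ) * v x - z * v x := by
    have := hv_eq x hx; linear_combination -this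
  push_cast
  rw [hu, hv, hφ]
  have hφc : (phi x : ℂ) ≠ 0 := by exact_mod_cast hφ0
  field_simp
  have hP : ((phi x : ℂ)) ^ 8 * ((phi x : ℂ))⁻¹ ^ 8 = 1 := by
    rw [← mul_pow, mul_inv_cancel₀ hφc, one_pow]
  ring
end

section
/- Let $-\infty\le a<b\le\infty$, $q:(a,b)\to\mathbb{R}$, $\lambda\in\mathbb{R}$, $z\in\mathbb{C}$ with $z\ne\lambda$, and let $\phi_\lambda:(a,b)\to\mathbb{R}$ be twice differentiable with $\phi_\lambda>0$ and $-\phi_\lambda''+q\phi_\lambda=\lambda\phi_\lambda$ on $(a,b)$. Let $\theta,\phi:(a,b)\to\mathbb{C}$ be twice differentiable with $-\theta''+q\theta=z\theta$, $-\phi''+q\phi=z\phi$, and $W_x(\theta,\phi)=1$ for all $x\in(a,b)$. Define $\hat\theta(x) = -\tfrac{W_x(\phi_\lambda,\theta)}{\phi_\lambda(x)}$ and $\hat\phi(x) = -\tfrac{W_x(\phi_\lambda,\phi)}{(z-\lambda)\,\phi_\lambda(x)}$. Then $W_x(\hat\theta,\hat\phi)=1$ for all $x\in(a,b)$. -/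
open Set MeasureTheory Filter

/-- If `θ, φ` is a fundamental system (`W(θ,φ) ≡ 1`) of
`-u'' + q u = z u` and `φ_λ > 0` solves `-φ'' + q φ = λ φ` with `z ≠ λ`, then
the normalized single commutation transforms
`θ̂ = -W(φ_λ,θ)/φ_λ` and `φ̂ = -W(φ_λ,φ)/((z-λ)φ_λ)` satisfy `W(θ̂,φ̂) ≡ 1`. -/
theorem stmt_3 (a b : EReal) (hab : a < b)
    (q : ℝ → ℝ) (lam : ℝ) (z : ℂ) (hzlam : z ≠ (lam : ℂ))
    (phil : ℝ → ℝ) (theta phi : ℝ → ℂ)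
    (E : Set ℝ) (hE : E = {x : ℝ | a < (x : EReal) ∧ (x : EReal) < b})
    (hl_d1 : ∀ x ∈ E, DifferentiableAt ℝ phil x)
    (hl_d2 : ∀ x ∈ E, DifferentiableAt ℝ (deriv phil) x)
    (hl_pos : ∀ x ∈ E, 0 < phil x)
    (hl_eq : ∀ x ∈ E, -deriv (deriv phil) x + q x * phil x = lam * phil x)
    (hth_d1 : ∀ x ∈ E, DifferentiableAt ℝ theta x)
    (hth_d2 : ∀ x ∈ E, DifferentiableAt ℝ (deriv theta) x)
    (hth_eq : ∀ x ∈ E, -deriv (deriv theta) x + (q x : ℂ) * theta x = z * theta x)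
    (hph_d1 : ∀ x ∈ E, DifferentiableAt ℝ phi x)
    (hph_d2 : ∀ x ∈ E, DifferentiableAt ℝ (deriv phi) x)
    (hph_eq : ∀ x ∈ E, -deriv (deriv phi) x + (q x : ℂ) * phi x = z * phi x)
    (hW : ∀ x ∈ E, theta x * deriv phi x - deriv theta x * phi x = 1)
    (thetahat phihat : ℝ → ℂ)
    (hthetahat : thetahat = fun x =>
      -((Complex.ofReal (phil x) * deriv theta x
          - Complex.ofReal (deriv phil x) * theta x) / Complex.ofReal (phil x)))
    (hphihat : phihat = fun x =>
      -((Complex.ofReal (phil x) * deriv phi x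
          - Complex.ofReal (deriv phil x) * phi x)
        / ((z - lam) * Complex.ofReal (phil x)))) :
    ∀ x ∈ E, thetahat x * deriv phihat x - deriv thetahat x * phihat x = 1 := by
  subst hthetahat hphihat
  intro x hx
  have hPpos := hl_pos x hx
  have hPx : (phil x : ℂ) ≠ 0 := by exact_mod_cast hPpos.ne'
  have hzl : z - (lam : ℂ) ≠ 0 := sub_ne_zero.mpr hzlam
  have hP : HasDerivAt (fun y => (phil y : ℂ)) (((deriv phil x : ℝ) : ℂ)) x :=
    ((hl_d1 x hx).hasDerivAt).ofReal_comp
  have hP' : HasDerivAt (fun y => ((deriv phil y : ℝ) : ℂ)) (((deriv (deriv phil) x : ℝ) : ℂ)) x :=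
    ((hl_d2 x hx).hasDerivAt).ofReal_comp
  have hT : HasDerivAt theta (deriv theta x) x := (hth_d1 x hx).hasDerivAt
  have hT' : HasDerivAt (deriv theta) (deriv (deriv theta) x) x := (hth_d2 x hx).hasDerivAt
  have hF : HasDerivAt phi (deriv phi x) x := (hph_d1 x hx).hasDerivAt
  have hF' : HasDerivAt (deriv phi) (deriv (deriv phi) x) x := (hph_d2 x hx).hasDerivAt
  have hnumT : HasDerivAt (fun y => (phil y : ℂ) * deriv theta y - ((deriv phil y : ℝ) : ℂ) * theta y)
      (((deriv phil x : ℝ) : ℂ) * deriv theta x + ((phil x : ℝ) : ℂ) * deriv (deriv theta) x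
        - (((deriv (deriv phil) x : ℝ) : ℂ) * theta x + ((deriv phil x : ℝ) : ℂ) * deriv theta x)) x :=
    (hP.mul hT').sub (hP'.mul hT)
  have hTH : HasDerivAt (fun y => -((((phil y : ℝ) : ℂ) * deriv theta y - ((deriv phil y : ℝ) : ℂ) * theta y) / ((phil y : ℝ) : ℂ)))
      (-(((((deriv phil x : ℝ) : ℂ) * deriv theta x + ((phil x : ℝ) : ℂ) * deriv (deriv theta) x
        - (((deriv (deriv phil) x : ℝ) : ℂ) * theta x + ((deriv phil x : ℝ) : ℂ) * deriv theta x)) * (phil x : ℂ)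
        - ((phil x : ℂ) * deriv theta x - ((deriv phil x : ℝ) : ℂ) * theta x) * ((deriv phil x : ℝ) : ℂ)) / ((phil x : ℂ)) ^ 2)) x :=
    ((hnumT.div hP hPx)).neg
  have hnumF : HasDerivAt (fun y => (phil y : ℂ) * deriv phi y - ((deriv phil y : ℝ) : ℂ) * phi y)
      (((deriv phil x : ℝ) : ℂ) * deriv phi x + ((phil x : ℝ) : ℂ) * deriv (deriv phi) x
        - (((deriv (deriv phil) x : ℝ) : ℂ) * phi x + ((deriv phil x : ℝ) : ℂ) * deriv phi x)) x :=
    (hP.mul hF').sub (hP'.mul hF)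
  have hden : HasDerivAt (fun y => (z - (lam : ℂ)) * ((phil y : ℝ) : ℂ)) ((z - (lam : ℂ)) * ((deriv phil x : ℝ) : ℂ)) x :=
    hP.const_mul _
  have hdenx : (z - (lam : ℂ)) * (phil x : ℂ) ≠ 0 := mul_ne_zero hzl hPx
  have hPH : HasDerivAt (fun y => -((((phil y : ℝ) : ℂ) * deriv phi y - ((deriv phil y : ℝ) : ℂ) * phi y) / ((z - (lam : ℂ)) * ((phil y : ℝ) : ℂ))))
      (-(((((deriv phil x : ℝ) : ℂ) * deriv phi x + ((phil x : ℝ) : ℂ) * deriv (deriv phi) x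
        - (((deriv (deriv phil) x : ℝ) : ℂ) * phi x + ((deriv phil x : ℝ) : ℂ) * deriv phi x)) * ((z - (lam : ℂ)) * (phil x : ℂ))
        - ((phil x : ℂ) * deriv phi x - ((deriv phil x : ℝ) : ℂ) * phi x) * ((z - (lam : ℂ)) * ((deriv phil x : ℝ) : ℂ))) / ((z - (lam : ℂ)) * (phil x : ℂ)) ^ 2)) x :=
    ((hnumF.div hden hdenx)).neg
  rw [hTH.deriv, hPH.deriv]
  have eT : deriv (deriv theta) x = (q x : ℂ) * theta x - z * theta x := by
    have h := hth_eq x hx; linear_combination -h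
  have eF : deriv (deriv phi) x = (q x : ℂ) * phi x - z * phi x := by
    have h := hph_eq x hx; linear_combination -h
  have eP : ((deriv (deriv phil) x : ℝ) : ℂ) = ((q x : ℝ) : ℂ) * ((phil x : ℝ) : ℂ) - ((lam : ℝ) : ℂ) * ((phil x : ℝ) : ℂ) := by
    have h := hl_eq x hx
    exact_mod_cast congrArg (Complex.ofReal) (by linarith : deriv (deriv phil) x = q x * phil x - lam * phil x)
  have hWx := hW x hx
  rw [eT, eF, eP]
  field_simp
  ring_nf
  linear_combination ((phil x : ℂ)) ^ 3 * (z - (lam : ℂ)) * hWx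
end

section
/- Let $-\infty\le a<b\le\infty$, $q:(a,b)\to\mathbb{R}$, $\lambda\in\mathbb{R}$, and let $\phi_\lambda:(a,b)\to\mathbb{R}$ be twice differentiable with $-\phi_\lambda''+q\phi_\lambda = \lambda\phi_\lambda$ on $(a,b)$. Let $S:(a,b)\to\mathbb{R}$ be differentiable with $S'(x)=\phi_\lambda(x)^2$ and $S(x)>0$ for all $x\in(a,b)$, and set $\tilde\phi = \phi_\lambda/S$ and $q_S(x) = q(x) - 2\tfrac{d}{dx}\big(\tfrac{\phi_\lambda(x)^2}{S(x)}\big)$. Then for every $z\in\mathbb{C}$ with $z\ne\lambda$ and every twice differentiable $u:(a,b)\to\mathbb{C}$ with $-u''+qu=zu$ on $(a,b)$, the function $u_S(x) = u(x) + \tfrac{1}{z-\lambda}\,\tilde\phi(x)\,W_x(\phi_\lambda,u)$ is twice differentiable and satisfies $-u_S''(x) + q_S(x)u_S(x) = z\,u_S(x)$ for all $x\in(a,b)$. -/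
set_option maxHeartbeats 2000000


open Set MeasureTheory Filter

/-- the double commutation transform with weight `S`
(`S' = φ_λ²`, `S > 0`): if `u` solves `-u'' + q u = z u` with `z ≠ λ`, then
`u_S = u + (z-λ)⁻¹ (φ_λ/S) W(φ_λ,u)` is twice differentiable and solves
`-u_S'' + q_S u_S = z u_S`, where `q_S = q - 2 (φ_λ²/S)'`. -/
theorem stmt_5 (a b : EReal) (hab : a < b)
    (q phil Sw : ℝ → ℝ) (lam : ℝ)
    (E : Set ℝ) (hE : E = {x : ℝ | a < (x : EReal) ∧ (x : EReal) < b})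
    (hl_d1 : ∀ x ∈ E, DifferentiableAt ℝ phil x)
    (hl_d2 : ∀ x ∈ E, DifferentiableAt ℝ (deriv phil) x)
    (hl_eq : ∀ x ∈ E, -deriv (deriv phil) x + q x * phil x = lam * phil x)
    (hS_d : ∀ x ∈ E, HasDerivAt Sw (phil x ^ 2) x)
    (hS_pos : ∀ x ∈ E, 0 < Sw x)
    (qS : ℝ → ℝ)
    (hqS : qS = fun x => q x - 2 * deriv (fun y => phil y ^ 2 / Sw y) x) :
    ∀ z : ℂ, z ≠ (lam : ℂ) → ∀ u : ℝ → ℂ,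
      (∀ x ∈ E, DifferentiableAt ℝ u x) →
      (∀ x ∈ E, DifferentiableAt ℝ (deriv u) x) →
      (∀ x ∈ E, -deriv (deriv u) x + (q x : ℂ) * u x = z * u x) →
      ∀ uS : ℝ → ℂ,
        uS = (fun x => u x + (z - lam)⁻¹ * ((phil x / Sw x : ℝ) : ℂ) *
          (Complex.ofReal (phil x) * deriv u x
            - Complex.ofReal (deriv phil x) * u x)) →
        ∀ x ∈ E,
          DifferentiableAt ℝ uS x ∧ DifferentiableAt ℝ (deriv uS) x ∧
          -deriv (deriv uS) x + (qS x : ℂ) * uS x = z * uS x := by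
  intro z hz u hu1 hu2 hueq uS huS x hx
  subst hqS huS
  have hzl : z - (lam : ℂ) ≠ 0 := sub_ne_zero.mpr hz
  have hEopen : IsOpen E := by
    rw [hE]
    exact (isOpen_Ioo (a := a) (b := b)).preimage continuous_coe_real_ereal
  have hS0 : ∀ y ∈ E, Sw y ≠ 0 := fun y hy => (hS_pos y hy).ne'
  -- second derivative identities
  have hpp : ∀ y ∈ E, HasDerivAt (deriv phil) (q y * phil y - lam * phil y) y := by
    intro y hy
    have h := (hl_d2 y hy).hasDerivAt
    have he : deriv (deriv phil) y = q y * phil y - lam * phil y := by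
      have := hl_eq y hy; linarith
    rwa [he] at h
  have huu : ∀ y ∈ E, HasDerivAt (deriv u) (((q y : ℂ) - z) * u y) y := by
    intro y hy
    have h := (hu2 y hy).hasDerivAt
    have he : deriv (deriv u) y = ((q y : ℂ) - z) * u y := by
      linear_combination -(hueq y hy)
    rwa [he] at h
  -- Wronskian
  set W : ℝ → ℂ := fun y => Complex.ofReal (phil y) * deriv u y
      - Complex.ofReal (deriv phil y) * u y with hWdef
  have hW : ∀ y ∈ E, HasDerivAt W
      (((lam : ℂ) - z) * (Complex.ofReal (phil y) * u y)) y := by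
    intro y hy
    have h := (((hl_d1 y hy).hasDerivAt.ofReal_comp).mul (huu y hy)).sub
      (((hpp y hy).ofReal_comp).mul ((hu1 y hy).hasDerivAt))
    refine h.congr_deriv ?_
    push_cast
    ring
  -- first derivative of uS
  set v : ℝ → ℂ := fun y => deriv u y
      + ((z - (lam : ℂ))⁻¹
          * Complex.ofReal ((deriv phil y * Sw y - phil y * phil y ^ 2) / Sw y ^ 2) * W y
        + (z - (lam : ℂ))⁻¹ * Complex.ofReal (phil y / Sw y)
          * (((lam : ℂ) - z) * (Complex.ofReal (phil y) * u y))) with hvdef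
  have hpsi : ∀ y ∈ E, HasDerivAt (fun t => phil t / Sw t)
      ((deriv phil y * Sw y - phil y * phil y ^ 2) / Sw y ^ 2) y := by
    intro y hy
    exact (hl_d1 y hy).hasDerivAt.div (hS_d y hy) (hS0 y hy)
  have huSd : ∀ y ∈ E, HasDerivAt
      (fun t => u t + (z - (lam : ℂ))⁻¹ * ((phil t / Sw t : ℝ) : ℂ) * W t) (v y) y := by
    intro y hy
    exact ((hu1 y hy).hasDerivAt).add
      ((((hpsi y hy).ofReal_comp).const_mul ((z - (lam : ℂ))⁻¹)).mul (hW y hy))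
  have hd1 : DifferentiableAt ℝ
      (fun t => u t + (z - (lam : ℂ))⁻¹ * ((phil t / Sw t : ℝ) : ℂ) * W t) x :=
    (huSd x hx).differentiableAt
  have hEnhds : E ∈ nhds x := hEopen.mem_nhds hx
  have hveq : deriv (fun t => u t + (z - (lam : ℂ))⁻¹ * ((phil t / Sw t : ℝ) : ℂ) * W t)
      =ᶠ[nhds x] v := by
    filter_upwards [hEnhds] with y hy using (huSd y hy).deriv
  -- second derivative: differentiate v at x
  have hrr : HasDerivAt (fun t => (deriv phil t * Sw t - phil t * phil t ^ 2) / Sw t ^ 2)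
      ((((q x * phil x - lam * phil x) * Sw x + deriv phil x * phil x ^ 2
          - (deriv phil x * (phil x ^ 2) + phil x * (2 * phil x ^ 1 * deriv phil x)))
          * Sw x ^ 2
        - (deriv phil x * Sw x - phil x * phil x ^ 2) * (2 * Sw x ^ 1 * phil x ^ 2))
        / (Sw x ^ 2) ^ 2) x := by
    exact (((hpp x hx).mul (hS_d x hx)).sub
        ((hl_d1 x hx).hasDerivAt.mul ((hl_d1 x hx).hasDerivAt.pow 2))).div
      ((hS_d x hx).pow 2) (pow_ne_zero 2 (hS0 x hx))
  have hg : HasDerivAt (fun t => ((lam : ℂ) - z) * (Complex.ofReal (phil t) * u t))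
      (((lam : ℂ) - z) * (Complex.ofReal (deriv phil x) * u x
          + Complex.ofReal (phil x) * deriv u x)) x :=
    (((hl_d1 x hx).hasDerivAt.ofReal_comp).mul ((hu1 x hx).hasDerivAt)).const_mul
      ((lam : ℂ) - z)
  have hv2 := (huu x hx).add
      (((hrr.ofReal_comp.const_mul ((z - (lam : ℂ))⁻¹)).mul (hW x hx)).add
        ((((hpsi x hx).ofReal_comp.const_mul ((z - (lam : ℂ))⁻¹)).mul hg)))
  have hvd : deriv v x = _ := hv2.deriv
  have hd2 : DifferentiableAt ℝ
      (deriv (fun t => u t + (z - (lam : ℂ))⁻¹ * ((phil t / Sw t : ℝ) : ℂ) * W t)) x :=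
    (hveq.differentiableAt_iff).mpr hv2.differentiableAt
  have hdd : deriv (deriv (fun t => u t + (z - (lam : ℂ))⁻¹ * ((phil t / Sw t : ℝ) : ℂ) * W t)) x
      = _ := hveq.deriv_eq.trans hvd
  have hqd : deriv (fun y => phil y ^ 2 / Sw y) x
      = (2 * phil x * deriv phil x * Sw x - phil x ^ 2 * phil x ^ 2) / Sw x ^ 2 := by
    have h : HasDerivAt (fun y => phil y ^ 2 / Sw y)
        ((2 * phil x * deriv phil x * Sw x - phil x ^ 2 * phil x ^ 2) / Sw x ^ 2) x := by
      have h2 := ((hl_d1 x hx).hasDerivAt.pow 2).div (hS_d x hx) (hS0 x hx)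
      refine h2.congr_deriv ?_
      norm_num
    exact h.deriv
  refine ⟨hd1, hd2, ?_⟩
  beta_reduce
  rw [hdd, hqd]
  try simp only [hWdef]
  have hSne : (Sw x : ℂ) ≠ 0 := Complex.ofReal_ne_zero.mpr (hS0 x hx)
  have hc : ∀ X Y : ℂ, (z - (lam : ℂ))⁻¹ * X * (((lam : ℂ) - z) * Y) = -(X * Y) := by
    intro X Y
    field_simp
    ring
  simp only [hc]
  push_cast
  obtain ⟨w, hw, rfl⟩ : ∃ w : ℂ, w ≠ 0 ∧ z = w + (lam : ℂ) :=
    ⟨z - (lam : ℂ), hzl, by ring⟩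
  simp only [add_sub_cancel_right]
  field_simp [hw, hSne]
  ring
end

section
/- Let $-\infty\le a<b\le\infty$, $q:(a,b)\to\mathbb{R}$, $\lambda\in\mathbb{R}$, and let $\phi_\lambda:(a,b)\to\mathbb{R}$ be twice differentiable with $-\phi_\lambda''+q\phi_\lambda=\lambda\phi_\lambda$ on $(a,b)$. Let $S:(a,b)\to\mathbb{R}$ be differentiable with $S'=\phi_\lambda^2$ and $S>0$ on $(a,b)$, and set $\tilde\phi=\phi_\lambda/S$. Then for every $z\in\mathbb{C}$ with $z\ne\lambda$ and every twice differentiable $u:(a,b)\to\mathbb{C}$ solving $-u''+qu=zu$ on $(a,b)$, the double commutation transform $u_S(x)=u(x)+\tfrac{1}{z-\lambda}\tilde\phi(x)W_x(\phi_\lambda,u)$ satisfies, for every $x\in(a,b)$, the identity $|u_S(x)|^2 = |u(x)|^2 - \tfrac{1}{|z-\lambda|^2}\,\tfrac{d}{dx}\Big(\tfrac{|W_x(\phi_\lambda,u)|^2}{S(x)}\Big)$. -/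
open Set MeasureTheory Filter

set_option maxHeartbeats 1000000 in
private lemma stmt6_aux (z w : ℂ) (hzw : z ≠ w) (p s : ℝ) (hs : s ≠ 0) (U W : ℂ) :
    Complex.normSq (U + (z - w)⁻¹ * Complex.ofReal (p / s) * W)
      = Complex.normSq U - (Complex.normSq (z - w))⁻¹ *
          ((((w - z) * Complex.ofReal p * U) * star W
              + W * star ((w - z) * Complex.ofReal p * U)).re * s
            - Complex.normSq W * p ^ 2) / s ^ 2 := by
  have hc : z - w ≠ 0 := sub_ne_zero.mpr hzw
  have hd : (z.re - w.re) * (z.re - w.re) + (z.im - w.im) * (z.im - w.im) ≠ 0 := by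
    have := (Complex.normSq_pos.mpr hc).ne'
    simpa [Complex.normSq_apply] using this
  rw [Complex.inv_def]
  simp only [Complex.normSq_apply, Complex.add_re, Complex.add_im, Complex.mul_re,
    Complex.mul_im, Complex.sub_re, Complex.sub_im, Complex.ofReal_re, Complex.ofReal_im,
    RCLike.star_def, Complex.conj_re, Complex.conj_im]
  have hd' : (z.re - w.re) ^ 2 + (z.im - w.im) ^ 2 ≠ 0 := by rw [sq, sq]; exact hd
  field_simp
  ring


set_option maxHeartbeats 1000000 in
/-- for the double commutation transform
`u_S = u + (z-λ)⁻¹ (φ_λ/S) W(φ_λ,u)` (with `S' = φ_λ²`, `S > 0`) one has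
`|u_S(x)|² = |u(x)|² - |z-λ|⁻² d/dx ( |W_x(φ_λ,u)|² / S(x) )`. -/
theorem stmt_6 (a b : EReal) (hab : a < b)
    (q phil Sw : ℝ → ℝ) (lam : ℝ)
    (E : Set ℝ) (hE : E = {x : ℝ | a < (x : EReal) ∧ (x : EReal) < b})
    (hl_d1 : ∀ x ∈ E, DifferentiableAt ℝ phil x)
    (hl_d2 : ∀ x ∈ E, DifferentiableAt ℝ (deriv phil) x)
    (hl_eq : ∀ x ∈ E, -deriv (deriv phil) x + q x * phil x = lam * phil x)
    (hS_d : ∀ x ∈ E, HasDerivAt Sw (phil x ^ 2) x)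
    (hS_pos : ∀ x ∈ E, 0 < Sw x) :
    ∀ z : ℂ, z ≠ (lam : ℂ) → ∀ u : ℝ → ℂ,
      (∀ x ∈ E, DifferentiableAt ℝ u x) →
      (∀ x ∈ E, DifferentiableAt ℝ (deriv u) x) →
      (∀ x ∈ E, -deriv (deriv u) x + (q x : ℂ) * u x = z * u x) →
      ∀ uS : ℝ → ℂ,
        uS = (fun x => u x + (z - lam)⁻¹ * ((phil x / Sw x : ℝ) : ℂ) *
          (Complex.ofReal (phil x) * deriv u x
            - Complex.ofReal (deriv phil x) * u x)) →
        ∀ x ∈ E,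
          ‖uS x‖ ^ 2
            = ‖u x‖ ^ 2
              - (‖z - lam‖ ^ 2)⁻¹ *
                deriv (fun y =>
                  ‖Complex.ofReal (phil y) * deriv u y
                    - Complex.ofReal (deriv phil y) * u y‖ ^ 2 / Sw y) x := by
  intro z hz u hu1 hu2 hueq uS huS x hx
  have hS0 : Sw x ≠ 0 := (hS_pos x hx).ne'
  have hc : z - (lam : ℂ) ≠ 0 := sub_ne_zero.mpr hz
  have hphi2 : deriv (deriv phil) x = (q x - lam) * phil x := by
    have := hl_eq x hx; linarith [mul_comm (q x) (phil x)]
  have hu2eq : deriv (deriv u) x = ((q x : ℂ) - z) * u x := by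
    have := hueq x hx; linear_combination -this
  -- derivative of the Wronskian
  have hW : HasDerivAt
      (fun y => Complex.ofReal (phil y) * deriv u y - Complex.ofReal (deriv phil y) * u y)
      ((lam - z) * (phil x) * u x) x := by
    have h1 := ((hl_d1 x hx).hasDerivAt).ofReal_comp
    have h2 := ((hl_d2 x hx).hasDerivAt).ofReal_comp
    have h3 := (hu1 x hx).hasDerivAt
    have h4 := (hu2 x hx).hasDerivAt
    have h := (h1.mul h4).sub (h2.mul h3)
    refine h.congr_deriv ?_
    rw [hu2eq, hphi2]
    push_cast
    ring
  set W : ℂ := Complex.ofReal (phil x) * deriv u x - Complex.ofReal (deriv phil x) * u x with hWdef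
  -- derivative of |W|^2
  have hmul := (hW.mul hW.star)
  have hN : HasDerivAt
      (fun y => ‖Complex.ofReal (phil y) * deriv u y
        - Complex.ofReal (deriv phil y) * u y‖ ^ 2)
      ((((lam - z) * (phil x) * u x) * star W + W * star ((lam - z) * (phil x) * u x)).re) x := by
    have := (Complex.reCLM.hasFDerivAt.comp_hasDerivAt x hmul)
    refine (this.congr_deriv ?_).congr_of_eventuallyEq (Filter.Eventually.of_forall fun y => ?_)
    · rfl
    · simp [Complex.sq_norm, Complex.normSq_apply]
      ring
  -- derivative of quotient
  have hQ := hN.div (hS_d x hx) hS0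
  rw [show (fun y => ‖Complex.ofReal (phil y) * deriv u y - Complex.ofReal (deriv phil y) * u y‖ ^ 2 / Sw y) = (fun y => ‖Complex.ofReal (phil y) * deriv u y - Complex.ofReal (deriv phil y) * u y‖ ^ 2) / Sw from rfl, hQ.deriv, huS]
  simp only [Complex.sq_norm]
  have key := stmt6_aux z (lam : ℂ) hz (phil x) (Sw x) hS0 (u x) W
  rw [← hWdef]
  convert key using 2
  ring
end

section
/- Let $-\infty\le a<b\le\infty$, $q:(a,b)\to\mathbb{R}$, $\lambda\in\mathbb{R}$, and let $\phi_\lambda:(a,b)\to\mathbb{R}$ be twice differentiable with $-\phi_\lambda''+q\phi_\lambda=\lambda\phi_\lambda$ on $(a,b)$. Let $S:(a,b)\to\mathbb{R}$ be differentiable with $S'=\phi_\lambda^2$ and $S>0$ on $(a,b)$, and set $\tilde\phi=\phi_\lambda/S$. Then for every $z\in\mathbb{C}$ with $z\ne\lambda$ and every twice differentiable $u:(a,b)\to\mathbb{C}$ solving $-u''+qu=zu$ on $(a,b)$, the double commutation transform $u_S(x)=u(x)+\tfrac{1}{z-\lambda}\tilde\phi(x)W_x(\phi_\lambda,u)$ satisfies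 $W_x(\tilde\phi,\,u_S) = \tfrac{W_x(\phi_\lambda,u)}{S(x)}$ for all $x\in(a,b)$. -/
open Set MeasureTheory Filter

/-- for the double commutation transform
`u_S = u + (z-λ)⁻¹ (φ_λ/S) W(φ_λ,u)` (with `S' = φ_λ²`, `S > 0`,
`φ̃ = φ_λ/S`) one has `W_x(φ̃, u_S) = W_x(φ_λ, u)/S(x)` on `(a,b)`. -/
theorem stmt_7 (a b : EReal) (hab : a < b)
    (q phil Sw : ℝ → ℝ) (lam : ℝ)
    (E : Set ℝ) (hE : E = {x : ℝ | a < (x : EReal) ∧ (x : EReal) < b})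
    (hl_d1 : ∀ x ∈ E, DifferentiableAt ℝ phil x)
    (hl_d2 : ∀ x ∈ E, DifferentiableAt ℝ (deriv phil) x)
    (hl_eq : ∀ x ∈ E, -deriv (deriv phil) x + q x * phil x = lam * phil x)
    (hS_d : ∀ x ∈ E, HasDerivAt Sw (phil x ^ 2) x)
    (hS_pos : ∀ x ∈ E, 0 < Sw x)
    (phit : ℝ → ℝ) (hphit : phit = fun x => phil x / Sw x) :
    ∀ z : ℂ, z ≠ (lam : ℂ) → ∀ u : ℝ → ℂ,
      (∀ x ∈ E, DifferentiableAt ℝ u x) →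
      (∀ x ∈ E, DifferentiableAt ℝ (deriv u) x) →
      (∀ x ∈ E, -deriv (deriv u) x + (q x : ℂ) * u x = z * u x) →
      ∀ uS : ℝ → ℂ,
        uS = (fun x => u x + (z - lam)⁻¹ * (Complex.ofReal (phit x)) *
          (Complex.ofReal (phil x) * deriv u x
            - Complex.ofReal (deriv phil x) * u x)) →
        ∀ x ∈ E,
          Complex.ofReal (phit x) * deriv uS x
              - Complex.ofReal (deriv phit x) * uS x
            = (Complex.ofReal (phil x) * deriv u x
                - Complex.ofReal (deriv phil x) * u x) / (Sw x : ℂ) := by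
  intro z hz u hu1 hu2 hueq uS huS x hx
  have hSx := hS_d x hx
  have Sne : Sw x ≠ 0 := (hS_pos x hx).ne'
  have SneC : (Sw x : ℂ) ≠ 0 := by exact_mod_cast Sne
  have hzl : z - (lam : ℂ) ≠ 0 := sub_ne_zero.mpr hz
  have hφ : HasDerivAt phil (deriv phil x) x := (hl_d1 x hx).hasDerivAt
  have hφ' : HasDerivAt (deriv phil) (deriv (deriv phil) x) x := (hl_d2 x hx).hasDerivAt
  have hud : HasDerivAt u (deriv u x) x := (hu1 x hx).hasDerivAt
  have hud' : HasDerivAt (deriv u) (deriv (deriv u) x) x := (hu2 x hx).hasDerivAt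
  have hφc : HasDerivAt (fun t => (phil t : ℂ)) (((deriv phil x : ℝ) : ℂ)) x := hφ.ofReal_comp
  have hφ'c : HasDerivAt (fun t => ((deriv phil t : ℝ) : ℂ)) (((deriv (deriv phil) x : ℝ) : ℂ)) x :=
    hφ'.ofReal_comp
  -- second derivative identities
  have hu2e : deriv (deriv u) x = (q x : ℂ) * u x - z * u x := by
    have := hueq x hx; linear_combination -this
  have hp2e : deriv (deriv phil) x = q x * phil x - lam * phil x := by
    have := hl_eq x hx; linarith
  -- Wronskian and its derivative
  have hW : HasDerivAt (fun t => (phil t : ℂ) * deriv u t - ((deriv phil t : ℝ) : ℂ) * u t)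
      (((lam : ℂ) - z) * (phil x) * u x) x := by
    have h := (hφc.mul hud').sub (hφ'c.mul hud)
    refine h.congr_deriv ?_
    rw [hu2e, hp2e]
    push_cast
    ring
  -- derivative of phit
  have hphitd : HasDerivAt phit
      ((deriv phil x * Sw x - phil x * phil x ^ 2) / Sw x ^ 2) x := by
    rw [hphit]; exact hφ.div hSx Sne
  have hptd : deriv phit x = (deriv phil x * Sw x - phil x * phil x ^ 2) / Sw x ^ 2 :=
    hphitd.deriv
  have hphitc : HasDerivAt (fun t => ((phit t : ℝ) : ℂ)) (((deriv phit x : ℝ) : ℂ)) x := by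
    rw [hptd]; exact hphitd.ofReal_comp
  -- derivative of uS
  have huSd : HasDerivAt uS
      (deriv u x + ((z - lam)⁻¹ * (((deriv phit x : ℝ) : ℂ)) *
          ((phil x : ℂ) * deriv u x - ((deriv phil x : ℝ) : ℂ) * u x)
        + (z - lam)⁻¹ * ((phit x : ℂ)) * (((lam : ℂ) - z) * (phil x) * u x))) x := by
    rw [huS]
    have h := hud.add (((hphitc.const_mul ((z - lam)⁻¹ : ℂ)).mul hW))
    exact h
  have hduS : deriv uS x = deriv u x + ((z - lam)⁻¹ * (((deriv phit x : ℝ) : ℂ)) *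
          ((phil x : ℂ) * deriv u x - ((deriv phil x : ℝ) : ℂ) * u x)
        + (z - lam)⁻¹ * ((phit x : ℂ)) * (((lam : ℂ) - z) * (phil x) * u x)) := huSd.deriv
  have hptx : phit x = phil x / Sw x := by rw [hphit]
  have hc : (z - (lam : ℂ))⁻¹ * ((lam : ℂ) - z) = -1 := by
    rw [← neg_sub z (lam : ℂ), mul_neg, inv_mul_cancel₀ hzl]
  rw [hduS, huS]
  beta_reduce
  trans ((phit x : ℂ) * deriv u x - ((deriv phit x : ℝ) : ℂ) * u x
      - ((phit x : ℂ)) ^ 2 * (phil x : ℂ) * u x)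
  · linear_combination (((phit x : ℂ)) ^ 2 * (phil x : ℂ) * u x) * hc
  · rw [hptd, hptx]
    push_cast
    field_simp
    ring
end

section
/- Let $-\infty\le a<b\le\infty$, $q:(a,b)\to\mathbb{R}$, $\lambda\in\mathbb{R}$, $\gamma\in(0,\infty)$, and let $\phi_\lambda:(a,b)\to\mathbb{R}$ be twice differentiable with $-\phi_\lambda''+q\phi_\lambda=\lambda\phi_\lambda$ on $(a,b)$ and $\int_a^x\phi_\lambda(y)^2dy<\infty$ for all $x\in(a,b)$. Set $S(x)=\gamma^{-1}+\int_a^x\phi_\lambda(y)^2dy$ and $\tilde\phi=\phi_\lambda/S$. Let $z\in\mathbb{C}$, $z\ne\lambda$, and let $\theta,\phi:(a,b)\to\mathbb{C}$ be twice differentiable solutions of $-u''+qu=zu$ on $(a,b)$ with $W_x(\theta,\phi)=1$ for all $x$. Define $\phi_\gamma(x) = \phi(x) + \tfrac{1}{z-\lambda}\tilde\phi(x)W_x(\phi_\lambda,\phi)$ and $\theta_\gamma(x) = \theta(x) + \tfrac{1}{z-\lambda}\big(\tilde\phi(x)W_x(\phi_\lambda,\theta) + \gamma\,\phi_\gamma(x)\big)$.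 Then $W_x(\theta_\gamma,\phi_\gamma)=1$ for all $x\in(a,b)$. -/
open Set MeasureTheory Filter
open Topology

set_option maxHeartbeats 4000000 in
/-- the double commutation transforms with coupling `γ ∈ (0,∞)`,
`φ_γ = φ + (z-λ)⁻¹ φ̃ W(φ_λ,φ)` and
`θ_γ = θ + (z-λ)⁻¹ (φ̃ W(φ_λ,θ) + γ φ_γ)`, of a fundamental system `θ, φ`
(`W(θ,φ) ≡ 1`) of `-u'' + q u = z u` satisfy `W(θ_γ, φ_γ) ≡ 1`, where
`S(x) = γ⁻¹ + ∫_a^x φ_λ²` and `φ̃ = φ_λ/S`. -/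
theorem stmt_8 (a b : EReal) (hab : a < b)
    (q phil : ℝ → ℝ) (lam γ : ℝ) (hγ : 0 < γ)
    (E : Set ℝ) (hE : E = {x : ℝ | a < (x : EReal) ∧ (x : EReal) < b})
    (hl_d1 : ∀ x ∈ E, DifferentiableAt ℝ phil x)
    (hl_d2 : ∀ x ∈ E, DifferentiableAt ℝ (deriv phil) x)
    (hl_eq : ∀ x ∈ E, -deriv (deriv phil) x + q x * phil x = lam * phil x)
    (hl_int : ∀ x ∈ E,
      IntegrableOn (fun y => phil y ^ 2) {y : ℝ | a < (y : EReal) ∧ y < x})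
    (Sw : ℝ → ℝ)
    (hSw : Sw = fun x => γ⁻¹ + ∫ y in {y : ℝ | a < (y : EReal) ∧ y < x}, phil y ^ 2)
    (phit : ℝ → ℝ) (hphit : phit = fun x => phil x / Sw x)
    (z : ℂ) (hzlam : z ≠ (lam : ℂ))
    (theta phi : ℝ → ℂ)
    (hth_d1 : ∀ x ∈ E, DifferentiableAt ℝ theta x)
    (hth_d2 : ∀ x ∈ E, DifferentiableAt ℝ (deriv theta) x)
    (hth_eq : ∀ x ∈ E, -deriv (deriv theta) x + (q x : ℂ) * theta x = z * theta x)
    (hph_d1 : ∀ x ∈ E, DifferentiableAt ℝ phi x)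
    (hph_d2 : ∀ x ∈ E, DifferentiableAt ℝ (deriv phi) x)
    (hph_eq : ∀ x ∈ E, -deriv (deriv phi) x + (q x : ℂ) * phi x = z * phi x)
    (hW : ∀ x ∈ E, theta x * deriv phi x - deriv theta x * phi x = 1)
    (phig thetag : ℝ → ℂ)
    (hphig : phig = fun x => phi x
      + (z - lam)⁻¹ * Complex.ofReal (phit x) *
        (Complex.ofReal (phil x) * deriv phi x
          - Complex.ofReal (deriv phil x) * phi x))
    (hthetag : thetag = fun x => theta x
      + (z - lam)⁻¹ * (Complex.ofReal (phit x) *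
          (Complex.ofReal (phil x) * deriv theta x
            - Complex.ofReal (deriv phil x) * theta x)
        + (γ : ℂ) * phig x)) :
    ∀ x ∈ E, thetag x * deriv phig x - deriv thetag x * phig x = 1 := by
  have hopenSet : ∀ t : ℝ, IsOpen {y : ℝ | a < (y : EReal) ∧ y < t} := by
    intro t
    have : {y : ℝ | a < (y : EReal) ∧ y < t}
        = ((↑) : ℝ → EReal) ⁻¹' (Ioi a) ∩ Iio t := rfl
    rw [this]
    exact (isOpen_Ioi.preimage continuous_coe_real_ereal).inter isOpen_Iio
  have hEopen : IsOpen E := by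
    rw [hE]
    have : {x : ℝ | a < (x : EReal) ∧ (x : EReal) < b}
        = ((↑) : ℝ → EReal) ⁻¹' (Ioi a) ∩ ((↑) : ℝ → EReal) ⁻¹' (Iio b) := rfl
    rw [this]
    exact (isOpen_Ioi.preimage continuous_coe_real_ereal).inter
      (isOpen_Iio.preimage continuous_coe_real_ereal)
  intro x hx
  have hxE : a < (x : EReal) ∧ (x : EReal) < b := by rw [hE] at hx; exact hx
  obtain ⟨hax, hxb⟩ := hxE
  obtain ⟨c, hac, hcx⟩ := EReal.lt_iff_exists_real_btwn.1 hax
  have hcx' : c < x := by exact_mod_cast hcx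
  have hcE : c ∈ E := by rw [hE]; exact ⟨hac, hcx.trans hxb⟩
  obtain ⟨d, hxd, hdb⟩ := EReal.lt_iff_exists_real_btwn.1 hxb
  have hxd' : x < d := by exact_mod_cast hxd
  have hdE : d ∈ E := by rw [hE]; exact ⟨hax.trans hxd, hdb⟩
  -- derivative of Sw
  have hφcont : ContinuousOn (fun y => phil y ^ 2) E := fun y hy =>
    ((hl_d1 y hy).continuousAt.pow 2).continuousWithinAt
  have hsm : StronglyMeasurableAtFilter (fun y => phil y ^ 2) (𝓝 x) volume :=
    ⟨E, hEopen.mem_nhds hx, hφcont.aestronglyMeasurable hEopen.measurableSet⟩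
  have hIoc : IntegrableOn (fun y => phil y ^ 2) (Ioc c x) := by
    refine (hl_int d hdE).mono_set fun y hy => ?_
    exact ⟨hac.trans (by exact_mod_cast hy.1), lt_of_le_of_lt hy.2 hxd'⟩
  have hII : IntervalIntegrable (fun y => phil y ^ 2) volume c x := by
    rw [intervalIntegrable_iff_integrableOn_Ioc_of_le hcx'.le]
    exact hIoc
  have hFTC : HasDerivAt (fun u => ∫ y in c..u, phil y ^ 2) (phil x ^ 2) x :=
    intervalIntegral.integral_hasDerivAt_right hII hsm ((hl_d1 x hx).continuousAt.pow 2)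
  have hev : Sw =ᶠ[𝓝 x] fun u =>
      (γ⁻¹ + ∫ y in {y : ℝ | a < (y : EReal) ∧ y < c}, phil y ^ 2)
        + ∫ y in c..u, phil y ^ 2 := by
    have hU : E ∩ Ioi c ∈ 𝓝 x := (hEopen.inter isOpen_Ioi).mem_nhds ⟨hx, hcx'⟩
    filter_upwards [hU] with u hu
    obtain ⟨huE, hcu⟩ := hu
    have huE' : a < (u : EReal) ∧ (u : EReal) < b := by rw [hE] at huE; exact huE
    have hsplit : {y : ℝ | a < (y : EReal) ∧ y < u}
        = {y : ℝ | a < (y : EReal) ∧ y < c} ∪ Ico c u := by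
      ext y
      simp only [mem_setOf_eq, mem_union, mem_Ico]
      constructor
      · rintro ⟨h1, h2⟩
        rcases lt_or_ge y c with h | h
        · exact Or.inl ⟨h1, h⟩
        · exact Or.inr ⟨h, h2⟩
      · rintro (⟨h1, h2⟩ | ⟨h1, h2⟩)
        · exact ⟨h1, h2.trans hcu⟩
        · exact ⟨hac.trans_le (by exact_mod_cast h1), h2⟩
    have hdisj : Disjoint {y : ℝ | a < (y : EReal) ∧ y < c} (Ico c u) := by
      rw [Set.disjoint_left]
      rintro y ⟨_, h2⟩ ⟨h3, _⟩
      exact absurd h3 (not_le.2 h2)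
    have hint1 : IntegrableOn (fun y => phil y ^ 2)
        {y : ℝ | a < (y : EReal) ∧ y < c} := hl_int c hcE
    have hint2 : IntegrableOn (fun y => phil y ^ 2) (Ico c u) := by
      refine (hl_int u huE).mono_set fun y hy => ?_
      exact ⟨hac.trans_le (by exact_mod_cast hy.1), hy.2⟩
    rw [hSw]
    simp only
    rw [hsplit, setIntegral_union hdisj measurableSet_Ico hint1 hint2,
      intervalIntegral.integral_of_le hcu.le,
      MeasureTheory.integral_Ico_eq_integral_Ioo,
      MeasureTheory.integral_Ioc_eq_integral_Ioo, add_assoc]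
  have hSderiv : HasDerivAt Sw (phil x ^ 2) x :=
    (hFTC.const_add _).congr_of_eventuallyEq hev
  -- positivity of Sw x
  have hSx : Sw x = γ⁻¹ + ∫ y in {y : ℝ | a < (y : EReal) ∧ y < x}, phil y ^ 2 := by
    rw [hSw]
  have hSpos : 0 < Sw x := by
    rw [hSx]
    have h1 : 0 ≤ ∫ y in {y : ℝ | a < (y : EReal) ∧ y < x}, phil y ^ 2 :=
      setIntegral_nonneg (hopenSet x).measurableSet fun y _ => sq_nonneg _
    have h2 : 0 < γ⁻¹ := inv_pos.2 hγ
    linarith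
  have hSne : Sw x ≠ 0 := ne_of_gt hSpos
  -- derivative of phit
  have hφl := (hl_d1 x hx).hasDerivAt
  have htilde : HasDerivAt phit
      ((deriv phil x * Sw x - phil x * phil x ^ 2) / Sw x ^ 2) x := by
    rw [hphit]
    exact hφl.div hSderiv hSne
  -- complex lifts
  have hφlC : HasDerivAt (fun y => (Complex.ofReal (phil y))) (Complex.ofReal (deriv phil x)) x :=
    hφl.ofReal_comp
  have hφl'C : HasDerivAt (fun y => (Complex.ofReal (deriv phil y)))
      (Complex.ofReal (deriv (deriv phil) x)) x := (hl_d2 x hx).hasDerivAt.ofReal_comp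
  have htildeC : HasDerivAt (fun y => ((phit y : ℂ)))
      (( (deriv phil x * Sw x - phil x * phil x ^ 2) / Sw x ^ 2 : ℝ) : ℂ) x :=
    htilde.ofReal_comp
  have hph1 := (hph_d1 x hx).hasDerivAt
  have hph2 := (hph_d2 x hx).hasDerivAt
  have hth1 := (hth_d1 x hx).hasDerivAt
  have hth2 := (hth_d2 x hx).hasDerivAt
  -- Wronskian-type derivatives
  have hWφD : HasDerivAt
      (fun y => Complex.ofReal (phil y) * deriv phi y - Complex.ofReal (deriv phil y) * phi y)
      ((Complex.ofReal (deriv phil x) * deriv phi x + Complex.ofReal (phil x) * deriv (deriv phi) x)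
        - (Complex.ofReal (deriv (deriv phil) x) * phi x + Complex.ofReal (deriv phil x) * deriv phi x)) x :=
    (hφlC.mul hph2).sub (hφl'C.mul hph1)
  have hWθD : HasDerivAt
      (fun y => Complex.ofReal (phil y) * deriv theta y - Complex.ofReal (deriv phil y) * theta y)
      ((Complex.ofReal (deriv phil x) * deriv theta x + Complex.ofReal (phil x) * deriv (deriv theta) x)
        - (Complex.ofReal (deriv (deriv phil) x) * theta x + Complex.ofReal (deriv phil x) * deriv theta x)) x :=
    (hφlC.mul hth2).sub (hφl'C.mul hth1)
  -- derivative of phig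
  have hphigD : HasDerivAt phig
      (deriv phi x
        + (((z - (lam : ℂ))⁻¹ * (((deriv phil x * Sw x - phil x * phil x ^ 2) / Sw x ^ 2 : ℝ) : ℂ))
            * (Complex.ofReal (phil x) * deriv phi x - Complex.ofReal (deriv phil x) * phi x)
          + ((z - (lam : ℂ))⁻¹ * ((phit x : ℝ) : ℂ))
            * ((Complex.ofReal (deriv phil x) * deriv phi x + Complex.ofReal (phil x) * deriv (deriv phi) x)
              - (Complex.ofReal (deriv (deriv phil) x) * phi x + Complex.ofReal (deriv phil x) * deriv phi x)))) x := by
    rw [hphig]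
    exact hph1.add ((htildeC.const_mul ((z - (lam : ℂ))⁻¹)).mul hWφD)
  -- derivative of thetag
  have hthetagD : HasDerivAt thetag
      (deriv theta x
        + (z - (lam : ℂ))⁻¹ *
          (((((deriv phil x * Sw x - phil x * phil x ^ 2) / Sw x ^ 2 : ℝ) : ℂ)
              * (Complex.ofReal (phil x) * deriv theta x - Complex.ofReal (deriv phil x) * theta x)
            + ((phit x : ℝ) : ℂ)
              * ((Complex.ofReal (deriv phil x) * deriv theta x + Complex.ofReal (phil x) * deriv (deriv theta) x)
                - (Complex.ofReal (deriv (deriv phil) x) * theta x + Complex.ofReal (deriv phil x) * deriv theta x)))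
          + (γ : ℂ) *
            (deriv phi x
              + (((z - (lam : ℂ))⁻¹ * (((deriv phil x * Sw x - phil x * phil x ^ 2) / Sw x ^ 2 : ℝ) : ℂ))
                  * (Complex.ofReal (phil x) * deriv phi x - Complex.ofReal (deriv phil x) * phi x)
                + ((z - (lam : ℂ))⁻¹ * ((phit x : ℝ) : ℂ))
                  * ((Complex.ofReal (deriv phil x) * deriv phi x + Complex.ofReal (phil x) * deriv (deriv phi) x)
                    - (Complex.ofReal (deriv (deriv phil) x) * phi x + Complex.ofReal (deriv phil x) * deriv phi x)))))) x := by
    rw [hthetag]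
    exact hth1.add
      (((htildeC.mul hWθD).add (hphigD.const_mul ((γ : ℝ) : ℂ))).const_mul ((z - (lam : ℂ))⁻¹))
  have e1 : phig x = phi x + (z - (lam : ℂ))⁻¹ * ((phit x : ℝ) : ℂ) *
      (Complex.ofReal (phil x) * deriv phi x - Complex.ofReal (deriv phil x) * phi x) := by
    rw [hphig]
  have e3 : thetag x = theta x + (z - (lam : ℂ))⁻¹ * (((phit x : ℝ) : ℂ) *
      (Complex.ofReal (phil x) * deriv theta x - Complex.ofReal (deriv phil x) * theta x)
      + (γ : ℂ) * phig x) := by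
    rw [hthetag]
  have e2 := hphigD.deriv
  have e4 := hthetagD.deriv
  rw [← e2] at e4
  -- equation substitutions
  have hq2l : deriv (deriv phil) x = q x * phil x - lam * phil x := by
    linarith [hl_eq x hx]
  have hq2t : deriv (deriv theta) x = (q x : ℂ) * theta x - z * theta x := by
    linear_combination -hth_eq x hx
  have hq2p : deriv (deriv phi) x = (q x : ℂ) * phi x - z * phi x := by
    linear_combination -hph_eq x hx
  have hTx : phit x = phil x / Sw x := by rw [hphit]
  have hzne : z - (lam : ℂ) ≠ 0 := sub_ne_zero.mpr hzlam
  have hSneC : ((Sw x : ℝ) : ℂ) ≠ 0 := Complex.ofReal_ne_zero.2 hSne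
  -- denominator-free versions
  have r1 : (z - (lam : ℂ)) * ((Sw x : ℝ) : ℂ) * phig x
      = (z - (lam : ℂ)) * ((Sw x : ℝ) : ℂ) * phi x
        + Complex.ofReal (phil x) *
          (Complex.ofReal (phil x) * deriv phi x - Complex.ofReal (deriv phil x) * phi x) := by
    rw [e1, hTx]; push_cast; field_simp
  have r2 : (z - (lam : ℂ)) * ((Sw x : ℝ) : ℂ) ^ 2 * deriv phig x
      = (z - (lam : ℂ)) * ((Sw x : ℝ) : ℂ) ^ 2 * deriv phi x
        + (Complex.ofReal (deriv phil x) * ((Sw x : ℝ) : ℂ)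
            - Complex.ofReal (phil x) * Complex.ofReal (phil x) ^ 2) *
          (Complex.ofReal (phil x) * deriv phi x - Complex.ofReal (deriv phil x) * phi x)
        + Complex.ofReal (phil x) * ((Sw x : ℝ) : ℂ) *
          ((Complex.ofReal (deriv phil x) * deriv phi x
              + Complex.ofReal (phil x) * deriv (deriv phi) x)
            - (Complex.ofReal (deriv (deriv phil) x) * phi x
              + Complex.ofReal (deriv phil x) * deriv phi x)) := by
    rw [e2, hTx]; push_cast; field_simp; ring
  have r3 : (z - (lam : ℂ)) * ((Sw x : ℝ) : ℂ) * thetag x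
      = (z - (lam : ℂ)) * ((Sw x : ℝ) : ℂ) * theta x
        + Complex.ofReal (phil x) *
          (Complex.ofReal (phil x) * deriv theta x - Complex.ofReal (deriv phil x) * theta x)
        + (γ : ℂ) * ((Sw x : ℝ) : ℂ) * phig x := by
    rw [e3, hTx]; push_cast; field_simp; ring
  have r4 : (z - (lam : ℂ)) * ((Sw x : ℝ) : ℂ) ^ 2 * deriv thetag x
      = (z - (lam : ℂ)) * ((Sw x : ℝ) : ℂ) ^ 2 * deriv theta x
        + (Complex.ofReal (deriv phil x) * ((Sw x : ℝ) : ℂ)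
            - Complex.ofReal (phil x) * Complex.ofReal (phil x) ^ 2) *
          (Complex.ofReal (phil x) * deriv theta x - Complex.ofReal (deriv phil x) * theta x)
        + Complex.ofReal (phil x) * ((Sw x : ℝ) : ℂ) *
          ((Complex.ofReal (deriv phil x) * deriv theta x
              + Complex.ofReal (phil x) * deriv (deriv theta) x)
            - (Complex.ofReal (deriv (deriv phil) x) * theta x
              + Complex.ofReal (deriv phil x) * deriv theta x))
        + (γ : ℂ) * ((Sw x : ℝ) : ℂ) ^ 2 * deriv phig x := by
    rw [e4, hTx]; push_cast; field_simp; ring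
  rw [hq2l, hq2p] at r2
  push_cast at r2
  rw [hq2l, hq2t] at r4
  push_cast at r4
  have key2 : ((z - (lam : ℂ)) ^ 2 * ((Sw x : ℝ) : ℂ) ^ 3) *
        (thetag x * deriv phig x - deriv thetag x * phig x)
      = ((z - (lam : ℂ)) ^ 2 * ((Sw x : ℝ) : ℂ) ^ 3) *
        (theta x * deriv phi x - deriv theta x * phi x) := by
    linear_combination
      ((z - (lam : ℂ)) * ((Sw x : ℝ) : ℂ) ^ 2 * deriv phig x) * r3
      + (((z - (lam : ℂ)) * ((Sw x : ℝ) : ℂ) * theta x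
          + (phil x : ℂ) * ((phil x : ℂ) * deriv theta x - (deriv phil x : ℝ) * theta x))) * r2
      - ((z - (lam : ℂ)) * ((Sw x : ℝ) : ℂ) * phig x) * r4
      - (((z - (lam : ℂ)) * ((Sw x : ℝ) : ℂ) ^ 2 * deriv theta x
          + ((deriv phil x : ℝ) * ((Sw x : ℝ) : ℂ)
              - (phil x : ℂ) * (phil x : ℂ) ^ 2) *
            ((phil x : ℂ) * deriv theta x - (deriv phil x : ℝ) * theta x)
          + (phil x : ℂ) * ((Sw x : ℝ) : ℂ) *
            (((deriv phil x : ℝ) * deriv theta x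
                + (phil x : ℂ) * ((q x : ℂ) * theta x - z * theta x))
              - (((q x : ℂ) * (phil x : ℂ) - (lam : ℂ) * (phil x : ℂ)) * theta x
                + (deriv phil x : ℝ) * deriv theta x)))) * r1
  have hfac : ((z - (lam : ℂ)) ^ 2 * ((Sw x : ℝ) : ℂ) ^ 3) ≠ 0 :=
    mul_ne_zero (pow_ne_zero _ hzne) (pow_ne_zero _ hSneC)
  rw [mul_left_cancel₀ hfac key2]
  exact hW x hx
end

section
/- Let $n\in\mathbb{N}$, let $A\in\mathbb{C}^{n\times n}$, let $S_0\in\mathbb{C}^{n\times n}$ with $S_0=S_0^*$, and let $\Lambda_1^0,\Lambda_2^0\in\mathbb{C}^n$ satisfy $A S_0 - S_0 A^* = \Lambda^0 J (\Lambda^0)^*$, where $\Lambda^0=[\Lambda_1^0\ \Lambda_2^0]\in\mathbb{C}^{n\times 2}$ and $J=\begin{pmatrix}0&1\\-1&0\end{pmatrix}$. Let $q:\mathbb{R}\to\mathbb{R}$ and let $\Lambda_1,\Lambda_2:\mathbb{R}\to\mathbb{C}^n$ be differentiable with $\Lambda_1(0)=\Lambda_1^0$, $\Lambda_2(0)=\Lambda_2^0$,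 $\Lambda_1'(x)=A\Lambda_2(x)-q(x)\Lambda_2(x)$ and $\Lambda_2'(x)=-\Lambda_1(x)$, and let $S:\mathbb{R}\to\mathbb{C}^{n\times n}$ be differentiable with $S(0)=S_0$ and $S'(x)=\Lambda_2(x)\Lambda_2(x)^*$. Then for every $x\in\mathbb{R}$: $A S(x) - S(x) A^* = \Lambda(x) J \Lambda(x)^*$, where $\Lambda(x)=[\Lambda_1(x)\ \Lambda_2(x)]$. In particular $S(x)=S(x)^*$ for all $x$. -/
open Matrix

private lemma const_aux {f : ℝ → ℂ} (hf : ∀ x, HasDerivAt f 0 x) (x : ℝ) : f x = f 0 :=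
  is_const_of_deriv_eq_zero (fun y => (hf y).differentiableAt)
    (fun y => (hf y).deriv) x 0

/-- the basic GBDT matrix identity. If
`A S₀ - S₀ A* = Λ⁰ J (Λ⁰)*` with `S₀ = S₀*`, and `Λ₁, Λ₂, S` solve
`Λ₁' = A Λ₂ - q Λ₂`, `Λ₂' = -Λ₁`, `S' = Λ₂ Λ₂*` with the given initial values,
then `A S(x) - S(x) A* = Λ(x) J Λ(x)*` (so in particular `S(x) = S(x)*`)
for all `x ∈ ℝ`, where `Λ(x) = [Λ₁(x) Λ₂(x)]`. -/
theorem stmt_10 (n : ℕ) (hn : 0 < n)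
    (A S0 : Matrix (Fin n) (Fin n) ℂ) (hS0 : S0 = S0ᴴ)
    (L1_0 L2_0 : Fin n → ℂ)
    (J : Matrix (Fin 2) (Fin 2) ℂ) (hJ : J = !![0, 1; -1, 0])
    (L0 : Matrix (Fin n) (Fin 2) ℂ)
    (hL0 : L0 = Matrix.of fun i => ![L1_0 i, L2_0 i])
    (hid0 : A * S0 - S0 * Aᴴ = L0 * J * L0ᴴ)
    (q : ℝ → ℝ) (L1 L2 : ℝ → Fin n → ℂ) (S : ℝ → Matrix (Fin n) (Fin n) ℂ)
    (hL1_0 : L1 0 = L1_0) (hL2_0 : L2 0 = L2_0) (hS_0 : S 0 = S0)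
    (hL1' : ∀ (x : ℝ) (i : Fin n),
      HasDerivAt (fun t => L1 t i) (A.mulVec (L2 x) i - (q x : ℂ) * L2 x i) x)
    (hL2' : ∀ (x : ℝ) (i : Fin n),
      HasDerivAt (fun t => L2 t i) (-(L1 x i)) x)
    (hS' : ∀ (x : ℝ) (i j : Fin n),
      HasDerivAt (fun t => S t i j) (L2 x i * star (L2 x j)) x)
    (L : ℝ → Matrix (Fin n) (Fin 2) ℂ)
    (hL : L = fun x => Matrix.of fun i => ![L1 x i, L2 x i]) :
    ∀ x : ℝ, A * S x - S x * Aᴴ = L x * J * (L x)ᴴ ∧ S x = (S x)ᴴ := by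
  intro x
  constructor
  · ext i j
    -- the entrywise function whose constancy we use
    set g : ℝ → ℂ := fun t =>
      (∑ k, A i k * S t k j) - (∑ k, S t i k * Aᴴ k j) -
        (L1 t i * star (L2 t j) - L2 t i * star (L1 t j)) with hg
    have hgd : ∀ y, HasDerivAt g 0 y := by
      intro y
      have h1 : HasDerivAt (fun t => ∑ k, A i k * S t k j)
          (∑ k, A i k * (L2 y k * star (L2 y j))) y :=
        HasDerivAt.fun_sum fun k _ => (hS' y k j).const_mul (A i k)
      have h2 : HasDerivAt (fun t => ∑ k, S t i k * Aᴴ k j)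
          (∑ k, (L2 y i * star (L2 y k)) * Aᴴ k j) y :=
        HasDerivAt.fun_sum fun k _ => (hS' y i k).mul_const (Aᴴ k j)
      have h3 := (hL1' y i).mul ((hL2' y j).star)
      have h4 := (hL2' y i).mul ((hL1' y j).star)
      have h := (h1.sub h2).sub (h3.sub h4)
      refine h.congr_deriv ?_
      have e1 : ∑ k, A i k * (L2 y k * star (L2 y j))
          = A.mulVec (L2 y) i * star (L2 y j) := by
        simp [Matrix.mulVec, dotProduct, Finset.sum_mul, mul_assoc]
      have e2 : ∑ k, (L2 y i * star (L2 y k)) * Aᴴ k j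
          = L2 y i * star (A.mulVec (L2 y) j) := by
        rw [Matrix.mulVec, dotProduct, star_sum, Finset.mul_sum]
        refine Finset.sum_congr rfl fun k _ => ?_
        rw [star_mul', Matrix.conjTranspose_apply]
        ring
      rw [e1, e2]
      simp only [star_sub, star_neg, star_mul', Complex.star_def, Complex.conj_ofReal]
      ring
    have hgc := const_aux hgd x
    have h0 : (A * S0 - S0 * Aᴴ) i j = (L0 * J * L0ᴴ) i j := by rw [hid0]
    have hg0 : g 0 = 0 := by
      simp only [hg, hL1_0, hL2_0, hS_0]
      have lhs0 : (A * S0 - S0 * Aᴴ) i j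
          = (∑ k, A i k * S0 k j) - (∑ k, S0 i k * Aᴴ k j) := by
        simp [Matrix.sub_apply, Matrix.mul_apply]
      have rhs0 : (L0 * J * L0ᴴ) i j
          = L1_0 i * star (L2_0 j) - L2_0 i * star (L1_0 j) := by
        subst hJ hL0
        simp [Matrix.mul_apply, Fin.sum_univ_two, Matrix.conjTranspose_apply]
        ring
      rw [← lhs0, h0, rhs0]
      ring
    have hgx : g x = 0 := by rw [hgc, hg0]
    have : (∑ k, A i k * S x k j) - (∑ k, S x i k * Aᴴ k j)
        = L1 x i * star (L2 x j) - L2 x i * star (L1 x j) := by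
      have := hgx
      simp only [hg] at this
      linear_combination this
    have rhs : (L x * J * (L x)ᴴ) i j
        = L1 x i * star (L2 x j) - L2 x i * star (L1 x j) := by
      subst hJ hL
      simp [Matrix.mul_apply, Fin.sum_univ_two, Matrix.conjTranspose_apply]
      ring
    rw [rhs, Matrix.sub_apply, Matrix.mul_apply, Matrix.mul_apply]
    exact this
  · ext i j
    have hd : ∀ y, HasDerivAt (fun t => S t i j - star (S t j i)) 0 y := by
      intro y
      have h := (hS' y i j).sub ((hS' y j i).star)
      refine h.congr_deriv ?_
      rw [star_mul', star_star]
      ring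
    have hc := const_aux hd x
    have h0 : S 0 i j - star (S 0 j i) = 0 := by
      rw [hS_0]
      have : S0 i j = S0ᴴ i j := by rw [← hS0]
      rw [Matrix.conjTranspose_apply] at this
      rw [this, sub_self]
    have := hc.trans h0
    have : S x i j = star (S x j i) := by linear_combination this
    rw [this, Matrix.conjTranspose_apply]
end

section
/- Let $n\in\mathbb{N}$, $A\in\mathbb{C}^{n\times n}$, $S\in\mathbb{C}^{n\times n}$ invertible with $S=S^*$, and $\Lambda\in\mathbb{C}^{n\times 2}$ such that $AS-SA^* = \Lambda J \Lambda^*$, where $J=\begin{pmatrix}0&1\\-1&0\end{pmatrix}$. For $z\in\mathbb{C}$ such that both $zI_n-A$ and $\bar z I_n - A$ are invertible, define $w_A(z) = I_2 + J\,\Lambda^* S^{-1}(zI_n-A)^{-1}\Lambda$. Then $w_A(\bar z)^*\, J\, w_A(z) = J$. -/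
open Matrix

/-- `J`-symmetry of the GBDT transfer matrix in Lev Sakhnovich
form: if `S = S*` is invertible, `A S - S A* = Λ J Λ*`, and both `zI - A` and
`z̄I - A` are invertible, then
`w_A(z̄)* J w_A(z) = J` for `w_A(z) = I₂ + J Λ* S⁻¹ (zI - A)⁻¹ Λ`. -/
theorem stmt_11 (n : ℕ) (A S : Matrix (Fin n) (Fin n) ℂ)
    (hSinv : IsUnit S.det) (hS : S = Sᴴ)
    (L : Matrix (Fin n) (Fin 2) ℂ)
    (J : Matrix (Fin 2) (Fin 2) ℂ) (hJ : J = !![0, 1; -1, 0])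
    (hid : A * S - S * Aᴴ = L * J * Lᴴ)
    (z : ℂ)
    (hz1 : IsUnit (z • (1 : Matrix (Fin n) (Fin n) ℂ) - A).det)
    (hz2 : IsUnit ((starRingEnd ℂ) z • (1 : Matrix (Fin n) (Fin n) ℂ) - A).det)
    (w : ℂ → Matrix (Fin 2) (Fin 2) ℂ)
    (hw : ∀ ζ : ℂ,
      w ζ = 1 + J * Lᴴ * S⁻¹ * (ζ • (1 : Matrix (Fin n) (Fin n) ℂ) - A)⁻¹ * L) :
    (w ((starRingEnd ℂ) z))ᴴ * J * w z = J := by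
  set B : Matrix (Fin n) (Fin n) ℂ := z • (1 : Matrix (Fin n) (Fin n) ℂ) - A with hB
  set C : Matrix (Fin n) (Fin n) ℂ :=
    (starRingEnd ℂ) z • (1 : Matrix (Fin n) (Fin n) ℂ) - A with hC
  have hJJ : J * J = -1 := by
    subst hJ
    ext i j
    fin_cases i <;> fin_cases j <;>
      simp [Matrix.mul_apply, Fin.sum_univ_two, Matrix.one_apply]
  have hJH : Jᴴ = -J := by
    subst hJ
    ext i j
    fin_cases i <;> fin_cases j <;> simp
  have hS' : Sᴴ = S := hS.symm
  have hSi : (S⁻¹)ᴴ = S⁻¹ := by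
    rw [Matrix.conjTranspose_nonsing_inv, hS']
  have hCH : Cᴴ = z • (1 : Matrix (Fin n) (Fin n) ℂ) - Aᴴ := by
    rw [hC]
    simp
  have hDdet : IsUnit (Cᴴ).det := by
    rw [Matrix.det_conjTranspose]
    exact hz2.star
  have hCi : (C⁻¹)ᴴ = (Cᴴ)⁻¹ := Matrix.conjTranspose_nonsing_inv C
  -- key algebraic identity
  have hK : S * Cᴴ - B * S = L * J * Lᴴ := by
    rw [← hid, hCH, hB]
    rw [Matrix.mul_sub, Matrix.sub_mul]
    rw [Matrix.mul_smul, Matrix.smul_mul, Matrix.mul_one, Matrix.one_mul]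
    abel
  have hmid : (Cᴴ)⁻¹ * S⁻¹ * (L * J * Lᴴ) * (S⁻¹ * B⁻¹) =
      S⁻¹ * B⁻¹ - (Cᴴ)⁻¹ * S⁻¹ := by
    rw [← hK, Matrix.mul_sub, Matrix.sub_mul]
    have h1 : (Cᴴ)⁻¹ * S⁻¹ * (S * Cᴴ) * (S⁻¹ * B⁻¹) = S⁻¹ * B⁻¹ := by
      rw [show (Cᴴ)⁻¹ * S⁻¹ * (S * Cᴴ) * (S⁻¹ * B⁻¹)
            = (Cᴴ)⁻¹ * (S⁻¹ * S) * Cᴴ * (S⁻¹ * B⁻¹) by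
          simp only [Matrix.mul_assoc]]
      rw [Matrix.nonsing_inv_mul S hSinv, Matrix.mul_one,
        Matrix.nonsing_inv_mul _ hDdet, Matrix.one_mul]
    have h2 : (Cᴴ)⁻¹ * S⁻¹ * (B * S) * (S⁻¹ * B⁻¹) = (Cᴴ)⁻¹ * S⁻¹ := by
      rw [show (Cᴴ)⁻¹ * S⁻¹ * (B * S) * (S⁻¹ * B⁻¹)
            = (Cᴴ)⁻¹ * S⁻¹ * B * (S * S⁻¹) * B⁻¹ by
          simp only [Matrix.mul_assoc]]
      rw [Matrix.mul_nonsing_inv S hSinv, Matrix.mul_one, Matrix.mul_assoc,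
        Matrix.mul_nonsing_inv B hz1, Matrix.mul_one]
    rw [h1, h2]
  rw [hw, hw]
  rw [← hB, ← hC]
  set X : Matrix (Fin 2) (Fin 2) ℂ := Lᴴ * ((Cᴴ)⁻¹ * S⁻¹) * L with hX
  set Y : Matrix (Fin 2) (Fin 2) ℂ := Lᴴ * (S⁻¹ * B⁻¹) * L with hY
  have hconj : (1 + J * Lᴴ * S⁻¹ * C⁻¹ * L)ᴴ = 1 - X * J := by
    rw [Matrix.conjTranspose_add, Matrix.conjTranspose_one]
    rw [show J * Lᴴ * S⁻¹ * C⁻¹ * L = J * (Lᴴ * S⁻¹ * C⁻¹ * L) by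
      simp only [Matrix.mul_assoc]]
    rw [Matrix.conjTranspose_mul, hJH]
    rw [show (Lᴴ * S⁻¹ * C⁻¹ * L)ᴴ = Lᴴ * (C⁻¹)ᴴ * (S⁻¹)ᴴ * L by
      simp only [Matrix.conjTranspose_mul, Matrix.conjTranspose_conjTranspose,
        Matrix.mul_assoc]]
    rw [hCi, hSi, hX]
    rw [Matrix.mul_neg, sub_eq_add_neg]
    congr 1
    simp only [Matrix.mul_assoc]
  rw [hconj]
  rw [show J * Lᴴ * S⁻¹ * B⁻¹ * L = J * Y by rw [hY]; simp only [Matrix.mul_assoc]]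
  have hXJY : X * J * Y = Y - X := by
    rw [hX, hY]
    rw [show Lᴴ * ((Cᴴ)⁻¹ * S⁻¹) * L * J * (Lᴴ * (S⁻¹ * B⁻¹) * L)
          = Lᴴ * ((Cᴴ)⁻¹ * S⁻¹ * (L * J * Lᴴ) * (S⁻¹ * B⁻¹)) * L by
        simp only [Matrix.mul_assoc]]
    rw [hmid, Matrix.mul_sub, Matrix.sub_mul]
  -- expand (1 - X*J) * J * (1 + J*Y) = J
  have h1 : (1 - X * J) * J = J + X := by
    rw [Matrix.sub_mul, Matrix.one_mul, Matrix.mul_assoc, hJJ, Matrix.mul_neg,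
      Matrix.mul_one, sub_neg_eq_add]
  rw [h1, Matrix.add_mul, Matrix.mul_add, Matrix.mul_add, Matrix.mul_one,
    Matrix.mul_one, ← Matrix.mul_assoc J J Y, hJJ,
    ← Matrix.mul_assoc X J Y, hXJY]
  simp only [Matrix.neg_mul, Matrix.one_mul]
  abel
end

section
/- Let $\lambda\in\mathbb{R}$, $\gamma\in(0,\infty)$, and let $\phi:(0,\infty)\to\mathbb{R}$ be differentiable with $\phi^2$ integrable on $(0,x)$ for each $x>0$. Set $S(x)=\gamma^{-1}+\int_0^x\phi(t)^2dt$, let $\Lambda(x)=(-\phi'(x),\ \phi(x))\in\mathbb{C}^{1\times 2}$, $J=\begin{pmatrix}0&1\\-1&0\end{pmatrix}$, and for $z\ne\lambda$ define $w_A(z,x) = I_2 + \tfrac{1}{S(x)(z-\lambda)}\,J\,\Lambda(x)^*\Lambda(x)$. Then for every differentiable $u:(0,\infty)\to\mathbb{C}$, every $x>0$, and every $z\ne\lambda$: $(1,0)\,w_A(z,x)\begin{pmatrix}u(x)\\u'(x)\end{pmatrix} = u(x) + \tfrac{\tilde\phi_\gamma(x)}{z-\lambda}W_x(\phi,u)$,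 where $\tilde\phi_\gamma(x)=\phi(x)/S(x)$ and $W_x(\phi,u)=\phi(x)u'(x)-\phi'(x)u(x)$. In other words, the GBDT with the $1\times1$ generalized eigenvalue $A=\lambda$ and data $\Lambda(x)=(-\phi'(x),\phi(x))$, $S(x)=\gamma^{-1}+\int_0^x\phi^2$, reproduces the double commutation transform. -/
open Set MeasureTheory Matrix

/-- the GBDT with scalar (`n = 1`) generalized eigenvalue
`A = λ`, data `Λ(x) = (-φ'(x), φ(x))`, `S(x) = γ⁻¹ + ∫_0^x φ²`, reproduces the
double commutation transform: the first entry of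
`w_A(z,x) (u(x), u'(x))ᵀ` equals `u(x) + (φ̃_γ(x)/(z-λ)) W_x(φ,u)` with
`φ̃_γ = φ/S`. -/
theorem stmt_12 (lam γ : ℝ) (hγ : 0 < γ)
    (phi : ℝ → ℝ)
    (hphi_d : ∀ x : ℝ, 0 < x → DifferentiableAt ℝ phi x)
    (hphi_int : ∀ x : ℝ, 0 < x →
      IntegrableOn (fun t => phi t ^ 2) (Set.Ioo 0 x))
    (S : ℝ → ℝ) (hS : S = fun x => γ⁻¹ + ∫ t in Set.Ioo 0 x, phi t ^ 2)
    (J : Matrix (Fin 2) (Fin 2) ℂ) (hJ : J = !![0, 1; -1, 0])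
    (L : ℝ → Matrix (Fin 1) (Fin 2) ℂ)
    (hL : L = fun x => !![(-(Complex.ofReal (deriv phi x))), Complex.ofReal (phi x)])
    (w : ℂ → ℝ → Matrix (Fin 2) (Fin 2) ℂ)
    (hw : ∀ (z : ℂ) (x : ℝ),
      w z x = 1 + (Complex.ofReal (S x) * (z - lam))⁻¹ • (J * (L x)ᴴ * L x)) :
    ∀ u : ℝ → ℂ, (∀ x : ℝ, 0 < x → DifferentiableAt ℝ u x) →
      ∀ x : ℝ, 0 < x → ∀ z : ℂ, z ≠ (lam : ℂ) →
        (w z x).mulVec ![u x, deriv u x] 0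
          = u x + ((phi x / S x : ℝ) : ℂ) / (z - lam) *
              (Complex.ofReal (phi x) * deriv u x
                - Complex.ofReal (deriv phi x) * u x) := by
  intro u hu x hx z hz
  have hSpos : 0 < S x := by
    rw [hS]
    have : 0 ≤ ∫ t in Set.Ioo 0 x, phi t ^ 2 :=
      integral_nonneg fun t => sq_nonneg _
    positivity
  have hSne : (Complex.ofReal (S x)) ≠ 0 := by
    exact_mod_cast hSpos.ne'
  have hzl : z - (lam : ℂ) ≠ 0 := sub_ne_zero.mpr hz
  rw [hw, hJ, hL]
  simp only [Matrix.add_mulVec, Matrix.smul_mulVec, Matrix.one_mulVec,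
    Pi.add_apply, Pi.smul_apply, smul_eq_mul]
  rw [show ((phi x / S x : ℝ) : ℂ) = (phi x : ℂ) / (S x : ℂ) by push_cast; ring]
  simp only [Matrix.mulVec, Matrix.mul_apply, dotProduct, Fin.sum_univ_succ,
    Fin.sum_univ_zero, Matrix.conjTranspose_apply, Complex.conj_ofReal,
    Matrix.cons_val', Matrix.cons_val_zero, Matrix.cons_val_one, Matrix.head_cons,
    Matrix.head_fin_const, Matrix.empty_val', Matrix.cons_val_fin_one, star_neg,
    Matrix.of_apply, Matrix.cons_val_succ, Complex.star_def]
  field_simp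
  ring
end

section
/- Let $\lambda\in\mathbb{R}$, $k\in\mathbb{N}_0$, and let $\rho$ be a positive Borel measure on $\mathbb{R}$ supported in $[\lambda,\infty)$ with $\int_{\mathbb{R}}(1+t^2)^{-k-1}d\rho(t)<\infty$. Let $\hat\rho$ be the measure with $d\hat\rho(t)=(t-\lambda)\,d\rho(t)$; then $\hat\rho$ is a positive measure with $\int_{\mathbb{R}}(1+t^2)^{-k-2}d\hat\rho(t)<\infty$, and there exist real numbers $a_0,a_1,a_2$ such that for every $z\in\mathbb{C}\setminus[\lambda,\infty)$: $(z-\lambda)\int_{\mathbb{R}}\Big(\tfrac{1}{t-z}-\tfrac{t}{1+t^2}\Big)\tfrac{d\rho(t)}{(1+t^2)^{k}} \;=\; (1+z^2)\int_{\mathbb{R}}\Big(\tfrac{1}{t-z}-\tfrac{t}{1+t^2}\Big)\tfrac{d\hat\rho(t)}{(1+t^2)^{k+1}} \;+\; a_0 + a_1 z + a_2 z^2$, where all integrals converge absolutely. -/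
open MeasureTheory NNReal

lemma core_id' (t z lam u v : ℂ) (hu : (1+t^2) * u = 1) (hv : (t-z) * v = 1) :
    (z - lam) * (v - t*u)
      = (1+z^2)*(t-lam)*(v - t*u)*u - (1+lam*t)*u^2 - lam*u*z + t*(t-lam)*u^2*z^2 := by
  have hA : v - t*u = u*v*(1+t*z) := by linear_combination (-v)*hu + (t*u)*hv
  have core' : (z - lam) * (u*v*(1+t*z))
      = (1+z^2)*(t-lam)*(u*v*(1+t*z))*u - (1+lam*t)*u^2 - lam*u*z + t*(t-lam)*u^2*z^2 := by
    linear_combination (-(u*v*(1+t*z)*(z-lam) + lam*z*u)) * hu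
      + (-(u^2*(1+t*z)*(1-z*t+lam*(z+t)))) * hv
  linear_combination core' + ((z-lam) - (1+z^2)*(t-lam)*u) * hA

lemma alg_id' (t z lam : ℂ) (k : ℕ) (ht : t - z ≠ 0) (h1 : (1:ℂ) + t^2 ≠ 0) :
    (z - lam) * (((t - z)⁻¹ - t/(1+t^2)) * ((1+t^2)^k)⁻¹)
    = (1+z^2) * ((t-lam) * (((t-z)⁻¹ - t/(1+t^2)) * ((1+t^2)^(k+1))⁻¹))
      + (-((1+lam*t) * ((1+t^2)^(k+2))⁻¹))
      + (-(lam * ((1+t^2)^(k+1))⁻¹)) * z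
      + (t*(t-lam) * ((1+t^2)^(k+2))⁻¹) * z^2 := by
  have hu : (1+t^2) * (1+t^2)⁻¹ = 1 := mul_inv_cancel₀ h1
  have hv : (t-z) * (t-z)⁻¹ = 1 := mul_inv_cancel₀ ht
  have core := core_id' t z lam (1+t^2)⁻¹ (t-z)⁻¹ hu hv
  simp only [div_eq_mul_inv, ← inv_pow]
  linear_combination ((1+t^2)⁻¹)^k * core

lemma Aform' (t z : ℂ) (ht : t - z ≠ 0) (h1 : 1+t^2 ≠ 0) :
    (t-z)⁻¹ - t/(1+t^2) = (1+t*z) * ((1+t^2)⁻¹ * (t-z)⁻¹) := by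
  rw [div_eq_mul_inv]
  linear_combination (-((t-z)⁻¹))*(mul_inv_cancel₀ h1) + (t*(1+t^2)⁻¹)*(mul_inv_cancel₀ ht)

lemma cintegral_ofReal' (μ : Measure ℝ) (f : ℝ → ℝ) :
    (∫ x, ((f x : ℝ) : ℂ) ∂μ) = ((∫ x, f x ∂μ : ℝ) : ℂ) := integral_ofReal

lemma pow_cancel' (x : ℝ) (j : ℕ) : (1+x^2) * ((1+x^2)^(j+1))⁻¹ = ((1+x^2)^j)⁻¹ := by
  have h : (1:ℝ)+x^2 ≠ 0 := by positivity
  rw [show ((1:ℝ)+x^2)^(j+1) = (1+x^2) * (1+x^2)^j from pow_succ' _ _,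
    mul_inv, ← mul_assoc, mul_inv_cancel₀ h, one_mul]

lemma winv_succ' (x : ℝ) (j : ℕ) :
    ((1+x^2)^(j+1))⁻¹ = (1+x^2)⁻¹ * ((1+x^2)^j)⁻¹ := by
  rw [show ((1:ℝ)+x^2)^(j+1) = (1+x^2) * (1+x^2)^j from pow_succ' _ _, mul_inv]

lemma wbound' (lam x : ℝ) (j : ℕ) (h : 0 ≤ x - lam) :
    (x - lam) * ((1+x^2)^(j+1))⁻¹ ≤ (1/2+|lam|) * ((1+x^2)^j)⁻¹ := by
  have key : x - lam ≤ (1/2+|lam|) * (1+x^2) := by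
    nlinarith [sq_nonneg (x-1), neg_abs_le lam, abs_nonneg lam, sq_nonneg x]
  calc (x - lam) * ((1+x^2)^(j+1))⁻¹
      ≤ ((1/2+|lam|) * (1+x^2)) * ((1+x^2)^(j+1))⁻¹ :=
        mul_le_mul_of_nonneg_right key (by positivity)
    _ = (1/2+|lam|) * ((1+x^2)^j)⁻¹ := by rw [mul_assoc, pow_cancel']

lemma delta_exists' (lam : ℝ) (z : ℂ) (hz : z.im ≠ 0 ∨ z.re < lam) :
    ∃ δ : ℝ, 0 < δ ∧ ∀ t : ℝ, lam ≤ t → δ ≤ ‖(t:ℂ) - z‖ := by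
  rcases hz with h | h
  · refine ⟨|z.im|, abs_pos.mpr h, fun t ht => ?_⟩
    have := Complex.abs_im_le_norm ((t:ℂ) - z)
    simpa using this
  · refine ⟨lam - z.re, by linarith, fun t ht => ?_⟩
    have h1 := Complex.abs_re_le_norm ((t:ℂ) - z)
    have h2 : ((t:ℂ) - z).re = t - z.re := by simp
    rw [h2] at h1
    have : lam - z.re ≤ |t - z.re| := by
      rw [abs_of_nonneg (by linarith)]; linarith
    linarith

lemma norm_winv' (t : ℝ) (j : ℕ) : ‖((1+(t:ℂ)^2)^j)⁻¹‖ = ((1+t^2)^j)⁻¹ := by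
  rw [show ((1+(t:ℂ)^2)^j)⁻¹ = ((((1+t^2)^j)⁻¹ : ℝ) : ℂ) from by push_cast; ring,
    Complex.norm_real, Real.norm_eq_abs, abs_of_nonneg (by positivity)]

lemma norm_A_bound' (lam : ℝ) (z : ℂ) (δ : ℝ) (hδ : 0 < δ)
    (hδ' : ∀ t : ℝ, lam ≤ t → δ ≤ ‖(t:ℂ) - z‖)
    (t : ℝ) (ht : lam ≤ t) :
    ‖((t:ℂ)-z)⁻¹ - (t:ℂ)/(1+(t:ℂ)^2)‖ ≤
      ((1 + ‖z‖ ^ 2)/δ + ‖z‖) * (1+t^2)⁻¹ := by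
  set A := ‖z‖ with hA
  have hA0 : 0 ≤ A := norm_nonneg z
  set d := ‖(t:ℂ) - z‖ with hdd
  have hd : δ ≤ d := hδ' t ht
  have hd0 : 0 < d := lt_of_lt_of_le hδ hd
  have htz : (t:ℂ) - z ≠ 0 := by
    intro h; rw [hdd, h, norm_zero] at hd0; exact lt_irrefl 0 hd0
  have h1r : (0:ℝ) < 1 + t^2 := by positivity
  have h1 : (1:ℂ) + (t:ℂ)^2 ≠ 0 := by
    intro h
    have : ((1 + t^2 : ℝ) : ℂ) = 0 := by push_cast; linear_combination h
    exact h1r.ne' (by exact_mod_cast this)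
  rw [Aform' _ _ htz h1]
  rw [norm_mul, norm_mul, norm_inv, norm_inv]
  have e1 : ‖(1:ℂ) + (t:ℂ)^2‖ = 1 + t^2 := by
    rw [show (1:ℂ) + (t:ℂ)^2 = ((1+t^2:ℝ):ℂ) by push_cast; ring, Complex.norm_real,
      Real.norm_eq_abs, abs_of_pos h1r]
  have e2 : ‖(t:ℂ) - z‖ = d := rfl
  rw [e1, e2]
  have habs : ‖(1:ℂ) + (t:ℂ)*z‖ ≤ (1 + A^2) + A * d := by
    calc ‖(1:ℂ) + (t:ℂ)*z‖ ≤ ‖(1:ℂ)‖ + ‖(t:ℂ)*z‖ := norm_add_le _ _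
      _ = 1 + ‖(t:ℂ)‖ * A := by rw [norm_one, norm_mul]
      _ ≤ 1 + (d + A) * A := by
          have : ‖(t:ℂ)‖ ≤ d + A := by
            calc ‖(t:ℂ)‖ = ‖((t:ℂ) - z) + z‖ := by ring_nf
              _ ≤ d + A := norm_add_le _ _
          nlinarith
      _ = (1 + A^2) + A * d := by ring
  calc ‖(1:ℂ) + (t:ℂ)*z‖ * ((1+t^2)⁻¹ * d⁻¹)
      ≤ ((1 + A^2) + A * d) * ((1+t^2)⁻¹ * d⁻¹) :=
        mul_le_mul_of_nonneg_right habs (by positivity)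
    _ = ((1 + A^2)/d + A) * (1+t^2)⁻¹ := by
        linear_combination (A*(1+t^2)⁻¹) * (mul_inv_cancel₀ hd0.ne')
    _ ≤ ((1 + A^2)/δ + A) * (1+t^2)⁻¹ := by
        gcongr

/-- if `ρ` is a positive Borel measure supported in `[λ,∞)` with
`∫ (1+t²)^{-(k+1)} dρ < ∞` and `dρ̂ = (t-λ) dρ`, then
`∫ (1+t²)^{-(k+2)} dρ̂ < ∞` and there are reals `a₀, a₁, a₂` such that for all
`z ∉ [λ,∞)` (all integrals converging absolutely)
`(z-λ)∫((t-z)⁻¹ - t/(1+t²))(1+t²)^{-k} dρ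
  = (1+z²)∫((t-z)⁻¹ - t/(1+t²))(1+t²)^{-(k+1)} dρ̂ + a₀ + a₁ z + a₂ z²`. -/
theorem stmt_13 (lam : ℝ) (k : ℕ) (ρ : Measure ℝ)
    (hsupp : ρ (Set.Iio lam) = 0)
    (hfin : ∫⁻ t, ENNReal.ofReal (((1 + t ^ 2) ^ (k + 1))⁻¹) ∂ρ < ⊤)
    (ρhat : Measure ℝ)
    (hρhat : ρhat = ρ.withDensity (fun t => ENNReal.ofReal (t - lam))) :
    (∫⁻ t, ENNReal.ofReal (((1 + t ^ 2) ^ (k + 2))⁻¹) ∂ρhat < ⊤) ∧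
    ∃ a₀ a₁ a₂ : ℝ, ∀ z : ℂ, (z.im ≠ 0 ∨ z.re < lam) →
      Integrable (fun t : ℝ =>
        (((t : ℂ) - z)⁻¹ - (t : ℂ) / (1 + (t : ℂ) ^ 2)) *
          ((1 + (t : ℂ) ^ 2) ^ k)⁻¹) ρ ∧
      Integrable (fun t : ℝ =>
        (((t : ℂ) - z)⁻¹ - (t : ℂ) / (1 + (t : ℂ) ^ 2)) *
          ((1 + (t : ℂ) ^ 2) ^ (k + 1))⁻¹) ρhat ∧
      (z - lam) *
          ∫ t, (((t : ℂ) - z)⁻¹ - (t : ℂ) / (1 + (t : ℂ) ^ 2)) *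
            ((1 + (t : ℂ) ^ 2) ^ k)⁻¹ ∂ρ
        = (1 + z ^ 2) *
            (∫ t, (((t : ℂ) - z)⁻¹ - (t : ℂ) / (1 + (t : ℂ) ^ 2)) *
              ((1 + (t : ℂ) ^ 2) ^ (k + 1))⁻¹ ∂ρhat)
          + a₀ + a₁ * z + a₂ * z ^ 2 := by
  have h1r : ∀ t : ℝ, (0:ℝ) < 1 + t^2 := fun t => by positivity
  have h1c : ∀ t : ℝ, (1:ℂ) + (t:ℂ)^2 ≠ 0 := by
    intro t h
    have : ((1+t^2:ℝ):ℂ) = 0 := by push_cast; linear_combination h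
    exact (h1r t).ne' (by exact_mod_cast this)
  have mc : Measurable (fun t : ℝ => (t:ℂ)) := Complex.measurable_ofReal
  have m2 : Measurable (fun t : ℝ => (1:ℂ) + (t:ℂ)^2) := measurable_const.add (mc.pow_const 2)
  have mW : ∀ j : ℕ, Measurable (fun t : ℝ => ((1+(t:ℂ)^2)^j)⁻¹) :=
    fun j => (m2.pow_const j).inv
  have mA : ∀ z : ℂ, Measurable (fun t : ℝ => ((t:ℂ)-z)⁻¹ - (t:ℂ)/(1+(t:ℂ)^2)) :=
    fun z => ((mc.sub measurable_const).inv).sub (mc.div m2)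
  have hmeasw : ∀ j : ℕ, Measurable (fun t : ℝ => ((1+t^2)^j)⁻¹) :=
    fun j => ((measurable_const.add (measurable_id.pow_const 2)).pow_const j).inv
  have hint1 : Integrable (fun t : ℝ => ((1+t^2)^(k+1))⁻¹) ρ := by
    refine ⟨(hmeasw (k+1)).aestronglyMeasurable, ?_⟩
    rw [hasFiniteIntegral_iff_ofReal (Filter.Eventually.of_forall fun t => by positivity)]
    exact hfin
  have hae : ∀ᵐ t ∂ρ, lam ≤ t := by
    rw [ae_iff]
    have : {t : ℝ | ¬ lam ≤ t} = Set.Iio lam := by ext t; simp [not_le]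
    rw [this]; exact hsupp
  have hfdens : Measurable (fun t : ℝ => Real.toNNReal (t - lam)) :=
    (measurable_id.sub measurable_const).real_toNNReal
  have hd1 : Measurable (fun t : ℝ => ENNReal.ofReal (t - lam)) :=
    (measurable_id.sub measurable_const).ennreal_ofReal
  have hg2 : Measurable (fun t : ℝ => ENNReal.ofReal (((1+t^2)^(k+2))⁻¹)) :=
    (hmeasw (k+2)).ennreal_ofReal
  constructor
  · rw [hρhat, lintegral_withDensity_eq_lintegral_mul _ hd1 hg2]
    simp only [Pi.mul_apply]
    have hb : ∀ t : ℝ, ENNReal.ofReal (t - lam) * ENNReal.ofReal (((1+t^2)^(k+2))⁻¹)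
        ≤ ENNReal.ofReal (1/2+|lam|) * ENNReal.ofReal (((1+t^2)^(k+1))⁻¹) := by
      intro t
      rcases le_or_gt (t - lam) 0 with h | h
      · rw [ENNReal.ofReal_eq_zero.mpr h, zero_mul]; exact zero_le
      · rw [← ENNReal.ofReal_mul h.le, ← ENNReal.ofReal_mul (by positivity)]
        exact ENNReal.ofReal_le_ofReal (wbound' lam t (k+1) h.le)
    calc ∫⁻ t, ENNReal.ofReal (t - lam) * ENNReal.ofReal (((1+t^2)^(k+2))⁻¹) ∂ρ
        ≤ ∫⁻ t, ENNReal.ofReal (1/2+|lam|) * ENNReal.ofReal (((1+t^2)^(k+1))⁻¹) ∂ρ :=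
          lintegral_mono hb
      _ = ENNReal.ofReal (1/2+|lam|) * ∫⁻ t, ENNReal.ofReal (((1+t^2)^(k+1))⁻¹) ∂ρ :=
          lintegral_const_mul _ ((hmeasw (k+1)).ennreal_ofReal)
      _ < ⊤ := ENNReal.mul_lt_top ENNReal.ofReal_lt_top hfin
  · -- coefficients
    have habs1 : ∀ t : ℝ, |1+lam*t| ≤ (1+|lam|)*(1+t^2) := by
      intro t
      have h1 := abs_add_le 1 (lam*t)
      have h2 := abs_mul lam t
      have h3 : |t| ≤ 1+t^2 := by nlinarith [sq_nonneg (|t|-1), abs_nonneg t, sq_abs t]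
      nlinarith [abs_nonneg lam, abs_nonneg t, (abs_one : |(1:ℝ)| = 1)]
    have habs2 : ∀ t : ℝ, |t*(t-lam)| ≤ (1+|lam|)*(1+t^2) := by
      intro t
      have h2 := abs_mul t (t-lam)
      have h3 : |t| ≤ 1+t^2 := by nlinarith [sq_nonneg (|t|-1), abs_nonneg t, sq_abs t]
      have h4 : |t-lam| ≤ |t| + |lam| := abs_sub _ _
      nlinarith [abs_nonneg lam, abs_nonneg t, abs_nonneg (t-lam), sq_abs t]
    have hIc0 : Integrable (fun t : ℝ => -((1+lam*t) * ((1+t^2)^(k+2))⁻¹)) ρ := by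
      refine (Integrable.mono' (hint1.const_mul (1+|lam|)) ?_ ?_).neg
      · exact (((measurable_const.add (measurable_const.mul measurable_id)).mul
          (hmeasw (k+2)))).aestronglyMeasurable
      · refine Filter.Eventually.of_forall fun t => ?_
        rw [Real.norm_eq_abs, abs_mul, abs_of_nonneg (show (0:ℝ) ≤ ((1+t^2)^(k+2))⁻¹ by positivity)]
        calc |1+lam*t| * ((1+t^2)^(k+2))⁻¹
            ≤ ((1+|lam|)*(1+t^2)) * ((1+t^2)^(k+2))⁻¹ :=
              mul_le_mul_of_nonneg_right (habs1 t) (by positivity)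
          _ = (1+|lam|) * ((1+t^2)^(k+1))⁻¹ := by rw [mul_assoc, pow_cancel']
    have hIc1 : Integrable (fun t : ℝ => -(lam * ((1+t^2)^(k+1))⁻¹)) ρ :=
      (hint1.const_mul lam).neg
    have hIc2 : Integrable (fun t : ℝ => t*(t-lam) * ((1+t^2)^(k+2))⁻¹) ρ := by
      refine Integrable.mono' (hint1.const_mul (1+|lam|)) ?_ ?_
      · exact ((measurable_id.mul (measurable_id.sub measurable_const)).mul
          (hmeasw (k+2))).aestronglyMeasurable
      · refine Filter.Eventually.of_forall fun t => ?_
        rw [Real.norm_eq_abs, abs_mul, abs_of_nonneg (show (0:ℝ) ≤ ((1+t^2)^(k+2))⁻¹ by positivity)]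
        calc |t*(t-lam)| * ((1+t^2)^(k+2))⁻¹
            ≤ ((1+|lam|)*(1+t^2)) * ((1+t^2)^(k+2))⁻¹ :=
              mul_le_mul_of_nonneg_right (habs2 t) (by positivity)
          _ = (1+|lam|) * ((1+t^2)^(k+1))⁻¹ := by rw [mul_assoc, pow_cancel']
    refine ⟨∫ t, -((1+lam*t) * ((1+t^2)^(k+2))⁻¹) ∂ρ,
            ∫ t, -(lam * ((1+t^2)^(k+1))⁻¹) ∂ρ,
            ∫ t, t*(t-lam) * ((1+t^2)^(k+2))⁻¹ ∂ρ, ?_⟩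
    intro z hz
    obtain ⟨δ, hδ, hδ'⟩ := delta_exists' lam z hz
    set M : ℝ := (1 + ‖z‖ ^ 2)/δ + ‖z‖ with hMdef
    have hM0 : 0 ≤ M := by
      have := norm_nonneg z
      positivity
    -- F integrable
    have hFb : ∀ᵐ (t : ℝ) ∂ρ, ‖(((t:ℂ)-z)⁻¹ - (t:ℂ)/(1+(t:ℂ)^2)) * ((1+(t:ℂ)^2)^k)⁻¹‖
        ≤ M * ((1+t^2)^(k+1))⁻¹ := by
      filter_upwards [hae] with t ht
      rw [norm_mul, norm_winv']
      calc ‖((t:ℂ)-z)⁻¹ - (t:ℂ)/(1+(t:ℂ)^2)‖ * ((1+t^2)^k)⁻¹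
          ≤ (M * (1+t^2)⁻¹) * ((1+t^2)^k)⁻¹ :=
            mul_le_mul_of_nonneg_right (norm_A_bound' lam z δ hδ hδ' t ht) (by positivity)
        _ = M * ((1+t^2)^(k+1))⁻¹ := by rw [winv_succ' t k]; ring
    have hIF : Integrable (fun t : ℝ =>
        (((t:ℂ)-z)⁻¹ - (t:ℂ)/(1+(t:ℂ)^2)) * ((1+(t:ℂ)^2)^k)⁻¹) ρ :=
      Integrable.mono' (hint1.const_mul M)
        (((mA z).mul (mW k)).aestronglyMeasurable) hFb
    -- H integrable
    have hHb : ∀ᵐ (t : ℝ) ∂ρ, ‖((t:ℂ) - (lam:ℝ)) *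
        ((((t:ℂ)-z)⁻¹ - (t:ℂ)/(1+(t:ℂ)^2)) * ((1+(t:ℂ)^2)^(k+1))⁻¹)‖
        ≤ (M * (1/2+|lam|)) * ((1+t^2)^(k+1))⁻¹ := by
      filter_upwards [hae] with t ht
      rw [norm_mul, norm_mul, norm_winv']
      have e0 : ‖(t:ℂ) - (lam:ℝ)‖ = t - lam := by
        rw [show (t:ℂ) - (lam:ℝ) = ((t - lam : ℝ):ℂ) from by push_cast; ring,
          Complex.norm_real, Real.norm_eq_abs, abs_of_nonneg (by linarith)]
      rw [e0]
      calc (t - lam) * (‖((t:ℂ)-z)⁻¹ - (t:ℂ)/(1+(t:ℂ)^2)‖ * ((1+t^2)^(k+1))⁻¹)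
          ≤ (t - lam) * ((M * (1+t^2)⁻¹) * ((1+t^2)^(k+1))⁻¹) := by
            refine mul_le_mul_of_nonneg_left ?_ (by linarith)
            exact mul_le_mul_of_nonneg_right (norm_A_bound' lam z δ hδ hδ' t ht) (by positivity)
        _ = M * ((t - lam) * ((1+t^2)^(k+2))⁻¹) := by rw [winv_succ' t (k+1)]; ring
        _ ≤ M * ((1/2+|lam|) * ((1+t^2)^(k+1))⁻¹) :=
            mul_le_mul_of_nonneg_left (wbound' lam t (k+1) (by linarith)) hM0
        _ = (M * (1/2+|lam|)) * ((1+t^2)^(k+1))⁻¹ := by ring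
    have hIH : Integrable (fun t : ℝ => ((t:ℂ) - (lam:ℝ)) *
        ((((t:ℂ)-z)⁻¹ - (t:ℂ)/(1+(t:ℂ)^2)) * ((1+(t:ℂ)^2)^(k+1))⁻¹)) ρ :=
      Integrable.mono' (hint1.const_mul (M * (1/2+|lam|)))
        (((mc.sub measurable_const).mul ((mA z).mul (mW (k+1)))).aestronglyMeasurable) hHb
    -- smul form a.e. equals H
    have hsm : ∀ᵐ (t : ℝ) ∂ρ, (Real.toNNReal (t - lam)) •
        ((((t:ℂ)-z)⁻¹ - (t:ℂ)/(1+(t:ℂ)^2)) * ((1+(t:ℂ)^2)^(k+1))⁻¹)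
        = ((t:ℂ) - (lam:ℝ)) *
        ((((t:ℂ)-z)⁻¹ - (t:ℂ)/(1+(t:ℂ)^2)) * ((1+(t:ℂ)^2)^(k+1))⁻¹) := by
      filter_upwards [hae] with t ht
      rw [NNReal.smul_def, Complex.real_smul, Real.coe_toNNReal _ (by linarith : (0:ℝ) ≤ t - lam)]
      push_cast
      ring
    have hrw : ρhat = ρ.withDensity (fun t => ((Real.toNNReal (t - lam) : ℝ≥0) : ENNReal)) := hρhat
    have hIG : Integrable (fun t : ℝ =>
        (((t:ℂ)-z)⁻¹ - (t:ℂ)/(1+(t:ℂ)^2)) * ((1+(t:ℂ)^2)^(k+1))⁻¹) ρhat := by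
      rw [hrw, integrable_withDensity_iff_integrable_smul hfdens]
      exact hIH.congr (hsm.mono fun t h => h.symm)
    have hGint : (∫ t, (((t:ℂ)-z)⁻¹ - (t:ℂ)/(1+(t:ℂ)^2)) * ((1+(t:ℂ)^2)^(k+1))⁻¹ ∂ρhat)
        = ∫ t, ((t:ℂ) - (lam:ℝ)) *
          ((((t:ℂ)-z)⁻¹ - (t:ℂ)/(1+(t:ℂ)^2)) * ((1+(t:ℂ)^2)^(k+1))⁻¹) ∂ρ := by
      rw [hrw, integral_withDensity_eq_integral_smul hfdens]
      exact integral_congr_ae hsm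
    refine ⟨hIF, hIG, ?_⟩
    rw [hGint]
    -- pointwise identity
    have key : ∀ᵐ (t : ℝ) ∂ρ, (z - (lam:ℝ)) *
        ((((t:ℂ)-z)⁻¹ - (t:ℂ)/(1+(t:ℂ)^2)) * ((1+(t:ℂ)^2)^k)⁻¹)
        = (1+z^2) * (((t:ℂ) - (lam:ℝ)) *
            ((((t:ℂ)-z)⁻¹ - (t:ℂ)/(1+(t:ℂ)^2)) * ((1+(t:ℂ)^2)^(k+1))⁻¹))
          + ((-((1+lam*t) * ((1+t^2)^(k+2))⁻¹) : ℝ) : ℂ)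
          + ((-(lam * ((1+t^2)^(k+1))⁻¹) : ℝ) : ℂ) * z
          + ((t*(t-lam) * ((1+t^2)^(k+2))⁻¹ : ℝ) : ℂ) * z^2 := by
      filter_upwards [hae] with t ht
      have htz : (t:ℂ) - z ≠ 0 := by
        intro h
        have := hδ' t ht
        rw [h, norm_zero] at this
        linarith
      have := alg_id' (t:ℂ) z (lam:ℝ) k htz (h1c t)
      push_cast
      push_cast at this
      linear_combination this
    have hIc0C : Integrable (fun t : ℝ =>
        ((-((1+lam*t) * ((1+t^2)^(k+2))⁻¹) : ℝ) : ℂ)) ρ := hIc0.ofReal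
    have hIc1C : Integrable (fun t : ℝ =>
        ((-(lam * ((1+t^2)^(k+1))⁻¹) : ℝ) : ℂ) * z) ρ := (hIc1.ofReal).mul_const z
    have hIc2C : Integrable (fun t : ℝ =>
        ((t*(t-lam) * ((1+t^2)^(k+2))⁻¹ : ℝ) : ℂ) * z^2) ρ := (hIc2.ofReal).mul_const (z^2)
    calc (z - (lam:ℝ)) * ∫ t, (((t:ℂ)-z)⁻¹ - (t:ℂ)/(1+(t:ℂ)^2)) * ((1+(t:ℂ)^2)^k)⁻¹ ∂ρ
        = ∫ t, (z - (lam:ℝ)) *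
            ((((t:ℂ)-z)⁻¹ - (t:ℂ)/(1+(t:ℂ)^2)) * ((1+(t:ℂ)^2)^k)⁻¹) ∂ρ :=
          (integral_const_mul _ _).symm
      _ = ∫ t, ((1+z^2) * (((t:ℂ) - (lam:ℝ)) *
            ((((t:ℂ)-z)⁻¹ - (t:ℂ)/(1+(t:ℂ)^2)) * ((1+(t:ℂ)^2)^(k+1))⁻¹))
          + ((-((1+lam*t) * ((1+t^2)^(k+2))⁻¹) : ℝ) : ℂ)
          + ((-(lam * ((1+t^2)^(k+1))⁻¹) : ℝ) : ℂ) * z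
          + ((t*(t-lam) * ((1+t^2)^(k+2))⁻¹ : ℝ) : ℂ) * z^2) ∂ρ := integral_congr_ae key
      _ = (1+z^2) * (∫ t, ((t:ℂ) - (lam:ℝ)) *
            ((((t:ℂ)-z)⁻¹ - (t:ℂ)/(1+(t:ℂ)^2)) * ((1+(t:ℂ)^2)^(k+1))⁻¹) ∂ρ)
          + ((∫ t, -((1+lam*t) * ((1+t^2)^(k+2))⁻¹) ∂ρ : ℝ) : ℂ)
          + ((∫ t, -(lam * ((1+t^2)^(k+1))⁻¹) ∂ρ : ℝ) : ℂ) * z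
          + ((∫ t, t*(t-lam) * ((1+t^2)^(k+2))⁻¹ ∂ρ : ℝ) : ℂ) * z^2 := by
          have hT1 : Integrable (fun t : ℝ => (1+z^2) * (((t:ℂ) - (lam:ℝ)) *
              ((((t:ℂ)-z)⁻¹ - (t:ℂ)/(1+(t:ℂ)^2)) * ((1+(t:ℂ)^2)^(k+1))⁻¹))) ρ :=
            hIH.const_mul (1+z^2)
          have hT2 : Integrable (fun t : ℝ => (1+z^2) * (((t:ℂ) - (lam:ℝ)) *
              ((((t:ℂ)-z)⁻¹ - (t:ℂ)/(1+(t:ℂ)^2)) * ((1+(t:ℂ)^2)^(k+1))⁻¹))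
              + ((-((1+lam*t) * ((1+t^2)^(k+2))⁻¹) : ℝ) : ℂ)) ρ := hT1.add hIc0C
          have hT3 : Integrable (fun t : ℝ => (1+z^2) * (((t:ℂ) - (lam:ℝ)) *
              ((((t:ℂ)-z)⁻¹ - (t:ℂ)/(1+(t:ℂ)^2)) * ((1+(t:ℂ)^2)^(k+1))⁻¹))
              + ((-((1+lam*t) * ((1+t^2)^(k+2))⁻¹) : ℝ) : ℂ)
              + ((-(lam * ((1+t^2)^(k+1))⁻¹) : ℝ) : ℂ) * z) ρ := hT2.add hIc1C
          rw [integral_add hT3 hIc2C, integral_add hT2 hIc1C, integral_add hT1 hIc0C,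
            integral_const_mul, integral_mul_const, integral_mul_const,
            cintegral_ofReal', cintegral_ofReal', cintegral_ofReal']
end

section
/- Fix $p\in[1,\infty]$, $c>0$, a real $l\ge-\tfrac12$, and $\lambda\in\mathbb{R}$. Let $q:(0,c)\to\mathbb{R}$ be measurable with $x\mapsto x\,q(x)$ in $L^p(0,c)$. Suppose $u_1:(0,c)\to\mathbb{R}$ is twice differentiable, extends continuously to $[0,c]$ with $\inf_{[0,c]}u_1>0$, its derivative $u_1'$ belongs to $L^p(0,c)$, the function $x\mapsto x\,u_1'(x)$ extends continuously to $[0,c]$ with $\lim_{x\to0}x\,u_1'(x)=0$, the function $x\mapsto u_1'(x)+x\,u_1''(x)$ belongs to $L^p(0,c)$, and $\phi(x):=x^{l+1}u_1(x)$ satisfies $-\phi''(x)+\big(\tfrac{l(l+1)}{x^2}+q(x)\big)\phi(x)=\lambda\,\phi(x)$ on $(0,c)$. Then the single commutation transform of the potential, $\tfrac{l(l+1)}{x^2}+q(x)-2\tfrac{d}{dx}\tfrac{\phi'(x)}{\phi(x)}$, equals $\tfrac{(l+1)(l+2)}{x^2}+\hat q(x)$ with $\hat q(x)=q(x)-2\tfrac{d}{dx}\tfrac{u_1'(x)}{u_1(x)}$,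 and $x\mapsto x\,\hat q(x)$ belongs to $L^p(0,c)$. -/
set_option maxHeartbeats 1000000


open Set MeasureTheory

/-- for the perturbed Bessel operator with `x q ∈ L^p(0,c)` and
regular solution `φ(x) = x^{l+1} u₁(x)` at energy `λ` (where `u₁` and `x u₁'`
lie in `W^{1,p}(0,c)`, `u₁` is bounded below by a positive constant, and
`x u₁'(x) → 0` as `x → 0`), the single commutation transform of the potential
satisfies `l(l+1)/x² + q - 2(φ'/φ)' = (l+1)(l+2)/x² + q̂` with
`q̂ = q - 2(u₁'/u₁)'` and `x q̂ ∈ L^p(0,c)`. -/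
theorem stmt_15 (p : ENNReal) (hp : 1 ≤ p) (c : ℝ) (hc : 0 < c)
    (l : ℝ) (hl : -(1 / 2) ≤ l) (lam : ℝ)
    (q : ℝ → ℝ)
    (hq : MemLp (fun x => x * q x) p (volume.restrict (Set.Ioo 0 c)))
    (u1 : ℝ → ℝ)
    (hu1_d1 : ∀ x ∈ Set.Ioo (0 : ℝ) c, DifferentiableAt ℝ u1 x)
    (hu1_d2 : ∀ x ∈ Set.Ioo (0 : ℝ) c, DifferentiableAt ℝ (deriv u1) x)
    (hu1_cont : ContinuousOn u1 (Set.Icc 0 c))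
    (hu1_pos : ∃ ε > 0, ∀ x ∈ Set.Icc (0 : ℝ) c, ε ≤ u1 x)
    (hu1' : MemLp (deriv u1) p (volume.restrict (Set.Ioo 0 c)))
    (hxu1' : ∃ g : ℝ → ℝ, ContinuousOn g (Set.Icc 0 c) ∧ g 0 = 0 ∧
      ∀ x ∈ Set.Ioo (0 : ℝ) c, g x = x * deriv u1 x)
    (hu1'' : MemLp (fun x => deriv u1 x + x * deriv (deriv u1) x) p
      (volume.restrict (Set.Ioo 0 c)))
    (phi : ℝ → ℝ) (hphi : phi = fun x => x ^ (l + 1) * u1 x)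
    (hphi_eq : ∀ x ∈ Set.Ioo (0 : ℝ) c,
      -deriv (deriv phi) x + (l * (l + 1) / x ^ 2 + q x) * phi x = lam * phi x)
    (qhat : ℝ → ℝ)
    (hqhat : qhat = fun x => q x - 2 * deriv (fun y => deriv u1 y / u1 y) x) :
    (∀ x ∈ Set.Ioo (0 : ℝ) c,
      l * (l + 1) / x ^ 2 + q x - 2 * deriv (fun y => deriv phi y / phi y) x
        = (l + 1) * (l + 2) / x ^ 2 + qhat x) ∧
    MemLp (fun x => x * qhat x) p (volume.restrict (Set.Ioo 0 c)) := by
  obtain ⟨ε, hε, hεu⟩ := hu1_pos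
  obtain ⟨g, hg_cont, hg0, hg_eq⟩ := hxu1'
  have hu1pos : ∀ x ∈ Set.Ioo (0 : ℝ) c, 0 < u1 x := fun x hx =>
    lt_of_lt_of_le hε (hεu x (Ioo_subset_Icc_self hx))
  -- derivative of phi on Ioo
  have hphi_deriv : ∀ y ∈ Set.Ioo (0 : ℝ) c,
      HasDerivAt phi ((l + 1) * y ^ l * u1 y + y ^ (l + 1) * deriv u1 y) y := by
    intro y hy
    have h1 : HasDerivAt (fun x : ℝ => x ^ (l + 1)) ((l + 1) * y ^ l) y := by
      have := Real.hasDerivAt_rpow_const (x := y) (p := l + 1) (Or.inl hy.1.ne')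
      simpa using this
    have := h1.mul (hu1_d1 y hy).hasDerivAt
    rw [hphi]
    convert this using 1
    all_goals rfl
  -- deriv of u1'/u1 at points of Ioo
  have hdiv : ∀ x ∈ Set.Ioo (0 : ℝ) c,
      HasDerivAt (fun y => deriv u1 y / u1 y)
        ((deriv (deriv u1) x * u1 x - deriv u1 x * deriv u1 x) / u1 x ^ 2) x := by
    intro x hx
    exact (hu1_d2 x hx).hasDerivAt.div (hu1_d1 x hx).hasDerivAt (hu1pos x hx).ne'
  constructor
  · intro x hx
    have hx0 : (0 : ℝ) < x := hx.1
    have hu : 0 < u1 x := hu1pos x hx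
    -- phi'/phi = (l+1)/y + u1'/u1 on Ioo
    have hquot : ∀ y ∈ Set.Ioo (0 : ℝ) c,
        deriv phi y / phi y = (l + 1) / y + deriv u1 y / u1 y := by
      intro y hy
      have hyp : (0 : ℝ) < y := hy.1
      have hyl : (0 : ℝ) < y ^ l := Real.rpow_pos_of_pos hyp l
      have hrw : y ^ (l + 1) = y ^ l * y := by
        rw [Real.rpow_add_one hyp.ne']
      rw [(hphi_deriv y hy).deriv, hphi]
      simp only
      rw [hrw]
      have huy := (hu1pos y hy).ne'
      field_simp
    have hEq : (fun y => deriv phi y / phi y) =ᶠ[nhds x]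
        (fun y => (l + 1) / y + deriv u1 y / u1 y) := by
      filter_upwards [isOpen_Ioo.mem_nhds hx] with y hy
      exact hquot y hy
    have hinv : HasDerivAt (fun y : ℝ => (l + 1) / y) (-((l + 1) / x ^ 2)) x := by
      have := (hasDerivAt_inv hx0.ne').const_mul (l + 1)
      simpa [div_eq_mul_inv, mul_comm, neg_div] using this
    have hD := hdiv x hx
    have hderiv : deriv (fun y => deriv phi y / phi y) x
        = -((l + 1) / x ^ 2)
          + (deriv (deriv u1) x * u1 x - deriv u1 x * deriv u1 x) / u1 x ^ 2 := by
      rw [hEq.deriv_eq]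
      exact (hinv.add hD).deriv
    rw [hderiv, hqhat]
    simp only
    rw [hD.deriv]
    field_simp
    ring
  · -- Memℒp part
    set A : ℝ → ℝ := fun x => (deriv u1 x + x * deriv (deriv u1) x) - deriv u1 x with hA_def
    have hA : MemLp A p (volume.restrict (Set.Ioo 0 c)) := hu1''.sub hu1'
    have hu1_asm : AEStronglyMeasurable u1 (volume.restrict (Set.Ioo 0 c)) :=
      (hu1_cont.mono Ioo_subset_Icc_self).aestronglyMeasurable measurableSet_Ioo
    have hg_asm : AEStronglyMeasurable g (volume.restrict (Set.Ioo 0 c)) :=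
      (hg_cont.mono Ioo_subset_Icc_self).aestronglyMeasurable measurableSet_Ioo
    -- T1 = A / u1
    have hT1 : MemLp (fun x => A x / u1 x) p (volume.restrict (Set.Ioo 0 c)) := by
      refine hA.of_le_mul (c := ε⁻¹) ((hA.aestronglyMeasurable.aemeasurable.div hu1_asm.aemeasurable).aestronglyMeasurable) ?_
      rw [ae_restrict_iff' measurableSet_Ioo]
      refine ae_of_all _ fun x hx => ?_
      have hu : 0 < u1 x := hu1pos x hx
      have hεu' : ε ≤ u1 x := hεu x (Ioo_subset_Icc_self hx)
      rw [Real.norm_eq_abs, Real.norm_eq_abs, abs_div, abs_of_pos hu]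
      rw [div_le_iff₀ hu]
      calc |A x| = ε⁻¹ * |A x| * ε := by
            rw [mul_comm ε⁻¹, mul_assoc, inv_mul_cancel₀ hε.ne', mul_one]
        _ ≤ ε⁻¹ * |A x| * u1 x := by
            apply mul_le_mul_of_nonneg_left hεu'
            positivity
    -- T2 = g * u1' / (u1*u1)
    obtain ⟨C, hC⟩ := isCompact_Icc.exists_bound_of_continuousOn hg_cont
    have hC' : ∀ x ∈ Set.Icc (0:ℝ) c, |g x| ≤ C := fun x hx => by
      simpa [Real.norm_eq_abs] using hC x hx
    have hT2 : MemLp (fun x => g x * deriv u1 x / (u1 x * u1 x)) p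
        (volume.restrict (Set.Ioo 0 c)) := by
      refine hu1'.of_le_mul (c := C / (ε * ε))
        (((hg_asm.aemeasurable.mul hu1'.aestronglyMeasurable.aemeasurable).div (hu1_asm.aemeasurable.mul hu1_asm.aemeasurable)).aestronglyMeasurable) ?_
      rw [ae_restrict_iff' measurableSet_Ioo]
      refine ae_of_all _ fun x hx => ?_
      have hu : 0 < u1 x := hu1pos x hx
      have hεu' : ε ≤ u1 x := hεu x (Ioo_subset_Icc_self hx)
      have hgb : |g x| ≤ C := hC' x (Ioo_subset_Icc_self hx)
      rw [Real.norm_eq_abs, Real.norm_eq_abs, abs_div, abs_mul,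
        abs_of_pos (mul_pos hu hu), div_mul_eq_mul_div]
      exact div_le_div₀ (mul_nonneg (le_trans (abs_nonneg _) hgb) (abs_nonneg _)) (mul_le_mul_of_nonneg_right hgb (abs_nonneg _))
        (by positivity) (mul_le_mul hεu' hεu' hε.le hu.le)
    have hF : MemLp (fun x => x * q x - 2 * (A x / u1 x)
        + 2 * (g x * deriv u1 x / (u1 x * u1 x))) p (volume.restrict (Set.Ioo 0 c)) :=
      (hq.sub (hT1.const_mul 2)).add (hT2.const_mul 2)
    refine hF.ae_eq ?_
    rw [Filter.EventuallyEq, ae_restrict_iff' measurableSet_Ioo]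
    refine ae_of_all _ fun x hx => ?_
    have hu : 0 < u1 x := hu1pos x hx
    rw [hqhat]
    simp only [hA_def]
    rw [(hdiv x hx).deriv, hg_eq x hx]
    field_simp
    ring
end

section
/- Let $\mu\in\mathbb{C}\setminus\mathbb{R}$, $d\in\mathbb{R}$, and set $\omega=\mathrm{i}\sqrt{\mu}$ (principal branch, $\mathrm{Im}\sqrt{\mu}>0$), $c_1=1+\tfrac{d}{\omega}$, $c_2=1-\tfrac{d}{\omega}$, $c_3=\tfrac{c_1}{2\omega}$, $c_4=\tfrac{d}{2\omega^3}$, $c_5=-\tfrac{c_2}{2\omega}$. Define $\Lambda_2:[0,\infty)\to\mathbb{C}^2$ by $\Lambda_2(x)=\tfrac12\Big(\mathrm{e}^{-\omega x}\begin{pmatrix}c_3x+c_4\\ c_1\end{pmatrix}+\mathrm{e}^{\omega x}\begin{pmatrix}c_5x-c_4\\ c_2\end{pmatrix}\Big)$ and $S(x)=\int_0^x\Lambda_2(t)\Lambda_2(t)^*\,dt\in\mathbb{C}^{2\times2}$. Then $\det S(x)=\tfrac{x^6}{45}\,(1+O(x))$ as $x\downarrow0$; in particular $S(x)$ is positive definite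 for all sufficiently small $x>0$. -/
open Set MeasureTheory Matrix Asymptotics Topology ComplexOrder

lemma expb3 (z : ℂ) (hz : ‖z‖ ≤ 1) : ‖Complex.exp z - (1 + z + z^2/2)‖ ≤ ‖z‖^3 := by
  have h := Complex.exp_bound (x := z) (by simpa using hz) (n := 3) (by norm_num)
  have h2 : (∑ m ∈ Finset.range 3, z ^ m / m.factorial) = 1 + z + z^2/2 := by
    simp [Finset.sum_range_succ, Nat.factorial]
  rw [h2] at h
  have h' : ‖Complex.exp z - (1 + z + z ^ 2 / 2)‖ ≤ ‖z‖ ^ 3 * (4 * (3⁻¹ * 6⁻¹)) := by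
    simpa [Nat.factorial] using h
  nlinarith [pow_nonneg (norm_nonneg z) 3]

lemma expb1 (z : ℂ) (hz : ‖z‖ ≤ 1) : ‖Complex.exp z - 1‖ ≤ 2 * ‖z‖ := by
  have h := Complex.exp_bound (x := z) (by simpa using hz) (n := 1) (by norm_num)
  have h2 : (∑ m ∈ Finset.range 1, z ^ m / m.factorial) = 1 := by simp
  rw [h2] at h
  have h' : ‖Complex.exp z - 1‖ ≤ ‖z‖ * 2 := by
    simpa [Nat.factorial] using h
  linarith [norm_nonneg z]

lemma posDef_fin_two (M : Matrix (Fin 2) (Fin 2) ℂ) (hM : M.IsHermitian)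
    (h00 : 0 < (M 0 0).re) (hdet : 0 < M.det.re) : M.PosDef := by
  refine Matrix.posDef_iff_dotProduct_mulVec.mpr ⟨hM, fun v hv => ?_⟩
  have ha : (starRingEnd ℂ) (M 0 0) = M 0 0 := hM.apply 0 0
  have hd : (starRingEnd ℂ) (M 1 1) = M 1 1 := hM.apply 1 1
  have hb : M 1 0 = (starRingEnd ℂ) (M 0 1) := (hM.apply 1 0).symm
  set a := M 0 0 with ha'
  set b := M 0 1 with hb'
  set dd := M 1 1 with hd'
  have hdet2 : M.det = a * dd - b * (starRingEnd ℂ) b := by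
    rw [Matrix.det_fin_two, hb]
  set X : ℂ := a * v 0 + b * v 1 with hX
  have q_eq : dotProduct (star v) (M *ᵥ v)
      = (starRingEnd ℂ) (v 0) * (a * v 0 + b * v 1)
        + (starRingEnd ℂ) (v 1) * ((starRingEnd ℂ) b * v 0 + dd * v 1) := by
    simp only [dotProduct, Matrix.mulVec, Fin.sum_univ_two, Pi.star_apply, RCLike.star_def, hb]
    rfl
  have key : a * (dotProduct (star v) (M *ᵥ v))
      = (Complex.normSq X : ℂ) + M.det * (Complex.normSq (v 1) : ℂ) := by
    rw [q_eq, hdet2, ← Complex.mul_conj, ← Complex.mul_conj, hX]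
    simp only [map_add, _root_.map_mul, ha]
    ring
  have hdet_im : M.det = (M.det.re : ℂ) := by
    have h2 : (starRingEnd ℂ) M.det = M.det := by
      rw [hdet2]
      simp only [map_sub, _root_.map_mul, ha, hd, Complex.conj_conj]
      ring
    rw [Complex.conj_eq_iff_re] at h2; exact h2.symm
  have ha_real : a = (a.re : ℂ) := by
    rw [Complex.conj_eq_iff_re] at ha; exact ha.symm
  have ha0 : a.re ≠ 0 := ne_of_gt h00
  have hr : 0 < Complex.normSq X + M.det.re * Complex.normSq (v 1) := by
    rcases eq_or_ne (v 1) 0 with h1 | h1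
    · have h0 : v 0 ≠ 0 := by
        intro h0; apply hv; funext i; fin_cases i <;> assumption
      have hX0 : X ≠ 0 := by
        rw [hX, h1, mul_zero, add_zero]
        exact mul_ne_zero (by intro h; rw [h] at h00; simp at h00) h0
      have := Complex.normSq_pos.mpr hX0
      simp [h1]; positivity
    · have h2 := Complex.normSq_pos.mpr h1
      nlinarith [Complex.normSq_nonneg X]
  set r : ℝ := Complex.normSq X + M.det.re * Complex.normSq (v 1) with hrdef
  have key2 : (a.re : ℂ) * (dotProduct (star v) (M *ᵥ v)) = (r : ℂ) := by
    rw [← ha_real, key, hdet_im, hrdef]; push_cast; ring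
  have qval : dotProduct (star v) (M *ᵥ v) = ((r / a.re : ℝ) : ℂ) := by
    have hne : (a.re : ℂ) ≠ 0 := by exact_mod_cast ha0
    rw [Complex.ofReal_div, eq_div_iff hne]
    linear_combination key2
  rw [qval, Complex.lt_def]
  refine ⟨by simpa using div_pos hr h00, by simp⟩

lemma key_est (h : ℝ → ℂ) (hcont : Continuous h) (n : ℕ) (c : ℂ) (C x : ℝ)
    (hx : 0 ≤ x) (hC : 0 ≤ C)
    (hb : ∀ t ∈ Set.Ioc (0:ℝ) x, ‖h t - c * (t:ℂ)^n‖ ≤ C * t^(n+1)) :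
    ‖(∫ t in Set.Ioo (0:ℝ) x, h t) - c * (x:ℂ)^(n+1)/(n+1)‖ ≤ C * x^(n+2)/(n+2) := by
  rw [← integral_Ioc_eq_integral_Ioo, ← intervalIntegral.integral_of_le hx]
  have hpowint : (∫ t in (0:ℝ)..x, ((t:ℂ)^n)) = (x:ℂ)^(n+1)/(n+1) := by
    simp_rw [← Complex.ofReal_pow]
    rw [intervalIntegral.integral_ofReal, integral_pow]
    push_cast; ring
  have hpoly : (∫ t in (0:ℝ)..x, (c * (t:ℂ)^n)) = c * (x:ℂ)^(n+1)/(n+1) := by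
    rw [intervalIntegral.integral_const_mul, hpowint]; ring
  have hint1 : IntervalIntegrable h volume 0 x := hcont.intervalIntegrable 0 x
  have hint2 : IntervalIntegrable (fun t : ℝ => c * (t:ℂ)^n) volume 0 x := by
    apply Continuous.intervalIntegrable; fun_prop
  rw [← hpoly, ← intervalIntegral.integral_sub hint1 hint2]
  have hgint : IntervalIntegrable (fun t : ℝ => C * t^(n+1)) volume 0 x := by
    apply Continuous.intervalIntegrable; fun_prop
  have hbd := intervalIntegral.norm_integral_le_abs_of_norm_le (μ := volume) (f := fun t => h t - c * (t:ℂ)^n)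
      (g := fun t => C * t^(n+1)) (a := 0) (b := x) ?_ hgint
  · refine hbd.trans ?_
    rw [intervalIntegral.integral_const_mul, integral_pow]
    have h0 : (0:ℝ)^(n+1+1) = 0 := zero_pow (Nat.succ_ne_zero _)
    rw [h0, sub_zero, abs_of_nonneg (by positivity)]
    push_cast; apply le_of_eq; ring
  · rw [Set.uIoc_of_le hx]
    exact (ae_restrict_iff' measurableSet_Ioc).mpr (ae_of_all _ hb)

set_option maxHeartbeats 2000000 in
theorem stmt_16 (μ : ℂ) (hμ : μ.im ≠ 0) (d : ℝ)
    (sq : ℂ) (hsq : sq ^ 2 = μ) (hsq_im : 0 < sq.im)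
    (ω c1 c2 c3 c4 c5 : ℂ)
    (hω : ω = Complex.I * sq)
    (hc1 : c1 = 1 + (d : ℂ) / ω) (hc2 : c2 = 1 - (d : ℂ) / ω)
    (hc3 : c3 = c1 / (2 * ω)) (hc4 : c4 = (d : ℂ) / (2 * ω ^ 3))
    (hc5 : c5 = -(c2 / (2 * ω)))
    (L2 : ℝ → Fin 2 → ℂ)
    (hL2 : L2 = fun (x : ℝ) (i : Fin 2) =>
      (1 / 2 : ℂ) * (Complex.exp (-ω * (x : ℂ)) * ![c3 * (x : ℂ) + c4, c1] i
        + Complex.exp (ω * (x : ℂ)) * ![c5 * (x : ℂ) - c4, c2] i))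
    (S : ℝ → Matrix (Fin 2) (Fin 2) ℂ)
    (hS : S = fun x => Matrix.of fun i j =>
      ∫ t in Set.Ioo 0 x, L2 t i * (starRingEnd ℂ) (L2 t j)) :
    (fun x : ℝ => (S x).det - (x : ℂ) ^ 6 / 45)
      =O[𝓝[>] (0 : ℝ)] (fun x : ℝ => x ^ 7) ∧
    ∃ δ > 0, ∀ x ∈ Set.Ioo (0 : ℝ) δ, (S x).PosDef := by
  have hsq0 : sq ≠ 0 := fun h => by simp [h] at hsq_im
  have hω0 : ω ≠ 0 := by rw [hω]; exact mul_ne_zero Complex.I_ne_zero hsq0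
  -- pointwise formulas
  have hF : ∀ t : ℝ, L2 t 0
      = (1/2:ℂ) * (Complex.exp (-ω*t) * (c3*t + c4) + Complex.exp (ω*t) * (c5*t - c4)) := by
    intro t; rw [hL2]; simp
  have hG : ∀ t : ℝ, L2 t 1
      = (1/2:ℂ) * (Complex.exp (-ω*t) * c1 + Complex.exp (ω*t) * c2) := by
    intro t; rw [hL2]; simp
  have cF : Continuous (fun t : ℝ => L2 t 0) := by
    have e : (fun t : ℝ => L2 t 0) = fun t : ℝ =>
        (1/2:ℂ) * (Complex.exp (-ω*t) * (c3*t + c4) + Complex.exp (ω*t) * (c5*t - c4)) :=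
      funext hF
    rw [e]; fun_prop
  have cG : Continuous (fun t : ℝ => L2 t 1) := by
    have e : (fun t : ℝ => L2 t 1) = fun t : ℝ =>
        (1/2:ℂ) * (Complex.exp (-ω*t) * c1 + Complex.exp (ω*t) * c2) := funext hG
    rw [e]; fun_prop
  -- constants
  obtain ⟨Cf, hCf⟩ : ∃ C : ℝ, C = |d|/4 + ‖ω‖^3 * (‖c3‖ + ‖c5‖ + 2*‖c4‖) + 1 := ⟨_, rfl⟩
  obtain ⟨Cg, hCg⟩ : ∃ C : ℝ, C = ‖ω‖*(‖c1‖ + ‖c2‖) + 1 := ⟨_, rfl⟩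
  have hCf0 : 0 < Cf := by rw [hCf]; positivity
  have hCg0 : 0 < Cg := by rw [hCg]; positivity
  obtain ⟨δ₀, hδ₀⟩ : ∃ δ : ℝ, δ = min 1 (1/(‖ω‖+1)) := ⟨_, rfl⟩
  have hδ₀0 : 0 < δ₀ := by rw [hδ₀]; exact lt_min one_pos (by positivity)
  have hδ₀1 : δ₀ ≤ 1 := by rw [hδ₀]; exact min_le_left _ _
  have hωb : ∀ t : ℝ, 0 ≤ t → t ≤ δ₀ → ‖ω * (t:ℂ)‖ ≤ 1 := by
    intro t ht0 ht1
    rw [norm_mul, Complex.norm_real, Real.norm_eq_abs, abs_of_nonneg ht0]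
    have h1 : t ≤ 1/(‖ω‖+1) := by rw [hδ₀] at ht1; exact le_trans ht1 (min_le_right _ _)
    calc ‖ω‖ * t ≤ ‖ω‖ * (1/(‖ω‖+1)) := by gcongr
      _ ≤ 1 := by
          rw [mul_one_div, div_le_one (by positivity)]
          linarith [norm_nonneg ω]
  -- key identity for F
  have keyF : ∀ t : ℝ, L2 t 0 + (t:ℂ)^2/2
      = ((d:ℂ)/4)*(t:ℂ)^3 + (1/2:ℂ)*((Complex.exp (-ω*t) - (1 + (-ω*t) + (-ω*t)^2/2))*(c3*t + c4)
        + (Complex.exp (ω*t) - (1 + ω*t + (ω*t)^2/2))*(c5*t - c4)) := by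
    intro t
    rw [hF t, hc3, hc4, hc5, hc2, hc1]
    have h5 : ω^5 * ω⁻¹^5 = 1 := by field_simp
    field_simp
    ring
  have keyG : ∀ t : ℝ, L2 t 1 - 1
      = (1/2:ℂ)*(c1*(Complex.exp (-ω*t) - 1) + c2*(Complex.exp (ω*t) - 1)) := by
    intro t
    have hc12 : c1 + c2 = 2 := by rw [hc1, hc2]; ring
    rw [hG t]
    linear_combination (1/2:ℂ) * hc12
  -- norm bound for F
  have hFb : ∀ t ∈ Set.Ioc (0:ℝ) δ₀, ‖L2 t 0 + (t:ℂ)^2/2‖ ≤ Cf * t^3 := by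
    intro t ht
    obtain ⟨ht0, ht1⟩ := ht
    have ht0' : (0:ℝ) ≤ t := le_of_lt ht0
    have htle1 : t ≤ 1 := le_trans ht1 hδ₀1
    have hnt : ‖(t:ℂ)‖ = t := by
      rw [Complex.norm_real, Real.norm_eq_abs, abs_of_nonneg ht0']
    have hz1 : ‖Complex.exp (-ω*t) - (1 + (-ω*t) + (-ω*t)^2/2)‖ ≤ (‖ω‖*t)^3 := by
      have hb := expb3 (-ω*(t:ℂ)) (by rw [neg_mul, norm_neg]; exact hωb t ht0' ht1)
      calc ‖Complex.exp (-ω*t) - (1 + (-ω*t) + (-ω*t)^2/2)‖ ≤ ‖-ω*(t:ℂ)‖^3 := hb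
        _ = (‖ω‖*t)^3 := by rw [neg_mul, norm_neg, norm_mul, hnt]
    have hz2 : ‖Complex.exp (ω*t) - (1 + ω*t + (ω*t)^2/2)‖ ≤ (‖ω‖*t)^3 := by
      have hb := expb3 (ω*(t:ℂ)) (hωb t ht0' ht1)
      calc ‖Complex.exp (ω*t) - (1 + ω*t + (ω*t)^2/2)‖ ≤ ‖ω*(t:ℂ)‖^3 := hb
        _ = (‖ω‖*t)^3 := by rw [norm_mul, hnt]
    have e34 : ‖c3*(t:ℂ) + c4‖ ≤ ‖c3‖ + ‖c4‖ := by
      refine (norm_add_le _ _).trans ?_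
      rw [norm_mul, hnt]
      nlinarith [norm_nonneg c3]
    have e54 : ‖c5*(t:ℂ) - c4‖ ≤ ‖c5‖ + ‖c4‖ := by
      refine (norm_sub_le _ _).trans ?_
      rw [norm_mul, hnt]
      nlinarith [norm_nonneg c5]
    rw [keyF t]
    have e1 : ‖((d:ℂ)/4)*(t:ℂ)^3‖ = |d|/4 * t^3 := by
      rw [norm_mul, norm_div, norm_pow, hnt, Complex.norm_real, Real.norm_eq_abs]
      norm_num
    have e2 : ‖(1/2:ℂ)*((Complex.exp (-ω*t) - (1 + (-ω*t) + (-ω*t)^2/2))*(c3*t + c4)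
        + (Complex.exp (ω*t) - (1 + ω*t + (ω*t)^2/2))*(c5*t - c4))‖
        ≤ (1/2) * ((‖ω‖*t)^3 * (‖c3‖ + ‖c4‖) + (‖ω‖*t)^3 * (‖c5‖ + ‖c4‖)) := by
      rw [norm_mul]
      have h12 : ‖(1/2:ℂ)‖ = 1/2 := by norm_num
      rw [h12]
      gcongr (1/2) * ?_
      refine (norm_add_le _ _).trans ?_
      rw [norm_mul, norm_mul]
      exact add_le_add (mul_le_mul hz1 e34 (norm_nonneg _) (by positivity))
        (mul_le_mul hz2 e54 (norm_nonneg _) (by positivity))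
    refine (norm_add_le _ _).trans ?_
    rw [e1]
    refine (add_le_add le_rfl e2).trans ?_
    rw [hCf]
    have ht3 : (0:ℝ) < t^3 := by positivity
    have e3 : (‖ω‖*t)^3 = ‖ω‖^3*t^3 := mul_pow _ _ _
    rw [e3]
    have hXnn : 0 ≤ ‖ω‖^3*t^3*(‖c3‖ + ‖c5‖ + 2*‖c4‖) := by positivity
    nlinarith [hXnn, ht3]
  -- norm bound for G
  have hGb : ∀ t ∈ Set.Ioc (0:ℝ) δ₀, ‖L2 t 1 - 1‖ ≤ Cg * t := by
    intro t ht
    obtain ⟨ht0, ht1⟩ := ht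
    have ht0' : (0:ℝ) ≤ t := le_of_lt ht0
    have hnt : ‖(t:ℂ)‖ = t := by
      rw [Complex.norm_real, Real.norm_eq_abs, abs_of_nonneg ht0']
    have hz1 : ‖Complex.exp (-ω*t) - 1‖ ≤ 2*(‖ω‖*t) := by
      have hb := expb1 (-ω*(t:ℂ)) (by rw [neg_mul, norm_neg]; exact hωb t ht0' ht1)
      calc ‖Complex.exp (-ω*t) - 1‖ ≤ 2*‖-ω*(t:ℂ)‖ := hb
        _ = 2*(‖ω‖*t) := by rw [neg_mul, norm_neg, norm_mul, hnt]
    have hz2 : ‖Complex.exp (ω*t) - 1‖ ≤ 2*(‖ω‖*t) := by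
      have hb := expb1 (ω*(t:ℂ)) (hωb t ht0' ht1)
      calc ‖Complex.exp (ω*t) - 1‖ ≤ 2*‖ω*(t:ℂ)‖ := hb
        _ = 2*(‖ω‖*t) := by rw [norm_mul, hnt]
    rw [keyG t]
    have e2 : ‖(1/2:ℂ)*(c1*(Complex.exp (-ω*t) - 1) + c2*(Complex.exp (ω*t) - 1))‖
        ≤ (1/2) * (‖c1‖ * (2*(‖ω‖*t)) + ‖c2‖ * (2*(‖ω‖*t))) := by
      rw [norm_mul]
      have h12 : ‖(1/2:ℂ)‖ = 1/2 := by norm_num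
      rw [h12]
      gcongr (1/2) * ?_
      refine (norm_add_le _ _).trans ?_
      rw [norm_mul, norm_mul]
      exact add_le_add (mul_le_mul_of_nonneg_left hz1 (norm_nonneg _))
        (mul_le_mul_of_nonneg_left hz2 (norm_nonneg _))
    refine e2.trans ?_
    rw [hCg]
    ring_nf
    nlinarith [ht0, norm_nonneg c1, norm_nonneg c2, norm_nonneg ω]
  -- crude norms
  have hFn : ∀ t ∈ Set.Ioc (0:ℝ) δ₀, ‖L2 t 0‖ ≤ (1/2 + Cf) * t^2 := by
    intro t ht
    obtain ⟨ht0, ht1⟩ := ht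
    have ht0' : (0:ℝ) ≤ t := le_of_lt ht0
    have htle1 : t ≤ 1 := le_trans ht1 hδ₀1
    have hnt : ‖(t:ℂ)^2/2‖ = t^2/2 := by
      rw [norm_div, norm_pow, Complex.norm_real, Real.norm_eq_abs, abs_of_nonneg ht0']
      norm_num
    calc ‖L2 t 0‖ = ‖(L2 t 0 + (t:ℂ)^2/2) - (t:ℂ)^2/2‖ := by ring_nf
      _ ≤ ‖L2 t 0 + (t:ℂ)^2/2‖ + ‖(t:ℂ)^2/2‖ := norm_sub_le _ _
      _ ≤ Cf * t^3 + t^2/2 := by rw [hnt]; exact add_le_add (hFb t ⟨ht0, ht1⟩) le_rfl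
      _ ≤ (1/2 + Cf) * t^2 := by
          have h32 : t^3 ≤ t^2 := pow_le_pow_of_le_one ht0' htle1 (by norm_num)
          nlinarith [mul_le_mul_of_nonneg_left h32 hCf0.le]
  have hGn : ∀ t ∈ Set.Ioc (0:ℝ) δ₀, ‖L2 t 1‖ ≤ 1 + Cg := by
    intro t ht
    obtain ⟨ht0, ht1⟩ := ht
    have htle1 : t ≤ 1 := le_trans ht1 hδ₀1
    calc ‖L2 t 1‖ = ‖(L2 t 1 - 1) + 1‖ := by ring_nf
      _ ≤ ‖L2 t 1 - 1‖ + ‖(1:ℂ)‖ := norm_add_le _ _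
      _ ≤ Cg * t + 1 := by rw [norm_one]; exact add_le_add (hGb t ⟨ht0, ht1⟩) le_rfl
      _ ≤ 1 + Cg := by nlinarith [hCg0]
  -- pointwise product bounds
  obtain ⟨C00, hC00⟩ : ∃ C : ℝ, C = Cf*(1/2 + Cf) + Cf/2 := ⟨_, rfl⟩
  obtain ⟨C01, hC01⟩ : ∃ C : ℝ, C = Cf*(1 + Cg) + Cg/2 := ⟨_, rfl⟩
  obtain ⟨C11, hC11⟩ : ∃ C : ℝ, C = Cg*(1 + Cg) + Cg := ⟨_, rfl⟩
  have hC000 : 0 < C00 := by rw [hC00]; positivity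
  have hC010 : 0 < C01 := by rw [hC01]; positivity
  have hC110 : 0 < C11 := by rw [hC11]; positivity
  have hP00 : ∀ t ∈ Set.Ioc (0:ℝ) δ₀,
      ‖L2 t 0 * (starRingEnd ℂ) (L2 t 0) - (1/4:ℂ)*(t:ℂ)^4‖ ≤ C00 * t^5 := by
    intro t ht
    obtain ⟨ht0, ht1⟩ := ht
    have ht0' : (0:ℝ) ≤ t := le_of_lt ht0
    have id00 : L2 t 0 * (starRingEnd ℂ) (L2 t 0) - (1/4:ℂ)*(t:ℂ)^4
        = (L2 t 0 + (t:ℂ)^2/2) * (starRingEnd ℂ) (L2 t 0)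
          + (-((t:ℂ)^2)/2) * (starRingEnd ℂ) (L2 t 0 + (t:ℂ)^2/2) := by
      simp only [map_add, map_div₀, map_pow, map_neg, _root_.map_mul, Complex.conj_ofReal, map_ofNat]
      ring
    rw [id00]
    have hnt2 : ‖(-((t:ℂ)^2)/2)‖ = t^2/2 := by
      rw [norm_div, norm_neg, norm_pow, Complex.norm_real, Real.norm_eq_abs, abs_of_nonneg ht0']
      norm_num
    calc ‖_ + _‖ ≤ ‖(L2 t 0 + (t:ℂ)^2/2) * (starRingEnd ℂ) (L2 t 0)‖
          + ‖(-((t:ℂ)^2)/2) * (starRingEnd ℂ) (L2 t 0 + (t:ℂ)^2/2)‖ := norm_add_le _ _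
      _ = ‖L2 t 0 + (t:ℂ)^2/2‖ * ‖L2 t 0‖ + (t^2/2) * ‖L2 t 0 + (t:ℂ)^2/2‖ := by
          rw [norm_mul, norm_mul, hnt2, RCLike.norm_conj, RCLike.norm_conj]
      _ ≤ (Cf * t^3) * ((1/2 + Cf) * t^2) + (t^2/2) * (Cf * t^3) := by
          refine add_le_add (mul_le_mul (hFb t ⟨ht0, ht1⟩) (hFn t ⟨ht0, ht1⟩)
            (norm_nonneg _) (by positivity)) ?_
          exact mul_le_mul_of_nonneg_left (hFb t ⟨ht0, ht1⟩) (by positivity)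
      _ ≤ C00 * t^5 := by rw [hC00]; ring_nf; nlinarith [hCf0]
  have hP01 : ∀ t ∈ Set.Ioc (0:ℝ) δ₀,
      ‖L2 t 0 * (starRingEnd ℂ) (L2 t 1) - (-(1/2):ℂ)*(t:ℂ)^2‖ ≤ C01 * t^3 := by
    intro t ht
    obtain ⟨ht0, ht1⟩ := ht
    have ht0' : (0:ℝ) ≤ t := le_of_lt ht0
    have id01 : L2 t 0 * (starRingEnd ℂ) (L2 t 1) - (-(1/2):ℂ)*(t:ℂ)^2
        = (L2 t 0 + (t:ℂ)^2/2) * (starRingEnd ℂ) (L2 t 1)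
          + (-((t:ℂ)^2)/2) * (starRingEnd ℂ) (L2 t 1 - 1) := by
      simp only [map_add, map_sub, map_div₀, map_pow, map_neg, _root_.map_mul, Complex.conj_ofReal,
        map_ofNat, _root_.map_one]
      ring
    rw [id01]
    have hnt2 : ‖(-((t:ℂ)^2)/2)‖ = t^2/2 := by
      rw [norm_div, norm_neg, norm_pow, Complex.norm_real, Real.norm_eq_abs, abs_of_nonneg ht0']
      norm_num
    calc ‖_ + _‖ ≤ ‖(L2 t 0 + (t:ℂ)^2/2) * (starRingEnd ℂ) (L2 t 1)‖
          + ‖(-((t:ℂ)^2)/2) * (starRingEnd ℂ) (L2 t 1 - 1)‖ := norm_add_le _ _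
      _ = ‖L2 t 0 + (t:ℂ)^2/2‖ * ‖L2 t 1‖ + (t^2/2) * ‖L2 t 1 - 1‖ := by
          rw [norm_mul, norm_mul, hnt2, RCLike.norm_conj, RCLike.norm_conj]
      _ ≤ (Cf * t^3) * (1 + Cg) + (t^2/2) * (Cg * t) := by
          refine add_le_add (mul_le_mul (hFb t ⟨ht0, ht1⟩) (hGn t ⟨ht0, ht1⟩)
            (norm_nonneg _) (by positivity)) ?_
          exact mul_le_mul_of_nonneg_left (hGb t ⟨ht0, ht1⟩) (by positivity)
      _ ≤ C01 * t^3 := by rw [hC01]; ring_nf; nlinarith [hCf0, hCg0]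
  have hP11 : ∀ t ∈ Set.Ioc (0:ℝ) δ₀,
      ‖L2 t 1 * (starRingEnd ℂ) (L2 t 1) - (1:ℂ)*(t:ℂ)^0‖ ≤ C11 * t^1 := by
    intro t ht
    obtain ⟨ht0, ht1⟩ := ht
    have id11 : L2 t 1 * (starRingEnd ℂ) (L2 t 1) - (1:ℂ)*(t:ℂ)^0
        = (L2 t 1 - 1) * (starRingEnd ℂ) (L2 t 1) + (starRingEnd ℂ) (L2 t 1 - 1) := by
      simp only [map_sub, _root_.map_one, pow_zero, mul_one, one_mul]
      ring
    rw [id11]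
    calc ‖_ + _‖ ≤ ‖(L2 t 1 - 1) * (starRingEnd ℂ) (L2 t 1)‖
          + ‖(starRingEnd ℂ) (L2 t 1 - 1)‖ := norm_add_le _ _
      _ = ‖L2 t 1 - 1‖ * ‖L2 t 1‖ + ‖L2 t 1 - 1‖ := by
          rw [norm_mul, RCLike.norm_conj, RCLike.norm_conj]
      _ ≤ (Cg * t) * (1 + Cg) + Cg * t := by
          exact add_le_add (mul_le_mul (hGb t ⟨ht0, ht1⟩) (hGn t ⟨ht0, ht1⟩)
            (norm_nonneg _) (by positivity)) (hGb t ⟨ht0, ht1⟩)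
      _ ≤ C11 * t^1 := by rw [hC11]; ring_nf; nlinarith [hCg0, ht0]
  -- continuity of integrands
  have cconjF : Continuous (fun t : ℝ => (starRingEnd ℂ) (L2 t 0)) :=
    Complex.continuous_conj.comp cF
  have cconjG : Continuous (fun t : ℝ => (starRingEnd ℂ) (L2 t 1)) :=
    Complex.continuous_conj.comp cG
  have c00c : Continuous (fun t : ℝ => L2 t 0 * (starRingEnd ℂ) (L2 t 0)) := cF.mul cconjF
  have c01c : Continuous (fun t : ℝ => L2 t 0 * (starRingEnd ℂ) (L2 t 1)) := cF.mul cconjG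
  have c11c : Continuous (fun t : ℝ => L2 t 1 * (starRingEnd ℂ) (L2 t 1)) := cG.mul cconjG
  have hSapp : ∀ (x : ℝ) (i j : Fin 2),
      S x i j = ∫ t in Set.Ioo (0:ℝ) x, L2 t i * (starRingEnd ℂ) (L2 t j) := by
    intro x i j; rw [hS]; rfl
  -- entry estimates
  have b00 : ∀ x ∈ Set.Ioc (0:ℝ) δ₀, ‖S x 0 0 - (x:ℂ)^5/20‖ ≤ C00 * x^6 := by
    intro x hx
    have h := key_est (fun t => L2 t 0 * (starRingEnd ℂ) (L2 t 0)) c00c 4 (1/4:ℂ) C00 x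
      hx.1.le hC000.le (fun t ht => hP00 t ⟨ht.1, le_trans ht.2 hx.2⟩)
    rw [hSapp x 0 0]
    have e : (∫ t in Set.Ioo (0:ℝ) x, L2 t 0 * (starRingEnd ℂ) (L2 t 0)) - (x:ℂ)^5/20
        = (∫ t in Set.Ioo (0:ℝ) x, L2 t 0 * (starRingEnd ℂ) (L2 t 0))
          - (1/4:ℂ)*(x:ℂ)^(4+1)/(((4:ℕ):ℂ)+1) := by push_cast; ring
    rw [e]
    refine h.trans ?_
    norm_num
    nlinarith [mul_nonneg hC000.le (pow_nonneg hx.1.le 6)]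
  have b01 : ∀ x ∈ Set.Ioc (0:ℝ) δ₀, ‖S x 0 1 + (x:ℂ)^3/6‖ ≤ C01 * x^4 := by
    intro x hx
    have h := key_est (fun t => L2 t 0 * (starRingEnd ℂ) (L2 t 1)) c01c 2 (-(1/2):ℂ) C01 x
      hx.1.le hC010.le (fun t ht => hP01 t ⟨ht.1, le_trans ht.2 hx.2⟩)
    rw [hSapp x 0 1]
    have e : (∫ t in Set.Ioo (0:ℝ) x, L2 t 0 * (starRingEnd ℂ) (L2 t 1)) + (x:ℂ)^3/6
        = (∫ t in Set.Ioo (0:ℝ) x, L2 t 0 * (starRingEnd ℂ) (L2 t 1))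
          - (-(1/2):ℂ)*(x:ℂ)^(2+1)/(((2:ℕ):ℂ)+1) := by push_cast; ring
    rw [e]
    refine h.trans ?_
    norm_num
    nlinarith [mul_nonneg hC010.le (pow_nonneg hx.1.le 4)]
  have b11 : ∀ x ∈ Set.Ioc (0:ℝ) δ₀, ‖S x 1 1 - (x:ℂ)‖ ≤ C11 * x^2 := by
    intro x hx
    have h := key_est (fun t => L2 t 1 * (starRingEnd ℂ) (L2 t 1)) c11c 0 (1:ℂ) C11 x
      hx.1.le hC110.le (fun t ht => hP11 t ⟨ht.1, le_trans ht.2 hx.2⟩)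
    rw [hSapp x 1 1]
    have e : (∫ t in Set.Ioo (0:ℝ) x, L2 t 1 * (starRingEnd ℂ) (L2 t 1)) - (x:ℂ)
        = (∫ t in Set.Ioo (0:ℝ) x, L2 t 1 * (starRingEnd ℂ) (L2 t 1))
          - (1:ℂ)*(x:ℂ)^(0+1)/(((0:ℕ):ℂ)+1) := by push_cast; ring
    rw [e]
    refine h.trans ?_
    norm_num
    nlinarith [mul_nonneg hC110.le (sq_nonneg x)]
  have b10 : ∀ x : ℝ, S x 1 0 = (starRingEnd ℂ) (S x 0 1) := by
    intro x
    rw [hSapp x 1 0, hSapp x 0 1, ← integral_conj]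
    refine integral_congr_ae (ae_of_all _ fun t => ?_)
    simp only [_root_.map_mul, Complex.conj_conj]
    ring
  -- Hermitian
  have hherm : ∀ x : ℝ, (S x).IsHermitian := by
    intro x
    show (S x)ᴴ = S x
    refine Matrix.ext fun i j => ?_
    rw [Matrix.conjTranspose_apply, hSapp x j i, hSapp x i j, RCLike.star_def, ← integral_conj]
    refine integral_congr_ae (ae_of_all _ fun t => ?_)
    simp only [_root_.map_mul, Complex.conj_conj]
    ring
  -- determinant bound
  obtain ⟨M, hM⟩ : ∃ M : ℝ, M = C00*C11 + C00 + C11/20 + C01*C01 + C01/3 := ⟨_, rfl⟩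
  have hM0 : 0 < M := by rw [hM]; positivity
  have bdet : ∀ x ∈ Set.Ioc (0:ℝ) δ₀, ‖(S x).det - (x:ℂ)^6/45‖ ≤ M * x^7 := by
    intro x hx
    obtain ⟨hx0, hx1⟩ := hx
    have hx0' : (0:ℝ) ≤ x := hx0.le
    have hxle1 : x ≤ 1 := le_trans hx1 hδ₀1
    have hdet2 : (S x).det = S x 0 0 * S x 1 1 - S x 0 1 * (starRingEnd ℂ) (S x 0 1) := by
      rw [Matrix.det_fin_two, b10 x]
    have key_det : (S x).det - (x:ℂ)^6/45
        = (S x 0 0 - (x:ℂ)^5/20) * S x 1 1 + ((x:ℂ)^5/20) * (S x 1 1 - (x:ℂ))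
          - ((S x 0 1 + (x:ℂ)^3/6) * (starRingEnd ℂ) (S x 0 1)
            - ((x:ℂ)^3/6) * ((starRingEnd ℂ) (S x 0 1) + (x:ℂ)^3/6)) := by
      rw [hdet2]; push_cast; ring
    have hq : ‖(starRingEnd ℂ) (S x 0 1) + (x:ℂ)^3/6‖ = ‖S x 0 1 + (x:ℂ)^3/6‖ := by
      rw [show (starRingEnd ℂ) (S x 0 1) + (x:ℂ)^3/6 = (starRingEnd ℂ) (S x 0 1 + (x:ℂ)^3/6) by
        simp only [map_add, map_div₀, map_pow, Complex.conj_ofReal, map_ofNat]]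
      exact RCLike.norm_conj _
    have hp5 : ‖((x:ℂ)^5/20)‖ = x^5/20 := by
      rw [norm_div, norm_pow, Complex.norm_real, Real.norm_eq_abs, abs_of_nonneg hx0']; norm_num
    have hq3 : ‖((x:ℂ)^3/6)‖ = x^3/6 := by
      rw [norm_div, norm_pow, Complex.norm_real, Real.norm_eq_abs, abs_of_nonneg hx0']; norm_num
    have hn11 : ‖S x 1 1‖ ≤ C11 * x^2 + x := by
      calc ‖S x 1 1‖ = ‖(S x 1 1 - (x:ℂ)) + (x:ℂ)‖ := by ring_nf
        _ ≤ ‖S x 1 1 - (x:ℂ)‖ + ‖((x:ℂ))‖ := norm_add_le _ _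
        _ ≤ C11 * x^2 + x := by
            rw [Complex.norm_real, Real.norm_eq_abs, abs_of_nonneg hx0']
            exact add_le_add (b11 x ⟨hx0, hx1⟩) le_rfl
    have hn01 : ‖S x 0 1‖ ≤ C01 * x^4 + x^3/6 := by
      calc ‖S x 0 1‖ = ‖(S x 0 1 + (x:ℂ)^3/6) - (x:ℂ)^3/6‖ := by ring_nf
        _ ≤ ‖S x 0 1 + (x:ℂ)^3/6‖ + ‖((x:ℂ)^3/6)‖ := norm_sub_le _ _
        _ ≤ C01 * x^4 + x^3/6 := by rw [hq3]; exact add_le_add (b01 x ⟨hx0, hx1⟩) le_rfl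
    rw [key_det]
    refine (norm_sub_le _ _).trans ?_
    have tA : ‖(S x 0 0 - (x:ℂ)^5/20) * S x 1 1 + ((x:ℂ)^5/20) * (S x 1 1 - (x:ℂ))‖
        ≤ (C00*x^6)*(C11*x^2 + x) + (x^5/20)*(C11*x^2) := by
      refine (norm_add_le _ _).trans ?_
      rw [norm_mul, norm_mul, hp5]
      exact add_le_add (mul_le_mul (b00 x ⟨hx0,hx1⟩) hn11 (norm_nonneg _) (by positivity))
        (mul_le_mul_of_nonneg_left (b11 x ⟨hx0,hx1⟩) (by positivity))
    have tB : ‖(S x 0 1 + (x:ℂ)^3/6) * (starRingEnd ℂ) (S x 0 1)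
        - ((x:ℂ)^3/6) * ((starRingEnd ℂ) (S x 0 1) + (x:ℂ)^3/6)‖
        ≤ (C01*x^4)*(C01*x^4 + x^3/6) + (x^3/6)*(C01*x^4) := by
      refine (norm_sub_le _ _).trans ?_
      rw [norm_mul, norm_mul, hq3, RCLike.norm_conj, hq]
      exact add_le_add (mul_le_mul (b01 x ⟨hx0,hx1⟩) hn01 (norm_nonneg _) (by positivity))
        (mul_le_mul_of_nonneg_left (b01 x ⟨hx0,hx1⟩) (by positivity))
    refine (add_le_add tA tB).trans ?_
    have h87 : x^8 ≤ x^7 := pow_le_pow_of_le_one hx0' hxle1 (by norm_num)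
    rw [hM]
    nlinarith [mul_nonneg (mul_nonneg hC000.le hC110.le) (sub_nonneg.mpr h87),
      mul_nonneg (mul_nonneg hC010.le hC010.le) (sub_nonneg.mpr h87)]
  constructor
  · rw [Asymptotics.isBigO_iff]
    refine ⟨M, ?_⟩
    filter_upwards [Ioc_mem_nhdsGT_of_mem (Set.left_mem_Ico.mpr hδ₀0)] with x hx
    calc ‖(S x).det - (x:ℂ)^6/45‖ ≤ M * x^7 := bdet x hx
      _ = M * ‖x^7‖ := by
          rw [Real.norm_eq_abs, abs_of_nonneg (pow_nonneg hx.1.le 7)]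
  · obtain ⟨δ, hδ⟩ : ∃ δ : ℝ, δ = min δ₀ (min (1/(20*C00+1)) (1/(45*M+1))) := ⟨_, rfl⟩
    have hδ0 : 0 < δ := by
      rw [hδ]
      exact lt_min hδ₀0 (lt_min (by positivity) (by positivity))
    refine ⟨δ, hδ0, fun x hx => ?_⟩
    obtain ⟨hx0, hxδ⟩ := hx
    have hxδ₀ : x ≤ δ₀ := le_trans hxδ.le (by rw [hδ]; exact min_le_left _ _)
    have hxmem : x ∈ Set.Ioc (0:ℝ) δ₀ := ⟨hx0, hxδ₀⟩
    refine posDef_fin_two _ (hherm x) ?_ ?_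
    · have h1 := b00 x hxmem
      have hre : |(S x 0 0).re - x^5/20| ≤ C00 * x^6 := by
        have e : ((x:ℂ)^5/20) = ((x^5/20 : ℝ) : ℂ) := by push_cast; ring
        calc |(S x 0 0).re - x^5/20|
            = |(S x 0 0 - (x:ℂ)^5/20).re| := by rw [e, Complex.sub_re, Complex.ofReal_re]
          _ ≤ ‖S x 0 0 - (x:ℂ)^5/20‖ := Complex.abs_re_le_norm _
          _ ≤ C00 * x^6 := by exact h1
      have hx20 : 20*C00*x < 1 := by
        have hlt : x < 1/(20*C00+1) := lt_of_lt_of_le hxδ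
          (by rw [hδ]; exact le_trans (min_le_right _ _) (min_le_left _ _))
        rw [lt_div_iff₀ (by positivity)] at hlt
        nlinarith [hx0]
      have habs := (abs_le.mp hre).1
      have hpos : (0:ℝ) < x^5 * (1 - 20*C00*x) :=
        mul_pos (pow_pos hx0 5) (by linarith)
      nlinarith [hpos, habs]
    · have h1 := bdet x hxmem
      have hre : |(S x).det.re - x^6/45| ≤ M * x^7 := by
        have e : ((x:ℂ)^6/45) = ((x^6/45 : ℝ) : ℂ) := by push_cast; ring
        calc |(S x).det.re - x^6/45|
            = |((S x).det - (x:ℂ)^6/45).re| := by rw [e, Complex.sub_re, Complex.ofReal_re]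
          _ ≤ ‖(S x).det - (x:ℂ)^6/45‖ := Complex.abs_re_le_norm _
          _ ≤ M * x^7 := by exact h1
      have hx45 : 45*M*x < 1 := by
        have hlt : x < 1/(45*M+1) := lt_of_lt_of_le hxδ
          (by rw [hδ]; exact le_trans (min_le_right _ _) (min_le_right _ _))
        rw [lt_div_iff₀ (by positivity)] at hlt
        nlinarith [hx0]
      have habs := (abs_le.mp hre).1
      have hpos : (0:ℝ) < x^6 * (1 - 45*M*x) :=
        mul_pos (pow_pos hx0 6) (by linarith)
      nlinarith [hpos, habs]
end

section
/- Let $\mu\in\mathbb{C}\setminus\mathbb{R}$, $d\in\mathbb{R}$, $\omega=\mathrm{i}\sqrt{\mu}$ (principal branch), $c_1=1+\tfrac{d}{\omega}$, $c_2=1-\tfrac{d}{\omega}$, $c_3=\tfrac{c_1}{2\omega}$, $c_4=\tfrac{d}{2\omega^3}$, $c_5=-\tfrac{c_2}{2\omega}$, $\mathcal{A}=-\mathrm{i}\omega I_2+\tfrac{\mathrm{i}}{2\omega}\begin{pmatrix}0&1\\0&0\end{pmatrix}$, $A=\begin{pmatrix}\mu&1\\0&\mu\end{pmatrix}$, $J=\begin{pmatrix}0&1\\-1&0\end{pmatrix}$.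 Define $\Lambda_2(x)=\tfrac12\big(\mathrm{e}^{-\omega x}\begin{pmatrix}c_3x+c_4\\ c_1\end{pmatrix}+\mathrm{e}^{\omega x}\begin{pmatrix}c_5x-c_4\\ c_2\end{pmatrix}\big)$, $\Lambda_1(x)=\tfrac{\mathrm{i}}{2}\mathcal{A}\big(\mathrm{e}^{-\omega x}\begin{pmatrix}c_3x+c_4\\ c_1\end{pmatrix}-\mathrm{e}^{\omega x}\begin{pmatrix}c_5x-c_4\\ c_2\end{pmatrix}\big)$, $\Lambda(x)=[\Lambda_1(x)\ \Lambda_2(x)]\in\mathbb{C}^{2\times2}$, and $S(x)=\int_0^x\Lambda_2(t)\Lambda_2(t)^*dt$. Then for every $x>0$ the matrix $S(x)$ is positive definite, and for every $z\in\mathbb{C}\setminus\{\mu\}$ the transfer matrix $w_A(z,x)=I_2+J\Lambda(x)^*S(x)^{-1}(zI_2-A)^{-1}\Lambda(x)$ satisfies $\det w_A(z,x) = \dfrac{(z-\bar\mu)^2}{(z-\mu)^2}$; in particular $\det w_A(z,x)$ is independent of $x$. -/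
open Set MeasureTheory Matrix Asymptotics Topology ComplexOrder

private lemma aux_deriv18 (a b c : ℂ) (z : ℂ) :
    HasDerivAt (fun w : ℂ => Complex.exp (a*w) * (b*w + c))
      (Complex.exp (a*z) * (a*(b*z+c) + b)) z := by
  have h1 : HasDerivAt (fun w:ℂ => Complex.exp (a*w)) (Complex.exp (a*z)*a) z := by
    simpa using ((hasDerivAt_id z).const_mul a).cexp
  have h2 : HasDerivAt (fun w:ℂ => b*w + c) b z := by
    simpa using ((hasDerivAt_id z).const_mul b).add_const c
  have := h1.mul h2
  refine HasDerivAt.congr_deriv this ?_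
  ring

set_option maxHeartbeats 1600000 in
/-- for the explicit GBDT data `Λ = [Λ₁ Λ₂]`,
`S(x) = ∫_0^x Λ₂ Λ₂*` generated by the Jordan block `A = [[μ,1],[0,μ]]`
(`μ ∉ ℝ`, `ω = i√μ`, `Im √μ > 0`, square root `𝒜` of `A`), the matrix `S(x)`
is positive definite for every `x > 0` and the transfer matrix
`w_A(z,x) = I₂ + J Λ(x)* S(x)⁻¹ (zI₂ - A)⁻¹ Λ(x)` satisfies
`det w_A(z,x) = (z - μ̄)²/(z - μ)²` for every `z ≠ μ`; in particular the
determinant is independent of `x`. -/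
theorem stmt_18 (μ : ℂ) (hμ : μ.im ≠ 0) (d : ℝ)
    (sq : ℂ) (hsq : sq ^ 2 = μ) (hsq_im : 0 < sq.im)
    (ω c1 c2 c3 c4 c5 : ℂ)
    (hω : ω = Complex.I * sq)
    (hc1 : c1 = 1 + (d : ℂ) / ω) (hc2 : c2 = 1 - (d : ℂ) / ω)
    (hc3 : c3 = c1 / (2 * ω)) (hc4 : c4 = (d : ℂ) / (2 * ω ^ 3))
    (hc5 : c5 = -(c2 / (2 * ω)))
    (𝒜 A J : Matrix (Fin 2) (Fin 2) ℂ)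
    (h𝒜 : 𝒜 = (-(Complex.I * ω)) • (1 : Matrix (Fin 2) (Fin 2) ℂ)
      + (Complex.I / (2 * ω)) • !![0, 1; 0, 0])
    (hA : A = !![μ, 1; 0, μ])
    (hJ : J = !![0, 1; -1, 0])
    (L2 : ℝ → Fin 2 → ℂ)
    (hL2 : L2 = fun (x : ℝ) (i : Fin 2) =>
      (1 / 2 : ℂ) * (Complex.exp (-ω * (x : ℂ)) * ![c3 * (x : ℂ) + c4, c1] i
        + Complex.exp (ω * (x : ℂ)) * ![c5 * (x : ℂ) - c4, c2] i))
    (L1 : ℝ → Fin 2 → ℂ)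
    (hL1 : L1 = fun (x : ℝ) =>
      (Complex.I / 2) • 𝒜.mulVec (fun i : Fin 2 =>
        Complex.exp (-ω * (x : ℂ)) * ![c3 * (x : ℂ) + c4, c1] i
          - Complex.exp (ω * (x : ℂ)) * ![c5 * (x : ℂ) - c4, c2] i))
    (L : ℝ → Matrix (Fin 2) (Fin 2) ℂ)
    (hL : L = fun x => Matrix.of fun i => ![L1 x i, L2 x i])
    (S : ℝ → Matrix (Fin 2) (Fin 2) ℂ)
    (hS : S = fun x => Matrix.of fun i j =>
      ∫ t in Set.Ioo 0 x, L2 t i * (starRingEnd ℂ) (L2 t j))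
    (w : ℂ → ℝ → Matrix (Fin 2) (Fin 2) ℂ)
    (hw : w = fun z x =>
      1 + J * (L x)ᴴ * (S x)⁻¹ *
        (z • (1 : Matrix (Fin 2) (Fin 2) ℂ) - A)⁻¹ * L x) :
    (∀ x : ℝ, 0 < x → (S x).PosDef) ∧
    ∀ x : ℝ, 0 < x → ∀ z : ℂ, z ≠ μ →
      (w z x).det = (z - (starRingEnd ℂ) μ) ^ 2 / (z - μ) ^ 2 := by
  have hsq0 : sq ≠ 0 := by
    intro h; rw [h] at hsq_im; simp at hsq_im
  have hω0 : ω ≠ 0 := by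
    rw [hω]; exact mul_ne_zero Complex.I_ne_zero hsq0
  have hω2 : ω ^ 2 = -μ := by
    rw [hω, mul_pow, Complex.I_sq, hsq]; ring
  have hμω : μ = -ω ^ 2 := by rw [hω2]; ring
  -- explicit formulas for the components
  have e20 : ∀ t : ℝ, L2 t 0 =
      (1/2 : ℂ) * (Complex.exp (-ω*t) * (c3*t + c4) + Complex.exp (ω*t) * (c5*t - c4)) := by
    intro t; rw [hL2]; simp
  have e21 : ∀ t : ℝ, L2 t 1 =
      (1/2 : ℂ) * (Complex.exp (-ω*t) * c1 + Complex.exp (ω*t) * c2) := by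
    intro t; rw [hL2]; simp
  have e10 : ∀ t : ℝ, L1 t 0 =
      (ω/2) * (Complex.exp (-ω*t) * (c3*t + c4) - Complex.exp (ω*t) * (c5*t - c4))
        - (1/(4*ω)) * (Complex.exp (-ω*t) * c1 - Complex.exp (ω*t) * c2) := by
    intro t; rw [hL1]
    simp [Matrix.mulVec, dotProduct, Fin.sum_univ_two, h𝒜, Matrix.one_apply]
    field_simp
    ring_nf
    simp [Complex.I_sq]
    ring
  have e11 : ∀ t : ℝ, L1 t 1 =
      (ω/2) * (Complex.exp (-ω*t) * c1 - Complex.exp (ω*t) * c2) := by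
    intro t; rw [hL1]
    simp [Matrix.mulVec, dotProduct, Fin.sum_univ_two, h𝒜, Matrix.one_apply]
    field_simp
    ring_nf
    simp [Complex.I_sq]
    ring
  -- derivatives
  have key20 : ∀ t : ℝ, HasDerivAt (fun u : ℝ => L2 u 0) (-(L1 t 0)) t := by
    intro t
    have h : HasDerivAt (fun z : ℂ =>
        (1/2 : ℂ) * (Complex.exp (-ω*z) * (c3*z + c4) + Complex.exp (ω*z) * (c5*z + -c4)))
        ((1/2 : ℂ) * (Complex.exp (-ω*t) * (-ω*(c3*t + c4) + c3)
          + Complex.exp (ω*t) * (ω*(c5*t + -c4) + c5))) (t : ℂ) :=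
      ((aux_deriv18 (-ω) c3 c4 _).add (aux_deriv18 ω c5 (-c4) _)).const_mul _
    have h2 := h.comp_ofReal
    have he : (fun u : ℝ => L2 u 0) = fun u : ℝ =>
        (1/2 : ℂ) * (Complex.exp (-ω*u) * (c3*u + c4) + Complex.exp (ω*u) * (c5*u + -c4)) := by
      funext u; rw [e20]; ring_nf
    rw [he]
    convert h2 using 1
    rw [e10, hc3, hc5]
    field_simp
    ring
  have key21 : ∀ t : ℝ, HasDerivAt (fun u : ℝ => L2 u 1) (-(L1 t 1)) t := by
    intro t
    have h : HasDerivAt (fun z : ℂ =>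
        (1/2 : ℂ) * (Complex.exp (-ω*z) * (0*z + c1) + Complex.exp (ω*z) * (0*z + c2)))
        ((1/2 : ℂ) * (Complex.exp (-ω*t) * (-ω*(0*t + c1) + 0)
          + Complex.exp (ω*t) * (ω*(0*t + c2) + 0))) (t : ℂ) :=
      ((aux_deriv18 (-ω) 0 c1 _).add (aux_deriv18 ω 0 c2 _)).const_mul _
    have h2 := h.comp_ofReal
    have he : (fun u : ℝ => L2 u 1) = fun u : ℝ =>
        (1/2 : ℂ) * (Complex.exp (-ω*u) * (0*u + c1) + Complex.exp (ω*u) * (0*u + c2)) := by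
      funext u; rw [e21]; ring_nf
    rw [he]
    convert h2 using 1
    rw [e11]
    ring
  have eA0 : ∀ v : Fin 2 → ℂ, A.mulVec v 0 = μ * v 0 + v 1 := by
    intro v; simp [hA, Matrix.mulVec, dotProduct, Fin.sum_univ_two]
  have eA1 : ∀ v : Fin 2 → ℂ, A.mulVec v 1 = μ * v 1 := by
    intro v; simp [hA, Matrix.mulVec, dotProduct, Fin.sum_univ_two]
  have key10 : ∀ t : ℝ, HasDerivAt (fun u : ℝ => L1 u 0) (A.mulVec (L2 t) 0) t := by
    intro t
    have h : HasDerivAt (fun z : ℂ =>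
        (ω/2) * (Complex.exp (-ω*z) * (c3*z + c4) - Complex.exp (ω*z) * (c5*z + -c4))
          - (1/(4*ω)) * (Complex.exp (-ω*z) * (0*z + c1) - Complex.exp (ω*z) * (0*z + c2)))
        ((ω/2) * (Complex.exp (-ω*t) * (-ω*(c3*t + c4) + c3)
            - Complex.exp (ω*t) * (ω*(c5*t + -c4) + c5))
          - (1/(4*ω)) * (Complex.exp (-ω*t) * (-ω*(0*t + c1) + 0)
            - Complex.exp (ω*t) * (ω*(0*t + c2) + 0))) (t : ℂ) :=
      (((aux_deriv18 (-ω) c3 c4 _).sub (aux_deriv18 ω c5 (-c4) _)).const_mul _).sub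
        (((aux_deriv18 (-ω) 0 c1 _).sub (aux_deriv18 ω 0 c2 _)).const_mul _)
    have h2 := h.comp_ofReal
    have he : (fun u : ℝ => L1 u 0) = fun u : ℝ =>
        (ω/2) * (Complex.exp (-ω*u) * (c3*u + c4) - Complex.exp (ω*u) * (c5*u + -c4))
          - (1/(4*ω)) * (Complex.exp (-ω*u) * (0*u + c1) - Complex.exp (ω*u) * (0*u + c2)) := by
      funext u; rw [e10]; ring_nf
    rw [he]
    convert h2 using 1
    rw [eA0, e20, e21, hc3, hc5, hμω]
    field_simp
    ring
  have key11 : ∀ t : ℝ, HasDerivAt (fun u : ℝ => L1 u 1) (A.mulVec (L2 t) 1) t := by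
    intro t
    have h : HasDerivAt (fun z : ℂ =>
        (ω/2) * (Complex.exp (-ω*z) * (0*z + c1) - Complex.exp (ω*z) * (0*z + c2)))
        ((ω/2) * (Complex.exp (-ω*t) * (-ω*(0*t + c1) + 0)
          - Complex.exp (ω*t) * (ω*(0*t + c2) + 0))) (t : ℂ) :=
      ((aux_deriv18 (-ω) 0 c1 _).sub (aux_deriv18 ω 0 c2 _)).const_mul _
    have h2 := h.comp_ofReal
    have he : (fun u : ℝ => L1 u 1) = fun u : ℝ =>
        (ω/2) * (Complex.exp (-ω*u) * (0*u + c1) - Complex.exp (ω*u) * (0*u + c2)) := by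
      funext u; rw [e11]; ring_nf
    rw [he]
    convert h2 using 1
    rw [eA1, e21, hμω]
    field_simp
    ring
  -- values at zero
  have v200 : L2 0 0 = 0 := by rw [e20]; push_cast; simp
  have v201 : L2 0 1 = 1 := by
    rw [e21, hc1, hc2]; push_cast; simp; field_simp; norm_num
  have v100 : L1 0 0 = 0 := by
    rw [e10, hc3, hc4, hc5, hc1, hc2]; push_cast; simp; field_simp; ring
  have v101 : L1 0 1 = d := by
    rw [e11, hc1, hc2]; push_cast; simp; field_simp; ring
  -- continuity
  have cont2 : ∀ i : Fin 2, Continuous fun t : ℝ => L2 t i := by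
    intro i; fin_cases i
    · exact continuous_iff_continuousAt.2 fun t => (key20 t).continuousAt
    · exact continuous_iff_continuousAt.2 fun t => (key21 t).continuousAt
  have cont1 : ∀ i : Fin 2, Continuous fun t : ℝ => L1 t i := by
    intro i; fin_cases i
    · exact continuous_iff_continuousAt.2 fun t => (key10 t).continuousAt
    · exact continuous_iff_continuousAt.2 fun t => (key11 t).continuousAt
  have contC : ∀ i : Fin 2, Continuous fun t : ℝ => (starRingEnd ℂ) (L2 t i) := by
    intro i; exact (cont2 i).star
  have contA : ∀ i : Fin 2, Continuous fun t : ℝ => A.mulVec (L2 t) i := by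
    intro i; fin_cases i
    · show Continuous fun t : ℝ => A.mulVec (L2 t) 0
      simp only [eA0]; exact (continuous_const.mul (cont2 0)).add (cont2 1)
    · show Continuous fun t : ℝ => A.mulVec (L2 t) 1
      simp only [eA1]; exact continuous_const.mul (cont2 1)
  have key2 : ∀ (t : ℝ) (i : Fin 2), HasDerivAt (fun u : ℝ => L2 u i) (-(L1 t i)) t := by
    intro t i; fin_cases i
    · exact key20 t
    · exact key21 t
  have key1 : ∀ (t : ℝ) (i : Fin 2), HasDerivAt (fun u : ℝ => L1 u i) (A.mulVec (L2 t) i) t := by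
    intro t i
    fin_cases i
    · exact key10 t
    · exact key11 t
  -- integrability helper
  have intg : ∀ (x : ℝ) (f : ℝ → ℂ), Continuous f → IntegrableOn f (Set.Ioo 0 x) := by
    intro x f hf
    exact (hf.integrableOn_Icc (a := 0) (b := x)).mono_set Set.Ioo_subset_Icc_self
  have intgR : ∀ (x : ℝ) (f : ℝ → ℝ), Continuous f → IntegrableOn f (Set.Ioo 0 x) := by
    intro x f hf
    exact (hf.integrableOn_Icc (a := 0) (b := x)).mono_set Set.Ioo_subset_Icc_self
  -- a continuous function vanishing on (0,x) vanishes at 0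
  have bd : ∀ (x : ℝ), 0 < x → ∀ (f : ℝ → ℂ), Continuous f →
      (∀ t ∈ Set.Ioo (0:ℝ) x, f t = 0) → f 0 = 0 := by
    intro x hx f hf h0
    have hne : (𝓝[Set.Ioo (0:ℝ) x] 0).NeBot := by
      rw [← mem_closure_iff_nhdsWithin_neBot, closure_Ioo hx.ne]
      exact ⟨le_rfl, hx.le⟩
    have h1 : Filter.Tendsto f (𝓝[Set.Ioo (0:ℝ) x] 0) (𝓝 (f 0)) :=
      (hf.continuousAt).continuousWithinAt
    have h2 : Filter.Tendsto f (𝓝[Set.Ioo (0:ℝ) x] 0) (𝓝 0) := by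
      refine Filter.Tendsto.congr' ?_ tendsto_const_nhds
      exact Filter.eventually_of_mem self_mem_nhdsWithin fun t ht => (h0 t ht).symm
    exact tendsto_nhds_unique h1 h2
  -- vanishing of the combination forces v = 0
  have vanish : ∀ (x : ℝ), 0 < x → ∀ v : Fin 2 → ℂ,
      (∀ t ∈ Set.Ioo (0:ℝ) x,
        (starRingEnd ℂ) (v 0) * L2 t 0 + (starRingEnd ℂ) (v 1) * L2 t 1 = 0) → v = 0 := by
    intro x hx v hvan
    have hdg : ∀ t : ℝ, HasDerivAt
        (fun u : ℝ => (starRingEnd ℂ) (v 0) * L2 u 0 + (starRingEnd ℂ) (v 1) * L2 u 1)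
        (-((starRingEnd ℂ) (v 0) * L1 t 0 + (starRingEnd ℂ) (v 1) * L1 t 1)) t := by
      intro t
      have := ((key20 t).const_mul ((starRingEnd ℂ) (v 0))).add
        ((key21 t).const_mul ((starRingEnd ℂ) (v 1)))
      refine HasDerivAt.congr_deriv this ?_
      ring
    have hdg1 : ∀ t : ℝ, HasDerivAt
        (fun u : ℝ => -((starRingEnd ℂ) (v 0) * L1 u 0 + (starRingEnd ℂ) (v 1) * L1 u 1))
        (-((starRingEnd ℂ) (v 0) * A.mulVec (L2 t) 0
          + (starRingEnd ℂ) (v 1) * A.mulVec (L2 t) 1)) t := by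
      intro t
      exact (((key10 t).const_mul ((starRingEnd ℂ) (v 0))).add
        ((key11 t).const_mul ((starRingEnd ℂ) (v 1)))).neg
    have z1 : ∀ t ∈ Set.Ioo (0:ℝ) x,
        -((starRingEnd ℂ) (v 0) * L1 t 0 + (starRingEnd ℂ) (v 1) * L1 t 1) = 0 := by
      intro t ht
      have h0 : (fun u : ℝ => (starRingEnd ℂ) (v 0) * L2 u 0 + (starRingEnd ℂ) (v 1) * L2 u 1)
          =ᶠ[𝓝 t] fun _ => 0 :=
        Filter.eventually_of_mem (isOpen_Ioo.mem_nhds ht) hvan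
      exact ((hdg t).congr_of_eventuallyEq h0.symm).unique (hasDerivAt_const t 0)
    have z2 : ∀ t ∈ Set.Ioo (0:ℝ) x,
        -((starRingEnd ℂ) (v 0) * A.mulVec (L2 t) 0
          + (starRingEnd ℂ) (v 1) * A.mulVec (L2 t) 1) = 0 := by
      intro t ht
      have h0 : (fun u : ℝ => -((starRingEnd ℂ) (v 0) * L1 u 0 + (starRingEnd ℂ) (v 1) * L1 u 1))
          =ᶠ[𝓝 t] fun _ => 0 :=
        Filter.eventually_of_mem (isOpen_Ioo.mem_nhds ht) z1
      exact ((hdg1 t).congr_of_eventuallyEq h0.symm).unique (hasDerivAt_const t 0)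
    have hv1 : (starRingEnd ℂ) (v 1) = 0 := by
      have := bd x hx _ ((continuous_const.mul (cont2 0)).add (continuous_const.mul (cont2 1))) hvan
      simpa [v200, v201] using this
    have hv0 : (starRingEnd ℂ) (v 0) = 0 := by
      have := bd x hx _
        (((continuous_const.mul (contA 0)).add (continuous_const.mul (contA 1))).neg) z2
      simp only [eA0, eA1, v200, v201, hv1] at this
      simpa [v200, v201] using this
    funext i
    fin_cases i
    · simpa using congrArg (starRingEnd ℂ) hv0
    · simpa using congrArg (starRingEnd ℂ) hv1
  have intp : ∀ (x : ℝ) (c : ℂ) (i j : Fin 2), IntegrableOn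
      (fun t : ℝ => c * (L2 t i * (starRingEnd ℂ) (L2 t j))) (Set.Ioo 0 x) :=
    fun x c i j => intg x _ (continuous_const.mul ((cont2 i).mul (contC j)))
  -- Hermitian
  have herm : ∀ x : ℝ, (S x).IsHermitian := by
    intro x
    ext i j
    simp only [hS, Matrix.conjTranspose_apply, Matrix.of_apply, Complex.star_def]
    rw [← integral_conj]
    refine integral_congr_ae (Filter.Eventually.of_forall fun t => ?_)
    simp only [_root_.map_mul, Complex.conj_conj]
    ring
  -- positive definiteness
  have posdef : ∀ x : ℝ, 0 < x → (S x).PosDef := by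
    intro x hx
    refine Matrix.PosDef.of_dotProduct_mulVec_pos (herm x) fun v hv => ?_
    have key : (∫ t in Set.Ioo (0:ℝ) x,
          ((starRingEnd ℂ) (v 0) * L2 t 0 + (starRingEnd ℂ) (v 1) * L2 t 1) *
            (starRingEnd ℂ) ((starRingEnd ℂ) (v 0) * L2 t 0 + (starRingEnd ℂ) (v 1) * L2 t 1))
        = ((starRingEnd ℂ) (v 0) * v 0) * (∫ t in Set.Ioo (0:ℝ) x, L2 t 0 * (starRingEnd ℂ) (L2 t 0))
          + (((starRingEnd ℂ) (v 0) * v 1) * (∫ t in Set.Ioo (0:ℝ) x, L2 t 0 * (starRingEnd ℂ) (L2 t 1))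
          + (((starRingEnd ℂ) (v 1) * v 0) * (∫ t in Set.Ioo (0:ℝ) x, L2 t 1 * (starRingEnd ℂ) (L2 t 0))
          + ((starRingEnd ℂ) (v 1) * v 1) * (∫ t in Set.Ioo (0:ℝ) x, L2 t 1 * (starRingEnd ℂ) (L2 t 1)))) := by
      have hfun : (fun t : ℝ =>
          ((starRingEnd ℂ) (v 0) * L2 t 0 + (starRingEnd ℂ) (v 1) * L2 t 1) *
            (starRingEnd ℂ) ((starRingEnd ℂ) (v 0) * L2 t 0 + (starRingEnd ℂ) (v 1) * L2 t 1))
          = fun t : ℝ =>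
            ((starRingEnd ℂ) (v 0) * v 0) * (L2 t 0 * (starRingEnd ℂ) (L2 t 0))
            + (((starRingEnd ℂ) (v 0) * v 1) * (L2 t 0 * (starRingEnd ℂ) (L2 t 1))
            + (((starRingEnd ℂ) (v 1) * v 0) * (L2 t 1 * (starRingEnd ℂ) (L2 t 0))
            + ((starRingEnd ℂ) (v 1) * v 1) * (L2 t 1 * (starRingEnd ℂ) (L2 t 1)))) := by
        funext t
        simp only [map_add, _root_.map_mul, Complex.conj_conj]
        ring
      have J00 := intp x ((starRingEnd ℂ) (v 0) * v 0) 0 0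
      have J01 := intp x ((starRingEnd ℂ) (v 0) * v 1) 0 1
      have J10 := intp x ((starRingEnd ℂ) (v 1) * v 0) 1 0
      have J11 := intp x ((starRingEnd ℂ) (v 1) * v 1) 1 1
      have J2 : IntegrableOn (fun t : ℝ =>
          ((starRingEnd ℂ) (v 1) * v 0) * (L2 t 1 * (starRingEnd ℂ) (L2 t 0))
          + ((starRingEnd ℂ) (v 1) * v 1) * (L2 t 1 * (starRingEnd ℂ) (L2 t 1)))
          (Set.Ioo 0 x) := J10.add J11
      have J3 : IntegrableOn (fun t : ℝ =>
          ((starRingEnd ℂ) (v 0) * v 1) * (L2 t 0 * (starRingEnd ℂ) (L2 t 1))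
          + (((starRingEnd ℂ) (v 1) * v 0) * (L2 t 1 * (starRingEnd ℂ) (L2 t 0))
          + ((starRingEnd ℂ) (v 1) * v 1) * (L2 t 1 * (starRingEnd ℂ) (L2 t 1))))
          (Set.Ioo 0 x) := J01.add J2
      rw [hfun]
      symm
      rw [← MeasureTheory.integral_const_mul, ← MeasureTheory.integral_const_mul,
        ← MeasureTheory.integral_const_mul, ← MeasureTheory.integral_const_mul,
        ← integral_add J10 J11, ← integral_add J01 J2, ← integral_add J00 J3]
    have lhs_eq : dotProduct (star v) ((S x) *ᵥ v) =
        ∫ t in Set.Ioo (0:ℝ) x,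
          ((starRingEnd ℂ) (v 0) * L2 t 0 + (starRingEnd ℂ) (v 1) * L2 t 1) *
            (starRingEnd ℂ) ((starRingEnd ℂ) (v 0) * L2 t 0 + (starRingEnd ℂ) (v 1) * L2 t 1) := by
      rw [key, hS]
      simp only [dotProduct, Matrix.mulVec, Fin.sum_univ_two, Matrix.of_apply,
        Pi.star_apply, Complex.star_def]
      ring
    rw [lhs_eq]
    have hgc : Continuous fun t : ℝ =>
        (starRingEnd ℂ) (v 0) * L2 t 0 + (starRingEnd ℂ) (v 1) * L2 t 1 :=
      (continuous_const.mul (cont2 0)).add (continuous_const.mul (cont2 1))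
    simp_rw [Complex.mul_conj]
    have intOfReal : ∀ (f : ℝ → ℝ), (∫ t in Set.Ioo (0:ℝ) x, ((f t : ℝ) : ℂ))
        = ((∫ t in Set.Ioo (0:ℝ) x, f t : ℝ) : ℂ) := fun f => integral_ofReal
    rw [intOfReal]
    rw [Complex.zero_lt_real]
    refine (setIntegral_pos_iff_support_of_nonneg_ae
      (Filter.Eventually.of_forall fun t => Complex.normSq_nonneg _)
      (intgR x _ (Complex.continuous_normSq.comp hgc))).2 ?_
    have hex : ∃ t ∈ Set.Ioo (0:ℝ) x,
        (starRingEnd ℂ) (v 0) * L2 t 0 + (starRingEnd ℂ) (v 1) * L2 t 1 ≠ 0 := by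
      by_contra hcon
      push_neg at hcon
      exact hv (vanish x hx v hcon)
    obtain ⟨t₀, ht₀, hne⟩ := hex
    have hUopen : IsOpen (Set.Ioo (0:ℝ) x ∩
        (fun t : ℝ => (starRingEnd ℂ) (v 0) * L2 t 0 + (starRingEnd ℂ) (v 1) * L2 t 1) ⁻¹' {0}ᶜ) :=
      isOpen_Ioo.inter (isOpen_compl_singleton.preimage hgc)
    refine lt_of_lt_of_le (hUopen.measure_pos volume ⟨t₀, ht₀, hne⟩) (measure_mono ?_)
    rintro t ⟨ht, hgt⟩
    refine ⟨?_, ht⟩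
    simp only [Function.mem_support]
    intro h0
    exact hgt (Complex.normSq_eq_zero.1 h0)
  -- the key matrix identity  A S - S Aᴴ = Λ J Λᴴ
  have hkeyAll : ∀ x : ℝ, 0 < x → A * S x - S x * Aᴴ = L x * J * (L x)ᴴ := by
    intro x hx
    have FTC : ∀ i k : Fin 2, (∫ t in Set.Ioo (0:ℝ) x,
        (A.mulVec (L2 t) i * (starRingEnd ℂ) (L2 t k)
          - L2 t i * (starRingEnd ℂ) (A.mulVec (L2 t) k)))
        = L1 x i * (starRingEnd ℂ) (L2 x k) - L2 x i * (starRingEnd ℂ) (L1 x k) := by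
      intro i k
      have hd : ∀ t : ℝ, HasDerivAt
          (fun u : ℝ => L1 u i * (starRingEnd ℂ) (L2 u k) - L2 u i * (starRingEnd ℂ) (L1 u k))
          (A.mulVec (L2 t) i * (starRingEnd ℂ) (L2 t k)
            - L2 t i * (starRingEnd ℂ) (A.mulVec (L2 t) k)) t := by
        intro t
        have d1 := key1 t i
        have d2 : HasDerivAt (fun u : ℝ => (starRingEnd ℂ) (L2 u k))
            ((starRingEnd ℂ) (-(L1 t k))) t := (key2 t k).star
        have d3 := key2 t i
        have d4 : HasDerivAt (fun u : ℝ => (starRingEnd ℂ) (L1 u k))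
            ((starRingEnd ℂ) (A.mulVec (L2 t) k)) t := (key1 t k).star
        have := (d1.mul d2).sub (d3.mul d4)
        refine HasDerivAt.congr_deriv this ?_
        simp only [map_neg]
        ring
      have hcont : Continuous fun t : ℝ =>
          A.mulVec (L2 t) i * (starRingEnd ℂ) (L2 t k)
            - L2 t i * (starRingEnd ℂ) (A.mulVec (L2 t) k) := by
        have c1 : Continuous fun t : ℝ => (starRingEnd ℂ) (L2 t k) := contC k
        have c2 : Continuous fun t : ℝ => (starRingEnd ℂ) (A.mulVec (L2 t) k) := (contA k).star
        exact ((contA i).mul c1).sub ((cont2 i).mul c2)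
      rw [← MeasureTheory.integral_Ioc_eq_integral_Ioo, ← intervalIntegral.integral_of_le hx.le,
        intervalIntegral.integral_eq_sub_of_hasDerivAt (fun t _ => hd t)
          (hcont.intervalIntegrable 0 x)]
      have h0 : L1 0 i * (starRingEnd ℂ) (L2 0 k) - L2 0 i * (starRingEnd ℂ) (L1 0 k) = 0 := by
        fin_cases i <;> fin_cases k <;>
          simp [v100, v101, v200, v201, Complex.conj_ofReal]
      rw [h0, sub_zero]
    have expand : ∀ i k : Fin 2, (A * S x - S x * Aᴴ) i k
        = ∫ t in Set.Ioo (0:ℝ) x,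
          (A.mulVec (L2 t) i * (starRingEnd ℂ) (L2 t k)
            - L2 t i * (starRingEnd ℂ) (A.mulVec (L2 t) k)) := by
      intro i k
      have K1 := intp x (A i 0) 0 k
      have K2 := intp x (A i 1) 1 k
      have K3 := intp x ((starRingEnd ℂ) (A k 0)) i 0
      have K4 := intp x ((starRingEnd ℂ) (A k 1)) i 1
      have K12 : IntegrableOn (fun t : ℝ =>
          A i 0 * (L2 t 0 * (starRingEnd ℂ) (L2 t k))
          + A i 1 * (L2 t 1 * (starRingEnd ℂ) (L2 t k))) (Set.Ioo 0 x) := K1.add K2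
      have K34 : IntegrableOn (fun t : ℝ =>
          (starRingEnd ℂ) (A k 0) * (L2 t i * (starRingEnd ℂ) (L2 t 0))
          + (starRingEnd ℂ) (A k 1) * (L2 t i * (starRingEnd ℂ) (L2 t 1))) (Set.Ioo 0 x) :=
        K3.add K4
      have step : (∫ t in Set.Ioo (0:ℝ) x,
          (A i 0 * (L2 t 0 * (starRingEnd ℂ) (L2 t k))
            + A i 1 * (L2 t 1 * (starRingEnd ℂ) (L2 t k))
            - ((starRingEnd ℂ) (A k 0) * (L2 t i * (starRingEnd ℂ) (L2 t 0))
              + (starRingEnd ℂ) (A k 1) * (L2 t i * (starRingEnd ℂ) (L2 t 1)))))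
          = (A * S x - S x * Aᴴ) i k := by
        rw [integral_sub K12 K34, integral_add K1 K2, integral_add K3 K4,
          MeasureTheory.integral_const_mul, MeasureTheory.integral_const_mul,
          MeasureTheory.integral_const_mul, MeasureTheory.integral_const_mul]
        simp only [Matrix.sub_apply, Matrix.mul_apply, Fin.sum_univ_two,
          Matrix.conjTranspose_apply, Complex.star_def, hS, Matrix.of_apply]
        ring
      rw [← step]
      refine integral_congr_ae (Filter.Eventually.of_forall fun t => ?_)
      simp only [Matrix.mulVec, dotProduct, Fin.sum_univ_two, map_add, _root_.map_mul]
      ring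
    have expand2 : ∀ i k : Fin 2, (L x * J * (L x)ᴴ) i k
        = L1 x i * (starRingEnd ℂ) (L2 x k) - L2 x i * (starRingEnd ℂ) (L1 x k) := by
      intro i k
      fin_cases i <;> fin_cases k <;>
        · simp [hL, hJ, Matrix.mul_apply, Matrix.conjTranspose_apply, Fin.sum_univ_two,
            Complex.star_def]
          ring
    ext i k
    rw [expand i k, FTC i k, ← expand2 i k]
  -- conclusion
  refine ⟨posdef, fun x hx z hz => ?_⟩
  have hdSne : (S x).det ≠ 0 := (posdef x hx).det_pos.ne'
  have hBmat : z • (1 : Matrix (Fin 2) (Fin 2) ℂ) - A = !![z - μ, -1; 0, z - μ] := by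
    ext i k
    fin_cases i <;> fin_cases k <;> simp [hA, Matrix.one_apply]
  have hdetB : (z • (1 : Matrix (Fin 2) (Fin 2) ℂ) - A).det = (z - μ)^2 := by
    rw [hBmat, Matrix.det_fin_two_of]; ring
  have hBne : (z • (1 : Matrix (Fin 2) (Fin 2) ℂ) - A).det ≠ 0 := by
    rw [hdetB]; exact pow_ne_zero 2 (sub_ne_zero.2 hz)
  have hCmat : z • (1 : Matrix (Fin 2) (Fin 2) ℂ) - Aᴴ
      = !![z - (starRingEnd ℂ) μ, 0; -1, z - (starRingEnd ℂ) μ] := by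
    ext i k
    fin_cases i <;> fin_cases k <;>
      simp [hA, Matrix.one_apply, Matrix.conjTranspose_apply, Complex.star_def]
  have hdetC : (z • (1 : Matrix (Fin 2) (Fin 2) ℂ) - Aᴴ).det = (z - (starRingEnd ℂ) μ)^2 := by
    rw [hCmat, Matrix.det_fin_two_of]; ring
  have hSinv : S x * (S x)⁻¹ = 1 := Matrix.mul_nonsing_inv _ hdSne.isUnit
  have hBinv : (z • (1 : Matrix (Fin 2) (Fin 2) ℂ) - A) * (z • (1 : Matrix (Fin 2) (Fin 2) ℂ) - A)⁻¹
      = 1 := Matrix.mul_nonsing_inv _ hBne.isUnit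
  have hq : (1 : Matrix (Fin 2) (Fin 2) ℂ)
      + L x * (J * (L x)ᴴ * (S x)⁻¹ * (z • (1 : Matrix (Fin 2) (Fin 2) ℂ) - A)⁻¹)
      = S x * (z • (1 : Matrix (Fin 2) (Fin 2) ℂ) - Aᴴ)
        * ((S x)⁻¹ * (z • (1 : Matrix (Fin 2) (Fin 2) ℂ) - A)⁻¹) := by
    have h2 : S x * (z • (1 : Matrix (Fin 2) (Fin 2) ℂ) - Aᴴ)
        = (z • (1 : Matrix (Fin 2) (Fin 2) ℂ) - A) * S x + L x * J * (L x)ᴴ := by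
      rw [← hkeyAll x hx]
      simp only [Matrix.mul_sub, Matrix.sub_mul, mul_smul_comm, smul_mul_assoc,
        Matrix.one_mul, Matrix.mul_one]
      abel
    rw [h2, Matrix.add_mul]
    have e1 : (z • (1 : Matrix (Fin 2) (Fin 2) ℂ) - A) * S x
        * ((S x)⁻¹ * (z • (1 : Matrix (Fin 2) (Fin 2) ℂ) - A)⁻¹) = 1 := by
      rw [Matrix.mul_assoc (z • (1 : Matrix (Fin 2) (Fin 2) ℂ) - A),
        ← Matrix.mul_assoc (S x), hSinv, Matrix.one_mul, hBinv]
    rw [e1]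
    simp only [Matrix.mul_assoc]
  simp only [hw]
  rw [Matrix.det_one_add_mul_comm, hq, Matrix.det_mul, Matrix.det_mul, Matrix.det_mul,
    hdetC, Matrix.det_nonsing_inv, Matrix.det_nonsing_inv, hdetB,
    Ring.inverse_eq_inv, Ring.inverse_eq_inv]
  field_simp [hdSne, sub_ne_zero.2 hz]
end
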